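/- arXiv:2303.17327 — 5 statements merged into one kernel-verified Lean document; each statement's English description precedes it below -/
import Mathlib

section
/- Let f_n : 2^ω → {0,1} (n ∈ ω) be a sequence of (s)-measurable functions. Then there exist a perfect tree Q ⊆ 2^{<ω} and a subsequence {f_{n_k}} which converges uniformly on [Q]. -/
open Set

/-- A perfect (Sacks) tree: nonempty, downward closed, and every node has a splitting extension. -/
def IsPerfectTree (T : Set (List Bool)) : Prop :=
  T.Nonempty ∧ (∀ t ∈ T, ∀ n, t.take n ∈ T) ∧
    ∀ t ∈ T, ∃ s ∈ T, t <+: s ∧ s ++ [false] ∈ T ∧ s ++ [true] ∈ T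

/-- The set of infinite branches of a tree. -/
def branches (T : Set (List Bool)) : Set (ℕ → Bool) :=
  {x | ∀ n, (List.ofFn fun i : Fin n => x i) ∈ T}

/-- `A` is an (s)-set. -/
def MarczewskiS (A : Set (ℕ → Bool)) : Prop :=
  ∀ T, IsPerfectTree T → ∃ Q, IsPerfectTree Q ∧ Q ⊆ T ∧
    (branches Q ⊆ A ∨ branches Q ∩ A = ∅)

/-- `A` is an (s⁰)-set. -/
def S0Set (A : Set (ℕ → Bool)) : Prop :=
  ∀ T, IsPerfectTree T → ∃ Q, IsPerfectTree Q ∧ Q ⊆ T ∧ branches Q ∩ A = ∅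

namespace MST

theorem pt_prefix {T : Set (List Bool)} (hT : IsPerfectTree T) {u v : List Bool}
    (huv : u <+: v) (hv : v ∈ T) : u ∈ T := by
  rw [List.prefix_iff_eq_take.mp huv]; exact hT.2.1 v hv _

theorem pt_nil {T : Set (List Bool)} (hT : IsPerfectTree T) : [] ∈ T := by
  obtain ⟨t, ht⟩ := hT.1
  simpa using hT.2.1 t ht 0

theorem concat_decomp (l : List Bool) (h : l ≠ []) : l.dropLast ++ [l.getLastD false] = l := by
  obtain (rfl | ⟨l', a, rfl⟩) := l.eq_nil_or_concat
  · exact absurd rfl h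
  · rw [List.concat_eq_append, List.dropLast_concat, List.getLastD_concat]

def loc (T : Set (List Bool)) (v : List Bool) : Set (List Bool) :=
  {u ∈ T | u <+: v ∨ v <+: u}

theorem loc_subset (T : Set (List Bool)) (v : List Bool) : loc T v ⊆ T :=
  fun _ hu => hu.1

theorem pt_loc {T : Set (List Bool)} (hT : IsPerfectTree T) {v : List Bool} (hv : v ∈ T) :
    IsPerfectTree (loc T v) := by
  refine ⟨⟨v, hv, Or.inl (List.prefix_refl v)⟩, ?_, ?_⟩
  · rintro t ⟨htT, hcomp⟩ n
    refine ⟨hT.2.1 t htT n, ?_⟩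
    rcases hcomp with h | h
    · exact Or.inl ((List.take_prefix n t).trans h)
    · exact List.prefix_or_prefix_of_prefix (List.take_prefix n t) h
  · rintro t ⟨htT, hcomp⟩
    rcases hcomp with h | h
    · obtain ⟨s, hsT, hvs, h0, h1⟩ := hT.2.2 v hv
      exact ⟨s, ⟨hsT, Or.inr hvs⟩, h.trans hvs,
        ⟨h0, Or.inr (hvs.trans (List.prefix_append s [false]))⟩,
        ⟨h1, Or.inr (hvs.trans (List.prefix_append s [true]))⟩⟩
    · obtain ⟨s, hsT, hts, h0, h1⟩ := hT.2.2 t htT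
      exact ⟨s, ⟨hsT, Or.inr (h.trans hts)⟩, hts,
        ⟨h0, Or.inr ((h.trans hts).trans (List.prefix_append s [false]))⟩,
        ⟨h1, Or.inr ((h.trans hts).trans (List.prefix_append s [true]))⟩⟩

theorem exists_long {T : Set (List Bool)} (hT : IsPerfectTree T) {u : List Bool} (hu : u ∈ T)
    (n : ℕ) : ∃ v ∈ T, u <+: v ∧ n ≤ v.length := by
  induction n with
  | zero => exact ⟨u, hu, List.prefix_refl u, Nat.zero_le _⟩
  | succ n ih =>
    obtain ⟨v, hvT, huv, hn⟩ := ih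
    obtain ⟨s, hsT, hvs, h0, _⟩ := hT.2.2 v hvT
    refine ⟨s ++ [false], h0, (huv.trans hvs).trans (List.prefix_append s [false]), ?_⟩
    have := hvs.length_le
    simp; omega

theorem branches_mono {Q T : Set (List Bool)} (h : Q ⊆ T) : branches Q ⊆ branches T :=
  fun _ hx n => h (hx n)

theorem finite_len (n : ℕ) : {l : List Bool | l.length = n}.Finite := by
  apply (Set.finite_range (fun v : Fin n → Bool => List.ofFn v)).subset
  intro l (hl : l.length = n)
  refine ⟨fun i => l.get (Fin.cast hl.symm i), ?_⟩
  apply List.ext_getElem (by simp [hl])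
  intro i h1 h2
  simp

theorem ofFn_prefix (x : ℕ → Bool) {m n : ℕ} (h : m ≤ n) :
    (List.ofFn fun i : Fin m => x i) <+: (List.ofFn fun i : Fin n => x i) := by
  rw [List.prefix_iff_eq_take]
  apply List.ext_getElem (by simp [h])
  intro i h1 h2
  simp


def Dp (f : ℕ → (ℕ → Bool) → Bool) (P : Set (List Bool)) (m : ℕ) (b : Bool) : Prop :=
  ∃ Q, IsPerfectTree Q ∧ Q ⊆ P ∧ ∀ x ∈ branches Q, f m x = b

def Fp (f : ℕ → (ℕ → Bool) → Bool) (T : Set (List Bool)) (m : ℕ) (b : Bool) : Prop :=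
  ∀ Q, IsPerfectTree Q → Q ⊆ T → Dp f Q m b

theorem univ_perfect : IsPerfectTree (Set.univ : Set (List Bool)) :=
  ⟨⟨[], trivial⟩, fun _ _ _ => trivial,
    fun t _ => ⟨t, trivial, List.prefix_refl t, trivial, trivial⟩⟩

theorem L1 (f : ℕ → (ℕ → Bool) → Bool)
    (hmeas : ∀ n (U : Set Bool), MarczewskiS (f n ⁻¹' U))
    (T : Set (List Bool)) (hT : IsPerfectTree T) (m : ℕ) :
    Dp f T m true ∨ Dp f T m false := by
  obtain ⟨Q, hQ, hsub, hor⟩ := hmeas m {true} T hT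
  rcases hor with h | h
  · exact Or.inl ⟨Q, hQ, hsub, fun x hx => by have := h hx; simpa using this⟩
  · refine Or.inr ⟨Q, hQ, hsub, fun x hx => ?_⟩
    have hne : x ∉ f m ⁻¹' {true} := fun hc =>
      (Set.eq_empty_iff_forall_notMem.mp h x ⟨hx, hc⟩)
    simpa using hne

def StarProp (f : ℕ → (ℕ → Bool) → Bool) (R : Set (List Bool)) (b : Bool) : Prop :=
  ∀ Ps : Set (Set (List Bool)), Ps.Finite → (∀ P ∈ Ps, IsPerfectTree P ∧ P ⊆ R) →
    ∀ n : ℕ, ∃ m, n ≤ m ∧ ∀ P ∈ Ps, Dp f P m b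

theorem star (f : ℕ → (ℕ → Bool) → Bool)
    (hmeas : ∀ n (U : Set Bool), MarczewskiS (f n ⁻¹' U)) :
    ∃ R b, IsPerfectTree R ∧ StarProp f R b := by
  by_cases h : ∃ T b, IsPerfectTree T ∧ {m | Fp f T m b}.Infinite
  · obtain ⟨T, b, hT, hinf⟩ := h
    refine ⟨T, b, hT, fun Ps _ hsub n => ?_⟩
    obtain ⟨m, hm, hnm⟩ := hinf.exists_gt n
    exact ⟨m, hnm.le, fun P hP => hm P (hsub P hP).1 (hsub P hP).2⟩
  · push_neg at h
    refine ⟨Set.univ, true, univ_perfect, fun Ps hfin hsub n => ?_⟩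
    have hfin2 : (⋃ P ∈ Ps, {m | Fp f P m false}).Finite :=
      hfin.biUnion (fun P hP => (h P false (hsub P hP).1))
    obtain ⟨B, hB⟩ := hfin2.bddAbove
    refine ⟨max n (B+1), le_max_left _ _, fun P hP => ?_⟩
    have hnot : ¬ Fp f P (max n (B+1)) false := by
      intro hc
      have hmem : max n (B+1) ∈ ⋃ P ∈ Ps, {m | Fp f P m false} := Set.mem_biUnion hP hc
      have h1 := hB hmem
      have h2 : B + 1 ≤ max n (B+1) := le_max_right _ _
      omega
    rw [Fp] at hnot; push_neg at hnot
    obtain ⟨Q, hQ, hQP, hnD⟩ := hnot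
    rcases L1 f hmeas Q hQ (max n (B+1)) with hD | hD
    · obtain ⟨Q', h1, h2, h3⟩ := hD; exact ⟨Q', h1, h2.trans hQP, h3⟩
    · exact absurd hD hnD


structure St where
  nd : List Bool → List Bool
  pc : List Bool → Set (List Bool)

def Inv (R : Set (List Bool)) (k : ℕ) (s : St) : Prop :=
  (∀ c : List Bool, c.length = k →
    IsPerfectTree (s.pc c) ∧ s.pc c ⊆ R ∧ s.nd c ∈ s.pc c ∧
    (∀ u ∈ s.pc c, u <+: s.nd c ∨ s.nd c <+: u) ∧ k ≤ (s.nd c).length) ∧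
  (∀ c c' : List Bool, c.length = k → c'.length = k → ∀ u : List Bool,
    s.nd c <+: u → s.nd c' <+: u → c = c')

def Rel (f : ℕ → (ℕ → Bool) → Bool) (b : Bool) (k : ℕ) (s s' : St) (m : ℕ) : Prop :=
  ∀ c : List Bool, c.length = k →
    (∀ i : Bool, s'.pc (c ++ [i]) ⊆ s.pc c) ∧
    (∀ i : Bool, ∀ x ∈ branches (s'.pc (c ++ [i])), f m x = b) ∧
    ∃ w : List Bool, s.nd c <+: w ∧ ∀ i : Bool, s'.nd (c ++ [i]) = w ++ [i]

theorem inv_zero {R : Set (List Bool)} (hR : IsPerfectTree R) :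
    Inv R 0 ⟨fun _ => [], fun _ => R⟩ := by
  constructor
  · intro c _
    exact ⟨hR, Set.Subset.refl R, pt_nil hR, fun u _ => Or.inr (List.nil_prefix),
      Nat.zero_le _⟩
  · intro c c' hc hc' u _ _
    rw [List.length_eq_zero_iff] at hc hc'
    rw [hc, hc']

theorem step (f : ℕ → (ℕ → Bool) → Bool) (R : Set (List Bool)) (b : Bool)
    (hstar : StarProp f R b) (k : ℕ) (s : St) (hs : Inv R k s) (n : ℕ) :
    ∃ q : St × ℕ, Inv R (k+1) q.1 ∧ Rel f b k s q.1 q.2 ∧ n ≤ q.2 := by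
  have hP : ∀ P ∈ s.pc '' {c : List Bool | c.length = k}, IsPerfectTree P ∧ P ⊆ R := by
    rintro P ⟨c, hc, rfl⟩; exact ⟨(hs.1 c hc).1, (hs.1 c hc).2.1⟩
  obtain ⟨m, hnm, hD⟩ := hstar _ ((finite_len k).image s.pc) hP n
  have key : ∀ c : List Bool, ∃ (Q : Set (List Bool)) (w : List Bool), c.length = k →
      IsPerfectTree Q ∧ Q ⊆ s.pc c ∧ (∀ x ∈ branches Q, f m x = b) ∧
      s.nd c <+: w ∧ w ++ [false] ∈ Q ∧ w ++ [true] ∈ Q ∧ k + 1 ≤ w.length + 1 := by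
    intro c
    by_cases hc : c.length = k
    · obtain ⟨Q, hQ, hQsub, hQval⟩ := hD (s.pc c) (Set.mem_image_of_mem _ hc)
      obtain ⟨v, hvQ, -, hvlen⟩ := exists_long hQ (pt_nil hQ) (s.nd c).length
      have hvcomp : s.nd c <+: v := by
        rcases (hs.1 c hc).2.2.2.1 v (hQsub hvQ) with h | h
        · have hvnd : v = s.nd c := h.eq_of_length_le hvlen
          rw [hvnd]
        · exact h
      obtain ⟨w, hwQ, hvw, hw0, hw1⟩ := hQ.2.2 v hvQ
      refine ⟨Q, w, fun _ => ⟨hQ, hQsub, hQval, hvcomp.trans hvw, hw0, hw1, ?_⟩⟩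
      have h1 := (hs.1 c hc).2.2.2.2
      have h2 := hvw.length_le
      have h3 := hvcomp.length_le
      omega
    · exact ⟨∅, [], fun h => absurd h hc⟩
  choose Qf wf hkey using key
  classical
  refine ⟨⟨⟨fun c' => wf c'.dropLast ++ [c'.getLastD false],
          fun c' => loc (Qf c'.dropLast) (wf c'.dropLast ++ [c'.getLastD false])⟩, m⟩,
          ⟨?_, ?_⟩, ?_, hnm⟩
  · -- Inv part 1
    intro c' hc'
    have hne : c' ≠ [] := by intro h; rw [h] at hc'; simp at hc'
    have hcd : c'.dropLast.length = k := by
      rw [List.length_dropLast, hc']; omega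
    obtain ⟨hQpt, hQsub, hQval, hndw, hw0, hw1, hwlen⟩ := hkey c'.dropLast hcd
    have hwi : wf c'.dropLast ++ [c'.getLastD false] ∈ Qf c'.dropLast := by
      rcases Bool.dichotomy (c'.getLastD false) with h | h <;> rw [h]
      · exact hw0
      · exact hw1
    refine ⟨pt_loc hQpt hwi, ?_, ?_, ?_, ?_⟩
    · exact ((loc_subset _ _).trans hQsub).trans (hs.1 c'.dropLast hcd).2.1
    · exact ⟨hwi, Or.inr (List.prefix_refl _)⟩
    · rintro u ⟨_, hcomp⟩; exact hcomp
    · simp only [List.length_append, List.length_cons, List.length_nil]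
      omega
  · -- Inv part 2 : incomparability
    intro c₁ c₂ hc₁ hc₂ u h₁ h₂
    have hne₁ : c₁ ≠ [] := by intro h; rw [h] at hc₁; simp at hc₁
    have hne₂ : c₂ ≠ [] := by intro h; rw [h] at hc₂; simp at hc₂
    have hcd₁ : c₁.dropLast.length = k := by rw [List.length_dropLast, hc₁]; omega
    have hcd₂ : c₂.dropLast.length = k := by rw [List.length_dropLast, hc₂]; omega
    dsimp only at h₁ h₂
    obtain ⟨_, _, _, hndw₁, _, _, _⟩ := hkey c₁.dropLast hcd₁
    obtain ⟨_, _, _, hndw₂, _, _, _⟩ := hkey c₂.dropLast hcd₂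
    have hp₁ : s.nd c₁.dropLast <+: u :=
      (hndw₁.trans (List.prefix_append _ _)).trans h₁
    have hp₂ : s.nd c₂.dropLast <+: u :=
      (hndw₂.trans (List.prefix_append _ _)).trans h₂
    have hdeq : c₁.dropLast = c₂.dropLast := hs.2 _ _ hcd₁ hcd₂ u hp₁ hp₂
    rw [hdeq] at h₁
    have hcomp := List.prefix_or_prefix_of_prefix h₁ h₂
    have heq : wf c₂.dropLast ++ [c₁.getLastD false] = wf c₂.dropLast ++ [c₂.getLastD false] := by
      rcases hcomp with h | h
      · exact h.eq_of_length_le (by simp)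
      · exact (h.eq_of_length_le (by simp)).symm
    have hieq : c₁.getLastD false = c₂.getLastD false := by
      have := List.append_cancel_left heq
      simpa using this
    rw [← concat_decomp c₁ hne₁, ← concat_decomp c₂ hne₂, hdeq, hieq]
  · -- Rel
    intro c hc
    obtain ⟨hQpt, hQsub, hQval, hndw, hw0, hw1, hwlen⟩ := hkey c hc
    have hd : ∀ i : Bool, (c ++ [i]).dropLast = c := fun i => List.dropLast_concat
    have hg : ∀ i : Bool, (c ++ [i]).getLastD false = i := fun i => List.getLastD_concat
    refine ⟨?_, ?_, wf c, hndw, ?_⟩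
    · intro i
      simp only [hd, hg]
      exact (loc_subset _ _).trans hQsub
    · intro i x hx
      simp only [hd, hg] at hx
      exact hQval x (branches_mono (loc_subset _ _) hx)
    · intro i
      simp only [hd, hg]

noncomputable def chain (f : ℕ → (ℕ → Bool) → Bool) (R : Set (List Bool)) (b : Bool)
    (hR : IsPerfectTree R) (hstar : StarProp f R b) :
    (k : ℕ) → {q : St × ℕ // Inv R k q.1}
  | 0 => ⟨(⟨fun _ => [], fun _ => R⟩, 0), inv_zero hR⟩
  | k+1 =>
    let p := chain f R b hR hstar k
    ⟨(step f R b hstar k p.1.1 p.2 (p.1.2+1)).choose,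
     (step f R b hstar k p.1.1 p.2 (p.1.2+1)).choose_spec.1⟩

theorem chain_rel (f : ℕ → (ℕ → Bool) → Bool) (R : Set (List Bool)) (b : Bool)
    (hR : IsPerfectTree R) (hstar : StarProp f R b) (k : ℕ) :
    Rel f b k (chain f R b hR hstar k).1.1 (chain f R b hR hstar (k+1)).1.1
      (chain f R b hR hstar (k+1)).1.2 ∧
    (chain f R b hR hstar k).1.2 + 1 ≤ (chain f R b hR hstar (k+1)).1.2 := by
  have h := (step f R b hstar k (chain f R b hR hstar k).1.1 (chain f R b hR hstar k).2
      ((chain f R b hR hstar k).1.2+1)).choose_spec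
  exact ⟨h.2.1, h.2.2⟩

def limitTree (P : ℕ → List Bool → Set (List Bool)) : Set (List Bool) :=
  {u | ∀ k, ∃ c : List Bool, c.length = k ∧ u ∈ P k c}

theorem main (f : ℕ → (ℕ → Bool) → Bool)
    (hmeas : ∀ n (U : Set Bool), MarczewskiS (f n ⁻¹' U)) :
    ∃ Q, IsPerfectTree Q ∧ ∃ n : ℕ → ℕ, StrictMono n ∧ ∃ b : Bool,
      ∀ k, ∀ x ∈ branches Q, f (n k) x = b := by
  obtain ⟨R, b, hR, hstar⟩ := star f hmeas
  set C := chain f R b hR hstar with hC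
  have inv : ∀ k, Inv R k (C k).1.1 := fun k => (C k).2
  have rel : ∀ k, Rel f b k (C k).1.1 (C (k+1)).1.1 (C (k+1)).1.2 ∧
      (C k).1.2 + 1 ≤ (C (k+1)).1.2 := fun k => chain_rel f R b hR hstar k
  set Q : Set (List Bool) := limitTree (fun k => (C k).1.1.pc) with hQdef
  have hQmem : ∀ u : List Bool, u ∈ Q ↔ ∀ k, ∃ c : List Bool, c.length = k ∧
      u ∈ (C k).1.1.pc c := fun u => Iff.rfl
  -- single-step subset
  have h_pc_step : ∀ k (c' : List Bool), c'.length = k+1 →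
      (C (k+1)).1.1.pc c' ⊆ (C k).1.1.pc c'.dropLast := by
    intro k c' hc'
    have hne : c' ≠ [] := by intro h; rw [h] at hc'; simp at hc'
    have hcd : c'.dropLast.length = k := by rw [List.length_dropLast, hc']; omega
    have h := ((rel k).1 c'.dropLast hcd).1 (c'.getLastD false)
    rwa [concat_decomp c' hne] at h
  -- iterated subset
  have h_take : ∀ k j, j ≤ k → ∀ c : List Bool, c.length = k →
      (C k).1.1.pc c ⊆ (C j).1.1.pc (c.take j) := by
    intro k
    induction k with
    | zero =>
      intro j hj c hc
      have hj0 : j = 0 := Nat.le_zero.mp hj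
      subst hj0
      rw [List.length_eq_zero_iff] at hc
      subst hc
      exact Set.Subset.refl _
    | succ k ih =>
      intro j hj c hc
      rcases Nat.eq_or_lt_of_le hj with rfl | hj'
      · rw [← hc, List.take_length]
      · have hjk : j ≤ k := by omega
        have h1 := h_pc_step k c hc
        have hcd : c.dropLast.length = k := by rw [List.length_dropLast, hc]; omega
        have h2 := ih j hjk c.dropLast hcd
        have h3 : c.dropLast.take j = c.take j := by
          rw [List.dropLast_eq_take, List.take_take]
          congr 1
          rw [hc]
          omega
        rw [h3] at h2
        exact h1.trans h2
  have h_ndmem : ∀ k (c : List Bool), c.length = k →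
      (C k).1.1.nd c ∈ (C k).1.1.pc c := fun k c hc => ((inv k).1 c hc).2.2.1
  -- node extension along zeros
  have h_ext : ∀ k (c : List Bool), c.length = k → ∀ t,
      (C k).1.1.nd c <+: (C (k+t)).1.1.nd (c ++ List.replicate t false) := by
    intro k c hc t
    induction t with
    | zero => simp
    | succ t ih =>
      have hlen : (c ++ List.replicate t false).length = k + t := by simp [hc]
      obtain ⟨w, hw1, hw2⟩ := ((rel (k+t)).1 _ hlen).2.2
      have heq : c ++ List.replicate (t+1) false = (c ++ List.replicate t false) ++ [false] := by
        rw [List.replicate_succ', ← List.append_assoc]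
      rw [heq, Nat.add_succ, hw2 false]
      exact ih.trans (hw1.trans (List.prefix_append w [false]))
  -- nodes are in Q
  have h_ndQ : ∀ k (c : List Bool), c.length = k → (C k).1.1.nd c ∈ Q := by
    intro k c hc
    intro j
    rcases le_or_gt j k with hj | hj
    · refine ⟨c.take j, ?_, h_take k j hj c hc (h_ndmem k c hc)⟩
      rw [List.length_take, hc]
      omega
    · have hd : (c ++ List.replicate (j-k) false).length = j := by simp [hc]; omega
      refine ⟨c ++ List.replicate (j-k) false, hd, ?_⟩
      have h1 := h_ext k c hc (j-k)
      have hkj : k + (j - k) = j := by omega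
      rw [hkj] at h1
      exact pt_prefix ((inv j).1 _ hd).1 h1 (h_ndmem j _ hd)
  -- Q is prefix-closed
  have hQpre : ∀ u v : List Bool, u <+: v → v ∈ Q → u ∈ Q := by
    intro u v huv hv k
    obtain ⟨c, hc, hm⟩ := hv k
    exact ⟨c, hc, pt_prefix ((inv k).1 c hc).1 huv hm⟩
  -- Q is perfect
  have hQperf : IsPerfectTree Q := by
    refine ⟨⟨[], hQpre [] _ List.nil_prefix (h_ndQ 0 [] rfl)⟩, ?_, ?_⟩
    · intro t ht n k
      obtain ⟨c, hc, hm⟩ := ht k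
      exact ⟨c, hc, ((inv k).1 c hc).1.2.1 t hm n⟩
    · intro u hu
      obtain ⟨c, hc, hum⟩ := hu (u.length + 1)
      have hinv := (inv (u.length+1)).1 c hc
      have hund : u <+: (C (u.length+1)).1.1.nd c := by
        rcases hinv.2.2.2.1 u hum with h | h
        · exact h
        · exfalso
          have h1 := h.length_le
          have h2 := hinv.2.2.2.2
          omega
      obtain ⟨w, hw1, hw2⟩ := ((rel (u.length+1)).1 c hc).2.2
      have hwQ : ∀ i : Bool, w ++ [i] ∈ Q := by
        intro i
        rw [← hw2 i]
        exact h_ndQ (u.length+2) (c ++ [i]) (by simp [hc])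
      exact ⟨w, hQpre w (w ++ [false]) (List.prefix_append _ _) (hwQ false),
        hund.trans hw1, hwQ false, hwQ true⟩
  -- the subsequence
  have hM : StrictMono (fun k => (C (k+1)).1.2) := by
    apply strictMono_nat_of_lt_succ
    intro k
    have := (rel (k+1)).2
    omega
  refine ⟨Q, hQperf, (fun k => (C (k+1)).1.2), hM, b, ?_⟩
  intro k x hx
  obtain ⟨L, hL⟩ := ((finite_len (k+1)).image
      (fun c => ((C (k+1)).1.1.nd c).length)).bddAbove
  have hLb : ∀ c : List Bool, c.length = k+1 → ((C (k+1)).1.1.nd c).length ≤ L :=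
    fun c hc => hL (Set.mem_image_of_mem _ hc)
  obtain ⟨c, hc, hmem⟩ := hx (L+1) (k+1)
  have hndpre : ∀ (c₀ : List Bool), c₀.length = k + 1 →
      (List.ofFn fun i : Fin (L+1) => x i) ∈ (C (k+1)).1.1.pc c₀ →
      (C (k+1)).1.1.nd c₀ <+: (List.ofFn fun i : Fin (L+1) => x i) := by
    intro c₀ hc₀ hm₀
    rcases ((inv (k+1)).1 c₀ hc₀).2.2.2.1 _ hm₀ with h | h
    · exfalso
      have h1 := h.length_le
      have h2 := hLb c₀ hc₀
      simp only [List.length_ofFn] at h1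
      omega
    · exact h
  have hbr : x ∈ branches ((C (k+1)).1.1.pc c) := by
    intro n'
    rcases le_or_gt n' (L+1) with hn | hn
    · exact pt_prefix ((inv (k+1)).1 c hc).1 (ofFn_prefix x hn) hmem
    · obtain ⟨c₂, hc₂, hm₂⟩ := hx n' (k+1)
      have hm₂' : (List.ofFn fun i : Fin (L+1) => x i) ∈ (C (k+1)).1.1.pc c₂ :=
        pt_prefix ((inv (k+1)).1 c₂ hc₂).1 (ofFn_prefix x (by omega)) hm₂
      have hcc : c = c₂ := (inv (k+1)).2 c c₂ hc hc₂ _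
        (hndpre c hc hmem) (hndpre c₂ hc₂ hm₂')
      rw [hcc]
      exact hm₂
  have hne : c ≠ [] := by intro h; rw [h] at hc; simp at hc
  have hcd : c.dropLast.length = k := by rw [List.length_dropLast, hc]; omega
  have h := ((rel k).1 c.dropLast hcd).2.1 (c.getLastD false) x
  rw [concat_decomp c hne] at h
  exact h hbr
end MST

/-- For a sequence of (s)-measurable `{0,1}`-valued functions there is a perfect tree `Q`
and a subsequence converging uniformly (i.e. eventually constant) on `[Q]`. -/
theorem sMeasurable_unif_convergent_subseq (f : ℕ → (ℕ → Bool) → Bool)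
    (hmeas : ∀ n (U : Set Bool), MarczewskiS (f n ⁻¹' U)) :
    ∃ Q, IsPerfectTree Q ∧ ∃ n : ℕ → ℕ, StrictMono n ∧
      ∃ (g : (ℕ → Bool) → Bool) (N : ℕ),
        ∀ k ≥ N, ∀ x ∈ branches Q, f (n k) x = g x := by
  obtain ⟨Q, hQ, n, hn, b, hb⟩ := MST.main f hmeas
  exact ⟨Q, hQ, n, hn, fun _ => b, 0, fun k _ x hx => hb k x hx⟩
end

section
/- Let M ⊆ [ω]^ω be open and dense in the Ellentuck topology. Then for every A ∈ [ω]^ω and every a ∈ [ω]^{<ω} there exists an infinite B ⊆ A such that [∅, B ∪ a] ⊆ M. -/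
open Set

/-- The Ellentuck basic set `[a, A]` of infinite sets `B` with `a ⊆ B ⊆ a ∪ A`. -/
def EllSet (a : Finset ℕ) (A : Set ℕ) : Set (Set ℕ) :=
  {B | B.Infinite ∧ ↑a ⊆ B ∧ B ⊆ ↑a ∪ A}

/-- `M` is completely Ramsey. -/
def CRSet (M : Set (Set ℕ)) : Prop :=
  ∀ (a : Finset ℕ) (A : Set ℕ), A.Infinite →
    ∃ B ⊆ A, B.Infinite ∧ (EllSet a B ⊆ M ∨ EllSet a B ∩ M = ∅)

/-- `M` is Ramsey null. -/
def RamseyNull (M : Set (Set ℕ)) : Prop :=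
  ∀ (a : Finset ℕ) (A : Set ℕ), A.Infinite →
    ∃ B ⊆ A, B.Infinite ∧ EllSet a B ∩ M = ∅

/-- `M` is open in the Ellentuck topology (a set of infinite sets which is a union of
Ellentuck basic sets). -/
def EllOpen (M : Set (Set ℕ)) : Prop :=
  M ⊆ {A | A.Infinite} ∧
    ∀ B ∈ M, ∃ (a : Finset ℕ) (A : Set ℕ), A.Infinite ∧ B ∈ EllSet a A ∧ EllSet a A ⊆ M

/-- `M` is dense in the Ellentuck topology. -/
def EllDense (M : Set (Set ℕ)) : Prop :=
  ∀ (a : Finset ℕ) (A : Set ℕ), A.Infinite → (EllSet a A).Nonempty →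
    (EllSet a A ∩ M).Nonempty


namespace GP

variable (M : Set (Set ℕ))

/-- `B` accepts stem `c`. -/
def Acc (c : Finset ℕ) (B : Set ℕ) : Prop := EllSet c B ⊆ M

/-- `B` rejects stem `c`. -/
def Rej (c : Finset ℕ) (B : Set ℕ) : Prop := ∀ D, D ⊆ B → D.Infinite → ¬ Acc M c D

def Dec (c : Finset ℕ) (B : Set ℕ) : Prop := Acc M c B ∨ Rej M c B

variable {M}

theorem acc_mono {c : Finset ℕ} {B C : Set ℕ} (h : Acc M c B) (hCB : C ⊆ B) :
    Acc M c C := fun X hX => h ⟨hX.1, hX.2.1, hX.2.2.trans (union_subset_union_right _ hCB)⟩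

theorem rej_mono {c : Finset ℕ} {B C : Set ℕ} (h : Rej M c B) (hCB : C ⊆ B) :
    Rej M c C := fun D hD => h D (hD.trans hCB)

theorem dec_mono {c : Finset ℕ} {B C : Set ℕ} (h : Dec M c B) (hCB : C ⊆ B)
    (hC : C.Infinite) : Dec M c C :=
  h.imp (fun h' => acc_mono h' hCB) (fun h' => rej_mono h' hCB)

theorem decide (M : Set (Set ℕ)) (c : Finset ℕ) {B : Set ℕ} (hB : B.Infinite) :
    ∃ C, C ⊆ B ∧ C.Infinite ∧ Dec M c C := by
  by_cases h : ∃ C, C ⊆ B ∧ C.Infinite ∧ Acc M c C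
  · obtain ⟨C, h1, h2, h3⟩ := h
    exact ⟨C, h1, h2, Or.inl h3⟩
  · push_neg at h
    exact ⟨B, Subset.rfl, hB, Or.inr fun D hD hDi => h D hD hDi⟩

theorem decideAll (M : Set (Set ℕ)) (F : Finset (Finset ℕ)) {B : Set ℕ} (hB : B.Infinite) :
    ∃ C, C ⊆ B ∧ C.Infinite ∧ ∀ c ∈ F, Dec M c C := by
  induction F using Finset.induction_on with
  | empty => exact ⟨B, Subset.rfl, hB, by simp⟩
  | insert _ _ hni ih =>
    rename_i c F
    obtain ⟨C, h1, h2, h3⟩ := ih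
    obtain ⟨C', h1', h2', h3'⟩ := decide M c h2
    refine ⟨C', h1'.trans h1, h2', ?_⟩
    intro d hd
    rcases Finset.mem_insert.1 hd with rfl | hd
    · exact h3'
    · exact dec_mono (h3 d hd) h1' h2'

theorem ex1 (M : Set (Set ℕ)) (p : Set ℕ × Finset ℕ) (hp : p.1.Infinite) :
    ∃ q : Set ℕ × Finset ℕ, q.1.Infinite ∧ q.1 ⊆ p.1 ∩ Set.Ioi (sInf p.1) ∧
      q.2 = insert (sInf p.1) p.2 ∧ ∀ c ∈ q.2.powerset, Dec M c q.1 := by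
  have h1 : (p.1 ∩ Set.Ioi (sInf p.1)).Infinite := by
    have : p.1 ∩ Set.Ioi (sInf p.1) = p.1 \ Set.Iic (sInf p.1) := by
      rw [diff_eq, compl_Iic]
    rw [this]
    exact hp.diff (finite_Iic _)
  obtain ⟨C, hC1, hC2, hC3⟩ := decideAll M (insert (sInf p.1) p.2).powerset h1
  exact ⟨(C, insert (sInf p.1) p.2), hC2, hC1, rfl, hC3⟩

variable (M)

noncomputable def step (p : {p : Set ℕ × Finset ℕ // p.1.Infinite}) :
    {p : Set ℕ × Finset ℕ // p.1.Infinite} :=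
  ⟨(ex1 M p.1 p.2).choose, (ex1 M p.1 p.2).choose_spec.1⟩

noncomputable def seq (s₀ : {p : Set ℕ × Finset ℕ // p.1.Infinite}) (k : ℕ) :
    {p : Set ℕ × Finset ℕ // p.1.Infinite} := (step M)^[k] s₀

variable (s₀ : {p : Set ℕ × Finset ℕ // p.1.Infinite})

/-- The `k`-th approximating infinite set. -/
noncomputable def SA (k : ℕ) : Set ℕ := (seq M s₀ k).1.1

/-- The `k`-th chosen number. -/
noncomputable def nn (k : ℕ) : ℕ := sInf (SA M s₀ k)

theorem SA_infinite (k : ℕ) : (SA M s₀ k).Infinite := (seq M s₀ k).2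

theorem seq_succ (k : ℕ) : seq M s₀ (k+1) = step M (seq M s₀ k) :=
  Function.iterate_succ_apply' _ _ _

theorem SA_succ_subset (k : ℕ) :
    SA M s₀ (k+1) ⊆ SA M s₀ k ∩ Set.Ioi (nn M s₀ k) := by
  have := (ex1 M (seq M s₀ k).1 (seq M s₀ k).2).choose_spec.2.1
  rw [SA, seq_succ]; exact this

theorem b_succ (k : ℕ) :
    (seq M s₀ (k+1)).1.2 = insert (nn M s₀ k) (seq M s₀ k).1.2 := by
  have := (ex1 M (seq M s₀ k).1 (seq M s₀ k).2).choose_spec.2.2.1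
  rw [seq_succ]; exact this

theorem dec_of_mem (k : ℕ) {c : Finset ℕ} (hc : c ⊆ (seq M s₀ (k+1)).1.2) :
    Dec M c (SA M s₀ (k+1)) := by
  have h := (ex1 M (seq M s₀ k).1 (seq M s₀ k).2).choose_spec.2.2.2
  rw [seq_succ] at hc
  rw [SA, seq_succ]
  exact h c (Finset.mem_powerset.2 hc)

theorem nn_mem (k : ℕ) : nn M s₀ k ∈ SA M s₀ k :=
  Nat.sInf_mem (SA_infinite M s₀ k).nonempty

theorem SA_mono : ∀ {k m : ℕ}, k ≤ m → SA M s₀ m ⊆ SA M s₀ k := by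
  intro k m h
  induction m with
  | zero => cases Nat.le_zero.1 h; exact Subset.rfl
  | succ m ih =>
    rcases Nat.lt_or_ge k (m+1) with h' | h'
    · exact (SA_succ_subset M s₀ m).trans (inter_subset_left) |>.trans (ih (Nat.lt_succ_iff.1 h'))
    · cases le_antisymm h h'; exact Subset.rfl

theorem nn_strictMono : StrictMono (nn M s₀) := by
  apply strictMono_nat_of_lt_succ
  intro k
  have := SA_succ_subset M s₀ k (nn_mem M s₀ (k+1))
  exact this.2

theorem nn_mem_SA {j k : ℕ} (h : k ≤ j) : nn M s₀ j ∈ SA M s₀ k :=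
  SA_mono M s₀ h (nn_mem M s₀ j)

theorem b_coe (k : ℕ) :
    ((seq M s₀ k).1.2 : Set ℕ) = ↑s₀.1.2 ∪ nn M s₀ '' Set.Iio k := by
  induction k with
  | zero =>
    have : Set.Iio 0 = (∅ : Set ℕ) := by ext x; simp
    simp [seq, this]
  | succ k ih =>
    rw [b_succ, Finset.coe_insert, ih]
    have : Set.Iio (k+1) = insert k (Set.Iio k) := by
      ext x; simp
    rw [this, image_insert_eq]
    ext x; simp

theorem dec_of_subset (k : ℕ) {c : Finset ℕ}
    (hc : (c : Set ℕ) ⊆ ↑s₀.1.2 ∪ nn M s₀ '' Set.Iic k) :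
    Dec M c (SA M s₀ (k+1)) := by
  apply dec_of_mem
  rw [← Finset.coe_subset, b_coe]
  have : Set.Iic k = Set.Iio (k+1) := by ext x; simp [Nat.lt_succ_iff]
  rwa [this] at hc

theorem lemE {c : Finset ℕ} {K : ℕ}
    (hc : (c : Set ℕ) ⊆ ↑s₀.1.2 ∪ nn M s₀ '' Set.Iic K)
    (hrej : Rej M c (SA M s₀ (K+1))) :
    {j | K < j ∧ Acc M (insert (nn M s₀ j) c) (SA M s₀ (j+1))}.Finite := by
  by_contra h
  have hS : {j | K < j ∧ Acc M (insert (nn M s₀ j) c) (SA M s₀ (j+1))}.Infinite := h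
  set S := {j | K < j ∧ Acc M (insert (nn M s₀ j) c) (SA M s₀ (j+1))} with hSdef
  have hC₀ : (nn M s₀ '' S).Infinite := hS.image ((nn_strictMono M s₀).injective.injOn)
  have hC₀sub : nn M s₀ '' S ⊆ SA M s₀ (K+1) := by
    rintro x ⟨j, hj, rfl⟩
    exact nn_mem_SA M s₀ hj.1
  refine hrej _ hC₀sub hC₀ ?_
  rintro X ⟨hXi, hcX, hXs⟩
  have hne : (X \ ↑c).Nonempty := (hXi.diff c.finite_toSet).nonempty
  have hx₀ := Nat.sInf_mem hne
  set x₀ := sInf (X \ ↑c) with hx₀def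
  have hx₀C : x₀ ∈ nn M s₀ '' S := (hXs hx₀.1).resolve_left hx₀.2
  obtain ⟨j, hjS, hjx⟩ := hx₀C
  refine hjS.2 ?_
  refine ⟨hXi, ?_, ?_⟩
  · rw [Finset.coe_insert]
    exact insert_subset (hjx ▸ hx₀.1) hcX
  · intro y hy
    by_cases hyc : y ∈ (c : Set ℕ)
    · left; rw [Finset.coe_insert]; exact Or.inr hyc
    · obtain ⟨j', hj'S, hj'y⟩ := (hXs hy).resolve_left hyc
      have hle : x₀ ≤ y := Nat.sInf_le ⟨hy, hyc⟩
      rcases eq_or_lt_of_le hle with heq | hlt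
      · left; rw [Finset.coe_insert]
        exact Or.inl (by rw [← heq, hjx])
      · right
        have : j < j' := by
          rw [← (nn_strictMono M s₀).lt_iff_lt]
          rw [hjx, hj'y]; exact hlt
        exact hj'y ▸ nn_mem_SA M s₀ (by omega : j+1 ≤ j')
        
theorem p2 (K : ℕ) (F : Finset ℕ)
    (hF : (F : Set ℕ) ⊆ ↑s₀.1.2 ∪ nn M s₀ '' Set.Iic K) :
    ∃ J, K < J ∧ ∀ c ∈ F.powerset, Rej M c (SA M s₀ (K+1)) →
      Rej M (insert (nn M s₀ J) c) (SA M s₀ (J+1)) := by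
  classical
  set T : Set ℕ := ⋃ c ∈ (F.powerset : Finset (Finset ℕ)),
    (if Rej M c (SA M s₀ (K+1)) then
      {j | K < j ∧ Acc M (insert (nn M s₀ j) c) (SA M s₀ (j+1))} else ∅) with hTdef
  have hTfin : T.Finite := by
    apply Set.Finite.biUnion (F.powerset.finite_toSet)
    intro c hcmem
    split_ifs with h
    · refine lemE M s₀ ?_ h
      have : (c : Set ℕ) ⊆ (F : Set ℕ) := by
        simp only [Finset.mem_coe, Finset.mem_powerset] at hcmem
        exact_mod_cast hcmem
      exact this.trans hF
    · exact finite_empty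
  obtain ⟨B0, hB0⟩ := hTfin.bddAbove
  refine ⟨max K B0 + 1, by omega, ?_⟩
  intro c hc hrej
  set J := max K B0 + 1 with hJdef
  have hcsub : ((insert (nn M s₀ J) c : Finset ℕ) : Set ℕ) ⊆
      ↑s₀.1.2 ∪ nn M s₀ '' Set.Iic J := by
    rw [Finset.coe_insert]
    apply insert_subset
    · exact Or.inr ⟨J, Set.mem_Iic.2 le_rfl, rfl⟩
    · refine Subset.trans ?_ (union_subset_union_right _
        (image_mono (Iic_subset_Iic.2 (by omega : K ≤ J))))
      exact Subset.trans (by exact_mod_cast Finset.mem_powerset.1 hc) hF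
  rcases dec_of_subset M s₀ J hcsub with hacc | hrej2
  · exfalso
    have hJT : J ∈ T := by
      rw [hTdef]
      refine Set.mem_biUnion (by exact_mod_cast hc) ?_
      rw [if_pos hrej]
      exact ⟨by omega, hacc⟩
    have := hB0 hJT
    omega
  · exact hrej2

noncomputable def jstep (q : {q : ℕ × Finset ℕ //
    (q.2 : Set ℕ) ⊆ ↑s₀.1.2 ∪ nn M s₀ '' Set.Iic q.1}) :
    {q : ℕ × Finset ℕ // (q.2 : Set ℕ) ⊆ ↑s₀.1.2 ∪ nn M s₀ '' Set.Iic q.1} :=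
  ⟨((p2 M s₀ q.1.1 q.1.2 q.2).choose,
      insert (nn M s₀ (p2 M s₀ q.1.1 q.1.2 q.2).choose) q.1.2), by
    rw [Finset.coe_insert]
    apply insert_subset
    · exact Or.inr ⟨_, Set.mem_Iic.2 le_rfl, rfl⟩
    · refine q.2.trans (union_subset_union_right _ (image_mono
        (Iic_subset_Iic.2 (le_of_lt (p2 M s₀ q.1.1 q.1.2 q.2).choose_spec.1))))⟩

noncomputable def jseq (m : ℕ) : {q : ℕ × Finset ℕ //
    (q.2 : Set ℕ) ⊆ ↑s₀.1.2 ∪ nn M s₀ '' Set.Iic q.1} :=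
  (jstep M s₀)^[m] ⟨(0, s₀.1.2), fun x hx => Or.inl hx⟩

noncomputable def KK (m : ℕ) : ℕ := (jseq M s₀ m).1.1

noncomputable def FF (m : ℕ) : Finset ℕ := (jseq M s₀ m).1.2

theorem jseq_succ (m : ℕ) : jseq M s₀ (m+1) = jstep M s₀ (jseq M s₀ m) :=
  Function.iterate_succ_apply' _ _ _

theorem KK_zero : KK M s₀ 0 = 0 := rfl

theorem FF_zero : FF M s₀ 0 = s₀.1.2 := rfl

theorem KK_lt (m : ℕ) : KK M s₀ m < KK M s₀ (m+1) := by
  have := (p2 M s₀ (jseq M s₀ m).1.1 (jseq M s₀ m).1.2 (jseq M s₀ m).2).choose_spec.1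
  rw [KK, KK, jseq_succ]
  exact this

theorem FF_succ (m : ℕ) :
    FF M s₀ (m+1) = insert (nn M s₀ (KK M s₀ (m+1))) (FF M s₀ m) := by
  unfold FF KK
  rw [jseq_succ]
  rfl

theorem Qspec (m : ℕ) : ∀ c ∈ (FF M s₀ m).powerset,
    Rej M c (SA M s₀ (KK M s₀ m + 1)) →
    Rej M (insert (nn M s₀ (KK M s₀ (m+1))) c) (SA M s₀ (KK M s₀ (m+1) + 1)) := by
  have := (p2 M s₀ (jseq M s₀ m).1.1 (jseq M s₀ m).1.2 (jseq M s₀ m).2).choose_spec.2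
  rw [KK, KK, FF, jseq_succ]
  exact this

theorem KK_strictMono : StrictMono (KK M s₀) :=
  strictMono_nat_of_lt_succ (KK_lt M s₀)

theorem KK_pos (m : ℕ) : 1 ≤ KK M s₀ (m+1) := by
  have h := KK_strictMono M s₀ (show 0 < m+1 by omega)
  rw [KK_zero] at h
  omega

theorem FF_coe (m : ℕ) : ((FF M s₀ m : Finset ℕ) : Set ℕ) =
    ↑s₀.1.2 ∪ (fun i => nn M s₀ (KK M s₀ i)) '' Set.Icc 1 m := by
  induction m with
  | zero =>
    have : Set.Icc 1 0 = (∅ : Set ℕ) := Set.Icc_eq_empty (by omega)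
    simp [FF_zero, this]
  | succ m ih =>
    rw [FF_succ, Finset.coe_insert, ih]
    have : Set.Icc 1 (m+1) = insert (m+1) (Set.Icc 1 m) := by
      ext x; simp only [Set.mem_Icc, Set.mem_insert_iff]; omega
    rw [this, image_insert_eq]
    ext x; simp

end GP

open GP in
/-- For an Ellentuck open dense `M`, every `A` and `a` admit an infinite `B ⊆ A` with
`[∅, B ∪ a] ⊆ M`. -/
theorem ellentuck_open_dense_fact (M : Set (Set ℕ))
    (hopen : EllOpen M) (hdense : EllDense M)
    (A : Set ℕ) (hA : A.Infinite) (a : Finset ℕ) :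
    ∃ B ⊆ A, B.Infinite ∧ EllSet ∅ (B ∪ ↑a) ⊆ M := by
  classical
  set s0 : {p : Set ℕ × Finset ℕ // p.1.Infinite} := ⟨(A, a), hA⟩ with hs0
  set g : ℕ → ℕ := fun i => nn M s0 (KK M s0 (i+1)) with hgdef
  have hg : StrictMono g := fun i j h =>
    nn_strictMono M s0 (KK_strictMono M s0 (by omega))
  set C : Set ℕ := Set.range g with hCdef
  have hCinf : C.Infinite := Set.infinite_range_of_injective hg.injective
  have hCA : C ⊆ A := by
    rintro x ⟨i, rfl⟩
    exact SA_mono M s0 (Nat.zero_le _) (nn_mem M s0 _)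
  have hCA1 : C ⊆ SA M s0 1 := by
    rintro x ⟨i, rfl⟩
    exact nn_mem_SA M s0 (KK_pos M s0 i)
  -- rejection propagation
  have claim : ∀ (s : Finset ℕ), s ⊆ a → Rej M s (SA M s0 1) →
      ∀ (m : ℕ) (c : Finset ℕ), s ⊆ c → (c : Set ℕ) ⊆ ↑s ∪ g '' Set.Iic m →
      Rej M c (SA M s0 (KK M s0 (m+1) + 1)) := by
    intro s hsa hrejs m
    induction m with
    | zero =>
      intro c hsc hcsub
      by_cases hcase : g 0 ∈ c ∧ g 0 ∉ s
      · have hcs : c = insert (g 0) s := by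
          apply Finset.Subset.antisymm
          · intro x hx
            rcases hcsub hx with hx' | ⟨i, hi, rfl⟩
            · exact Finset.mem_insert.2 (Or.inr hx')
            · have : i = 0 := Nat.le_zero.1 hi
              subst this
              exact Finset.mem_insert_self _ _
          · exact Finset.insert_subset hcase.1 hsc
        rw [hcs]
        have hq := Qspec M s0 0 s (Finset.mem_powerset.2 hsa) hrejs
        exact hq
      · have hcs : c = s := by
          apply Finset.Subset.antisymm _ hsc
          intro x hx
          rcases hcsub hx with hx' | ⟨i, hi, rfl⟩
          · exact hx'
          · have : i = 0 := Nat.le_zero.1 hi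
            subst this
            by_cases h1 : g 0 ∈ s
            · exact h1
            · exact absurd ⟨hx, h1⟩ hcase
        rw [hcs]
        exact rej_mono hrejs (SA_mono M s0 (by omega))
    | succ m ih =>
      intro c hsc hcsub
      by_cases hcase : g (m+1) ∈ c ∧ g (m+1) ∉ s
      · set c' := c.erase (g (m+1)) with hc'def
        have hsc' : s ⊆ c' := fun x hx =>
          Finset.mem_erase.2 ⟨fun h => hcase.2 (h ▸ hx), hsc hx⟩
        have hc'sub : (c' : Set ℕ) ⊆ ↑s ∪ g '' Set.Iic m := by
          intro x hx
          have hx' := Finset.mem_erase.1 hx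
          rcases hcsub hx'.2 with h | ⟨i, hi, rfl⟩
          · exact Or.inl h
          · simp only [Set.mem_Iic] at hi
            have hne : i ≠ m+1 := fun h => hx'.1 (by rw [h])
            exact Or.inr ⟨i, Set.mem_Iic.2 (by omega), rfl⟩
        have hrejc' := ih c' hsc' hc'sub
        have hc'F : c' ∈ (FF M s0 (m+1)).powerset := by
          rw [Finset.mem_powerset, ← Finset.coe_subset, FF_coe]
          refine hc'sub.trans (union_subset_union ?_ ?_)
          · exact Finset.coe_subset.2 hsa
          · rintro x ⟨i, hi, rfl⟩
            exact ⟨i+1, by simp at hi ⊢; omega, rfl⟩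
        have hq := Qspec M s0 (m+1) c' hc'F hrejc'
        have : insert (nn M s0 (KK M s0 (m+2))) c' = c := by
          rw [hc'def, Finset.insert_erase hcase.1]
        rwa [this] at hq
      · have hcsub' : (c : Set ℕ) ⊆ ↑s ∪ g '' Set.Iic m := by
          intro x hx
          rcases hcsub hx with h | ⟨i, hi, rfl⟩
          · exact Or.inl h
          · simp only [Set.mem_Iic] at hi
            by_cases hieq : i = m+1
            · subst hieq
              by_cases h1 : g (m+1) ∈ s
              · exact Or.inl h1
              · exact absurd ⟨by exact_mod_cast hx, h1⟩ hcase
            · exact Or.inr ⟨i, Set.mem_Iic.2 (by omega), rfl⟩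
        exact rej_mono (ih c hsc hcsub')
          (SA_mono M s0 (by have := KK_strictMono M s0 (show m+1 < m+1+1 by omega); omega))
  -- every stem contained in a is accepted by C
  have key : ∀ s : Finset ℕ, s ⊆ a → Acc M s C := by
    intro s hsa
    have hdec := dec_of_subset M s0 0 (c := s)
      (fun x hx => Or.inl (Finset.coe_subset.2 hsa hx))
    rcases hdec with hacc | hrejs
    · exact acc_mono hacc hCA1
    · exfalso
      have hCne : (EllSet s C).Nonempty := by
        refine ⟨↑s ∪ C, hCinf.mono subset_union_right, subset_union_left, Subset.rfl⟩
      obtain ⟨Y, hYC, hYM⟩ := hdense s C hCinf hCne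
      obtain ⟨b, D, hDinf, hYmem, hbD⟩ := hopen.2 Y hYM
      set m : ℕ := b.sup id with hmdef
      have hbm : ∀ x ∈ b, x ≤ g m := fun x hx =>
        le_trans (Finset.le_sup (f := id) hx) (hg.le_apply)
      have hfin : (Y ∩ Set.Iic (g m)).Finite := (Set.finite_Iic (g m)).inter_of_right Y
      set c : Finset ℕ := s ∪ hfin.toFinset with hcdef
      have hccoe : (c : Set ℕ) = ↑s ∪ (Y ∩ Set.Iic (g m)) := by
        rw [hcdef, Finset.coe_union, Set.Finite.coe_toFinset]
      have hsc : s ⊆ c := Finset.subset_union_left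
      have hcY : (c : Set ℕ) ⊆ Y := by
        rw [hccoe]
        exact union_subset hYC.2.1 inter_subset_left
      have hbc : (b : Set ℕ) ⊆ ↑c := by
        intro x hx
        rw [hccoe]
        exact Or.inr ⟨hYmem.2.1 hx, Set.mem_Iic.2 (hbm x hx)⟩
      have hcsub : (c : Set ℕ) ⊆ ↑s ∪ g '' Set.Iic m := by
        rw [hccoe]
        apply union_subset subset_union_left
        rintro x ⟨hxY, hxle⟩
        rcases hYC.2.2 hxY with h | ⟨i, rfl⟩
        · exact Or.inl h
        · exact Or.inr ⟨i, Set.mem_Iic.2 (hg.le_iff_le.1 hxle), rfl⟩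
      have hrejc := claim s hsa hrejs m c hsc hcsub
      apply hrejc (Y \ ↑c)
      · intro x hx
        have hxC : x ∈ C := by
          rcases hYC.2.2 hx.1 with h | h
          · exact absurd (hsc (by exact_mod_cast h)) (by exact_mod_cast hx.2)
          · exact h
        obtain ⟨i, rfl⟩ := hxC
        have hgt : g m < g i := by
          by_contra h
          push_neg at h
          exact hx.2 (by rw [hccoe]; exact Or.inr ⟨hx.1, Set.mem_Iic.2 h⟩)
        have him : m < i := hg.lt_iff_lt.1 hgt
        refine SA_mono M s0 ?_ (nn_mem M s0 (KK M s0 (i+1)))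
        have := KK_strictMono M s0 (show m+1 < i+1 by omega)
        omega
      · exact hYC.1.diff c.finite_toSet
      · rintro Z ⟨hZinf, hcZ, hZsub⟩
        apply hbD
        refine ⟨hZinf, hbc.trans hcZ, ?_⟩
        refine Subset.trans ?_ hYmem.2.2
        refine hZsub.trans ?_
        rw [union_diff_self]
        exact union_subset hcY Subset.rfl
  refine ⟨C, hCA, hCinf, ?_⟩
  rintro X ⟨hXinf, -, hXsub⟩
  set s : Finset ℕ := a.filter (fun x => x ∈ X) with hsdef
  have hsX : (s : Set ℕ) ⊆ X := by
    intro x hx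
    simp only [hsdef, Finset.coe_filter, Set.mem_setOf_eq] at hx
    exact hx.2
  have hXs : X ⊆ ↑s ∪ C := by
    intro x hx
    rcases hXsub hx with h | h
    · simp at h
    · rcases h with h | h
      · exact Or.inr h
      · left
        simp only [hsdef, Finset.coe_filter, Set.mem_setOf_eq]
        exact ⟨by exact_mod_cast h, hx⟩
  exact key s (Finset.filter_subset _ _) ⟨hXinf, hsX, hXs⟩
end

section
/- No set A ⊆ 2^ω that is not an (s⁰)-set admits a Kuratowski partition; i.e., there is no partition F of A into (s⁰)-sets such that ⋃F' is an (s)-set for every subfamily F' ⊆ F. -/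
open Set

namespace KP

/-- prefix of a branch -/
def pre (x : ℕ → Bool) (n : ℕ) : List Bool := List.ofFn fun i : Fin n => x i

@[simp] lemma pre_length (x : ℕ → Bool) (n : ℕ) : (pre x n).length = n := by
  simp [pre]

lemma pre_take (x : ℕ → Bool) {m n : ℕ} (h : m ≤ n) : (pre x n).take m = pre x m := by
  exact (Fin.ofFn_take_eq_take_ofFn (n := n) h (fun i : Fin n => x i)).symm.trans rfl

lemma pre_prefix (x : ℕ → Bool) {m n : ℕ} (h : m ≤ n) : pre x m <+: pre x n := by
  rw [← pre_take x h]; exact List.take_prefix _ _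

lemma pre_succ (x : ℕ → Bool) (n : ℕ) : pre x (n+1) = pre x n ++ [x n] := by
  rw [pre, List.ofFn_succ', List.concat_eq_append]
  rfl

lemma pre_getElem (x : ℕ → Bool) {n i : ℕ} (h : i < n) :
    (pre x n)[i]'(by simpa using h) = x i := by
  simp [pre]

lemma mem_branches_iff {T : Set (List Bool)} {x : ℕ → Bool} :
    x ∈ branches T ↔ ∀ n, pre x n ∈ T := Iff.rfl

lemma branches_mono {T Q : Set (List Bool)} (h : Q ⊆ T) : branches Q ⊆ branches T :=
  fun _ hx n => h (hx n)

lemma prefix_pre_iff {x : ℕ → Bool} {t : List Bool} {n : ℕ} (h : t.length ≤ n) :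
    t <+: pre x n ↔ t = pre x t.length := by
  rw [List.prefix_iff_eq_take, pre_take x h]

-- subtree and basic perfect tree lemmas
variable {T : Set (List Bool)}

lemma nil_mem (hT : IsPerfectTree T) : [] ∈ T := by
  obtain ⟨⟨t, ht⟩, hdc, _⟩ := hT
  simpa using hdc t ht 0

lemma pre_zero (x : ℕ → Bool) : pre x 0 = [] := by simp [pre]

lemma mem_of_prefix (hT : IsPerfectTree T) {u t : List Bool} (h : u <+: t) (ht : t ∈ T) :
    u ∈ T := by
  obtain ⟨s, rfl⟩ := h
  simpa [List.take_left] using hT.2.1 _ ht u.length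

/-- the subtree of nodes comparable with `t` -/
def subtreeAt (T : Set (List Bool)) (t : List Bool) : Set (List Bool) :=
  {u | u ∈ T ∧ (u <+: t ∨ t <+: u)}

lemma subtreeAt_subset (T : Set (List Bool)) (t : List Bool) : subtreeAt T t ⊆ T :=
  fun _ h => h.1

lemma isPerfect_subtreeAt (hT : IsPerfectTree T) {t : List Bool} (ht : t ∈ T) :
    IsPerfectTree (subtreeAt T t) := by
  refine ⟨⟨t, ht, Or.inr (List.prefix_refl t)⟩, ?_, ?_⟩
  · rintro u ⟨hu, hc⟩ n
    refine ⟨hT.2.1 u hu n, ?_⟩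
    rcases hc with h | h
    · exact Or.inl ((List.take_prefix n u).trans h)
    · rcases le_or_gt t.length n with hn | hn
      · right
        obtain ⟨s, rfl⟩ := h
        exact (List.prefix_iff_eq_take.2 (by rw [List.take_take, min_eq_left hn, List.take_left]))
      · left
        obtain ⟨s, rfl⟩ := h
        rw [List.take_append_of_le_length hn.le]
        exact (List.take_prefix n t).trans (List.prefix_refl t)
  · rintro u ⟨hu, hc⟩
    have : ∃ v, v ∈ T ∧ u <+: v ∧ t <+: v := by
      rcases hc with h | h
      · exact ⟨t, ht, h, List.prefix_refl t⟩
      · exact ⟨u, hu, List.prefix_refl u, h⟩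
    obtain ⟨v, hv, huv, htv⟩ := this
    obtain ⟨s, hs, hvs, hs0, hs1⟩ := hT.2.2 v hv
    have hts : t <+: s := htv.trans hvs
    refine ⟨s, ⟨hs, Or.inr hts⟩, huv.trans hvs, ⟨hs0, Or.inr (hts.trans (by simp))⟩,
      ⟨hs1, Or.inr (hts.trans (by simp))⟩⟩

lemma branches_subtreeAt_extends {t : List Bool} {x : ℕ → Bool}
    (hx : x ∈ branches (subtreeAt T t)) : pre x t.length = t := by
  have h := hx t.length
  rcases h.2 with h' | h'
  · exact (h'.eq_of_length_le (by simp)).symm ▸ (h'.eq_of_length_le (by simp))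
  · exact ((h'.eq_of_length_le (by simp)).symm)

lemma getD_of_prefix {l₁ l₂ : List Bool} (h : l₁ <+: l₂) {i : ℕ} (hi : i < l₁.length) :
    l₂.getD i false = l₁.getD i false := by
  have h2 : i < l₂.length := lt_of_lt_of_le hi h.length_le
  rw [List.getD_eq_getElem?_getD, List.getElem?_eq_getElem h2,
    List.getD_eq_getElem?_getD, List.getElem?_eq_getElem hi]
  exact congrArg (fun a => (some a).getD false) (h.getElem hi).symm

lemma getD_eq_getElem' {l : List Bool} {i : ℕ} (hi : i < l.length) :
    l.getD i false = l[i] := by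
  rw [List.getD_eq_getElem?_getD, List.getElem?_eq_getElem hi]; rfl

/-- Cantor scheme embedding into the branches of a perfect tree. -/
lemma exists_branch_embedding (hT : IsPerfectTree T) :
    ∃ g : (ℕ → Bool) → (ℕ → Bool), Function.Injective g ∧ ∀ σ, g σ ∈ branches T := by
  classical
  set sp : List Bool → List Bool := fun t =>
    if h : t ∈ T then (hT.2.2 t h).choose else [] with hsp
  have hsp1 : ∀ t ∈ T, sp t ∈ T ∧ t <+: sp t ∧ ∀ b, sp t ++ [b] ∈ T := by
    intro t ht
    obtain ⟨hs, hpre, h0, h1⟩ := (hT.2.2 t ht).choose_spec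
    refine ⟨by simp [hsp, ht, hs], by simp [hsp, ht, hpre], ?_⟩
    intro b; cases b <;> simp [hsp, ht, h0, h1]
  set ch : (ℕ → Bool) → ℕ → List Bool := fun σ =>
    fun n => Nat.rec (sp []) (fun n c => sp (c ++ [σ n])) n with hch
  have ch_succ : ∀ σ n, ch σ (n+1) = sp (ch σ n ++ [σ n]) := fun _ _ => rfl
  have ch_inv : ∀ σ n, ch σ n ∈ T ∧ (∀ b, ch σ n ++ [b] ∈ T) := by
    intro σ n
    induction n with
    | zero =>
      obtain ⟨h1, _, h3⟩ := hsp1 [] (nil_mem hT)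
      exact ⟨h1, h3⟩
    | succ n ih =>
      obtain ⟨h1, _, h3⟩ := hsp1 (ch σ n ++ [σ n]) (ih.2 (σ n))
      exact ⟨h1, h3⟩
  have ch_pre_succ : ∀ σ n, ch σ n ++ [σ n] <+: ch σ (n+1) := by
    intro σ n
    rw [ch_succ]
    exact (hsp1 _ ((ch_inv σ n).2 (σ n))).2.1
  have ch_pre : ∀ σ {m n : ℕ}, m ≤ n → ch σ m <+: ch σ n := by
    intro σ m n h
    induction n with
    | zero => simp [Nat.le_zero.1 h]
    | succ n ih =>
      rcases Nat.lt_or_ge m (n+1) with h' | h'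
      · exact (ih (Nat.lt_succ_iff.1 h')).trans
          ((List.prefix_append (ch σ n) [σ n]).trans (ch_pre_succ σ n))
      · have : m = n + 1 := le_antisymm h h'
        simp [this]
  have ch_len : ∀ σ n, n ≤ (ch σ n).length := by
    intro σ n
    induction n with
    | zero => simp
    | succ n ih =>
      have := (ch_pre_succ σ n).length_le
      simp only [List.length_append, List.length_cons, List.length_nil] at this
      omega
  have ch_congr : ∀ {σ τ : ℕ → Bool} (n : ℕ), (∀ i < n, σ i = τ i) → ch σ n = ch τ n := by
    intro σ τ n h
    induction n with
    | zero => rfl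
    | succ n ih =>
      rw [ch_succ, ch_succ, ih (fun i hi => h i (hi.trans (Nat.lt_succ_self n))),
        h n (Nat.lt_succ_self n)]
  have key : ∀ (ρ : ℕ → Bool) (n : ℕ),
      (fun i => (ch ρ (i+1)).getD i false) (ch ρ n).length = ρ n := by
    intro ρ n
    set L := (ch ρ n).length with hL
    have hnL : n ≤ L := ch_len ρ n
    have h1 : ch ρ n ++ [ρ n] <+: ch ρ (n+1) := ch_pre_succ ρ n
    have h2 : ch ρ (n+1) <+: ch ρ (L+1) := ch_pre ρ (Nat.succ_le_succ hnL)
    have h3 : ch ρ n ++ [ρ n] <+: ch ρ (L+1) := h1.trans h2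
    have h4 : L < (ch ρ n ++ [ρ n]).length := by simp [hL]
    show (ch ρ (L+1)).getD L false = ρ n
    rw [getD_of_prefix h3 h4, getD_eq_getElem' h4]
    exact List.getElem_concat_length rfl _
  have pre_eq : ∀ (σ : ℕ → Bool) (m : ℕ),
      pre (fun i => (ch σ (i+1)).getD i false) m = (ch σ m).take m := by
    intro σ m
    apply List.ext_getElem
    · simp [List.length_take, Nat.min_eq_left (ch_len σ m)]
    · intro i h1 h2
      have him : i < m := by simpa using h1
      rw [pre_getElem _ him]
      rw [List.getElem_take]
      have hpre : ch σ (i+1) <+: ch σ m := ch_pre σ him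
      have hi1 : i < (ch σ (i+1)).length := lt_of_lt_of_le (Nat.lt_succ_self i) (ch_len σ (i+1))
      rw [← getD_eq_getElem' (lt_of_lt_of_le hi1 hpre.length_le), getD_of_prefix hpre hi1,
        getD_eq_getElem' hi1]
  refine ⟨fun σ i => (ch σ (i+1)).getD i false, ?_, ?_⟩
  · -- injective
    intro σ τ hgeq
    by_contra hne
    have hex : ∃ n, σ n ≠ τ n := by
      by_contra h; push_neg at h; exact hne (funext h)
    set n := Nat.find hex with hn
    have hlt : ∀ i < n, σ i = τ i := fun i hi => by
      have := Nat.find_min hex hi; simpa using this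
    have hchEq : ch σ n = ch τ n := ch_congr n hlt
    have e1 := key σ n
    have e2 := key τ n
    rw [hchEq] at e1
    have e3 := congrFun hgeq ((ch τ n).length)
    exact Nat.find_spec hex (e1.symm.trans (e3.trans e2))
  · -- branches
    intro σ m
    show pre (fun i => (ch σ (i+1)).getD i false) m ∈ T
    rw [pre_eq σ m]
    exact hT.2.1 _ (ch_inv σ m).1 m

lemma exists_two_branches (hT : IsPerfectTree T) :
    ∃ x y, x ∈ branches T ∧ y ∈ branches T ∧ x ≠ y := by
  obtain ⟨g, hg, hgb⟩ := exists_branch_embedding hT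
  refine ⟨g (fun _ => false), g (fun _ => true), hgb _, hgb _, ?_⟩
  intro h
  have := hg h
  have := congrFun this 0
  simp at this

lemma branches_nonempty (hT : IsPerfectTree T) : (branches T).Nonempty := by
  obtain ⟨x, _, hx, _⟩ := exists_two_branches hT
  exact ⟨x, hx⟩


lemma eq_of_comparable_of_length {u v : List Bool} (h : u <+: v ∨ v <+: u)
    (hl : u.length = v.length) : u = v := by
  rcases h with h | h
  · exact h.eq_of_length_le hl.ge
  · exact (h.eq_of_length_le hl.le).symm

lemma pre_getD (x : ℕ → Bool) {n i : ℕ} (h : i < n) : (pre x n).getD i false = x i := by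
  rw [getD_eq_getElem' (by simpa using h)]
  exact pre_getElem x h

section Fusion

/-- invariant for the trees occurring in the fusion -/
def Good (P₀ P : Set (List Bool)) (t : List Bool) : Prop :=
  IsPerfectTree P ∧ P ⊆ P₀ ∧ t ∈ P ∧ ∀ u ∈ P, u <+: t ∨ t <+: u

lemma branch_extends {P : Set (List Bool)} {t : List Bool}
    (hc : ∀ u ∈ P, u <+: t ∨ t <+: u) {x : ℕ → Bool} (hx : x ∈ branches P) :
    pre x t.length = t :=
  eq_of_comparable_of_length (hc _ (hx t.length)) (by simp)

/-- data for one step of the fusion -/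
structure StepRes where
  T : Bool → Set (List Bool)
  st : Bool → List Bool
  Q : Bool → Set (List Bool)

instance : Inhabited StepRes := ⟨⟨fun _ => ∅, fun _ => [], fun _ => ∅⟩⟩

def StepGood (P₀ : Set (List Bool)) (Rel : ℕ → Set (List Bool) → Set (List Bool) → Prop)
    (k : ℕ) (P : Set (List Bool)) (t : List Bool) (r : StepRes) : Prop :=
  (∀ b, Good P₀ (r.T b) (r.st b)) ∧ (∀ b, r.T b ⊆ P) ∧
  Rel k (r.Q false) (r.Q true) ∧ (∀ b, branches (r.T b) ⊆ branches (r.Q b)) ∧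
  ∃ u c, t <+: u ∧ r.st false = u ++ [c] ∧ r.st true = u ++ [!c]

variable {P₀ : Set (List Bool)} {Rel : ℕ → Set (List Bool) → Set (List Bool) → Prop}

lemma stepGood_stem_len {k P t r} (h : StepGood P₀ Rel k P t r) (b : Bool) :
    t.length < (r.st b).length := by
  obtain ⟨u, c, htu, h0, h1⟩ := h.2.2.2.2
  have := htu.length_le
  cases b
  · rw [h0]; simp; omega
  · rw [h1]; simp; omega

lemma stepGood_stem_prefix {k P t r} (h : StepGood P₀ Rel k P t r) (b : Bool) :
    t <+: r.st b := by
  obtain ⟨u, c, htu, h0, h1⟩ := h.2.2.2.2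
  cases b
  · rw [h0]; exact htu.trans (List.prefix_append u [c])
  · rw [h1]; exact htu.trans (List.prefix_append u [!c])

lemma stepGood_stem_ne {k P t r} (h : StepGood P₀ Rel k P t r) :
    r.st false ≠ r.st true := by
  obtain ⟨u, c, htu, h0, h1⟩ := h.2.2.2.2
  rw [h0, h1]
  intro hcontra
  have := List.append_inj_right hcontra rfl
  simp at this

lemma step_exists (hstep : ∀ k P, IsPerfectTree P → P ⊆ P₀ →
      ∃ Q₀ Q₁, IsPerfectTree Q₀ ∧ IsPerfectTree Q₁ ∧ Q₀ ⊆ P ∧ Q₁ ⊆ P ∧ Rel k Q₀ Q₁)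
    (k : ℕ) {P : Set (List Bool)} {t : List Bool} (h : Good P₀ P t) :
    ∃ r, StepGood P₀ Rel k P t r := by
  classical
  obtain ⟨hPperf, hPsub, htP, hcomp⟩ := h
  obtain ⟨Q₀, Q₁, hQ₀, hQ₁, hQ₀P, hQ₁P, hrel⟩ := hstep k P hPperf hPsub
  obtain ⟨x, hx⟩ := branches_nonempty hQ₀
  obtain ⟨y₁, y₂, hy₁, hy₂, hy12⟩ := exists_two_branches hQ₁
  obtain ⟨y, hy, hxy⟩ : ∃ y, y ∈ branches Q₁ ∧ x ≠ y := by
    by_cases hxy : x = y₁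
    · exact ⟨y₂, hy₂, by rw [hxy]; exact hy12⟩
    · exact ⟨y₁, hy₁, hxy⟩
  have hxP : x ∈ branches P := branches_mono hQ₀P hx
  have hyP : y ∈ branches P := branches_mono hQ₁P hy
  have hxt : pre x t.length = t := branch_extends hcomp hxP
  have hyt : pre y t.length = t := branch_extends hcomp hyP
  have hex : ∃ m, x m ≠ y m := by
    by_contra hcon; push_neg at hcon; exact hxy (funext hcon)
  set m := Nat.find hex with hm
  have hagree : ∀ i < m, x i = y i := fun i hi => by
    have := Nat.find_min hex hi; simpa using this
  have htm : t.length ≤ m := by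
    by_contra hcon
    push_neg at hcon
    apply Nat.find_spec hex
    show x m = y m
    have e1 : (pre x t.length).getD m false = x m := pre_getD x hcon
    have e2 : (pre y t.length).getD m false = y m := pre_getD y hcon
    rw [← e1, ← e2, hxt, hyt]
  have hprexy : pre x m = pre y m := by
    apply List.ext_getElem (by simp)
    intro i h1 h2
    have him : i < m := by simpa using h1
    rw [pre_getElem x him, pre_getElem y him, hagree i him]
  have hym : y m = !(x m) := by
    have := Nat.find_spec hex
    cases hbx : x m <;> cases hby : y m <;> simp_all
  set u := pre x m with hu
  have htpre : t <+: u := by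
    rw [← hxt, hu]; exact pre_prefix x htm
  have hst0 : pre x (m+1) = u ++ [x m] := pre_succ x m
  have hst1 : pre y (m+1) = u ++ [!(x m)] := by
    rw [pre_succ y m, ← hym, hprexy]
  set QQ : Bool → Set (List Bool) := fun b => bif b then Q₁ else Q₀ with hQQ
  set st : Bool → List Bool := fun b => bif b then pre y (m+1) else pre x (m+1) with hstd
  have hstmem : ∀ b, st b ∈ QQ b := by
    intro b; cases b
    · exact hx (m+1)
    · exact hy (m+1)
  have hQQperf : ∀ b, IsPerfectTree (QQ b) := by intro b; cases b <;> assumption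
  have hQQP : ∀ b, QQ b ⊆ P := by intro b; cases b <;> assumption
  refine ⟨⟨fun b => subtreeAt (QQ b) (st b), st, QQ⟩, ?_, ?_, ?_, ?_, ?_⟩
  · intro b
    refine ⟨isPerfect_subtreeAt (hQQperf b) (hstmem b), ?_, ?_, ?_⟩
    · exact (subtreeAt_subset _ _).trans ((hQQP b).trans hPsub)
    · exact ⟨hstmem b, Or.inr (List.prefix_refl _)⟩
    · intro v hv; exact hv.2
  · intro b
    exact (subtreeAt_subset _ _).trans (hQQP b)
  · exact hrel
  · intro b
    exact branches_mono (subtreeAt_subset _ _)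
  · exact ⟨u, x m, htpre, hst0, hst1⟩

variable (P₀ Rel)

open Classical in
/-- choice of a fusion step -/
noncomputable def sres (k : ℕ) (P : Set (List Bool)) (t : List Bool) : StepRes :=
  if h : ∃ r, StepGood P₀ Rel k P t r then h.choose else default

/-- the fusion scheme: level-`k` tree and stem indexed by a branch-template `σ` -/
noncomputable def Fam (k : ℕ) (σ : ℕ → Bool) : Set (List Bool) × List Bool :=
  Nat.rec (P₀, [])
    (fun k p => ((sres P₀ Rel k p.1 p.2).T (σ k), (sres P₀ Rel k p.1 p.2).st (σ k))) k

variable {P₀ Rel}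

lemma Fam_zero (σ : ℕ → Bool) : Fam P₀ Rel 0 σ = (P₀, []) := rfl

lemma Fam_succ (k : ℕ) (σ : ℕ → Bool) :
    Fam P₀ Rel (k+1) σ =
      ((sres P₀ Rel k (Fam P₀ Rel k σ).1 (Fam P₀ Rel k σ).2).T (σ k),
       (sres P₀ Rel k (Fam P₀ Rel k σ).1 (Fam P₀ Rel k σ).2).st (σ k)) := rfl

variable (hP₀ : IsPerfectTree P₀)
variable (hstep : ∀ k P, IsPerfectTree P → P ⊆ P₀ →
      ∃ Q₀ Q₁, IsPerfectTree Q₀ ∧ IsPerfectTree Q₁ ∧ Q₀ ⊆ P ∧ Q₁ ⊆ P ∧ Rel k Q₀ Q₁)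

include hstep

lemma sres_good (k : ℕ) {P : Set (List Bool)} {t : List Bool} (h : Good P₀ P t) :
    StepGood P₀ Rel k P t (sres P₀ Rel k P t) := by
  have hex := step_exists hstep k h
  rw [sres, dif_pos hex]
  exact hex.choose_spec

include hP₀

lemma fam_good (k : ℕ) (σ : ℕ → Bool) : Good P₀ (Fam P₀ Rel k σ).1 (Fam P₀ Rel k σ).2 := by
  induction k with
  | zero =>
    exact ⟨hP₀, subset_rfl, nil_mem hP₀, fun u _ => Or.inr (List.nil_prefix)⟩
  | succ k ih =>
    rw [Fam_succ]
    exact (sres_good hstep k ih).1 (σ k)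

omit hP₀ hstep in
lemma fam_congr {σ τ : ℕ → Bool} (k : ℕ) (h : ∀ i < k, σ i = τ i) :
    Fam P₀ Rel k σ = Fam P₀ Rel k τ := by
  induction k with
  | zero => rfl
  | succ k ih =>
    rw [Fam_succ, Fam_succ, ih (fun i hi => h i (hi.trans (Nat.lt_succ_self k))),
      h k (Nat.lt_succ_self k)]

lemma fam_sub_succ (k : ℕ) (σ : ℕ → Bool) :
    (Fam P₀ Rel (k+1) σ).1 ⊆ (Fam P₀ Rel k σ).1 := by
  rw [Fam_succ]
  exact (sres_good hstep k (fam_good hP₀ hstep k σ)).2.1 (σ k)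

lemma fam_sub {m k : ℕ} (h : m ≤ k) (σ : ℕ → Bool) :
    (Fam P₀ Rel k σ).1 ⊆ (Fam P₀ Rel m σ).1 := by
  induction k with
  | zero => rw [Nat.le_zero.1 h]
  | succ k ih =>
    rcases Nat.lt_or_ge m (k+1) with h' | h'
    · exact (fam_sub_succ hP₀ hstep k σ).trans (ih (Nat.lt_succ_iff.1 h'))
    · rw [le_antisymm h h']

lemma fam_stem_prefix_succ (k : ℕ) (σ : ℕ → Bool) :
    (Fam P₀ Rel k σ).2 <+: (Fam P₀ Rel (k+1) σ).2 := by
  have := stepGood_stem_prefix (sres_good hstep k (fam_good hP₀ hstep k σ)) (σ k)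
  rw [Fam_succ]
  exact this

lemma fam_stem_prefix {m k : ℕ} (h : m ≤ k) (σ : ℕ → Bool) :
    (Fam P₀ Rel m σ).2 <+: (Fam P₀ Rel k σ).2 := by
  induction k with
  | zero => rw [Nat.le_zero.1 h]
  | succ k ih =>
    rcases Nat.lt_or_ge m (k+1) with h' | h'
    · exact (ih (Nat.lt_succ_iff.1 h')).trans (fam_stem_prefix_succ hP₀ hstep k σ)
    · rw [le_antisymm h h']

lemma fam_stem_len (k : ℕ) (σ : ℕ → Bool) : k ≤ ((Fam P₀ Rel k σ).2).length := by
  induction k with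
  | zero => simp
  | succ k ih =>
    have h := stepGood_stem_len (sres_good hstep k (fam_good hP₀ hstep k σ)) (σ k)
    have : (Fam P₀ Rel (k+1) σ).2 =
        (sres P₀ Rel k (Fam P₀ Rel k σ).1 (Fam P₀ Rel k σ).2).st (σ k) := by rw [Fam_succ]
    rw [this]
    omega

lemma fam_stems_incomp {σ τ : ℕ → Bool} {j k : ℕ} (hjk : j < k)
    (hagree : ∀ i < j, σ i = τ i) (hne : σ j ≠ τ j) :
    ¬((Fam P₀ Rel k σ).2 <+: (Fam P₀ Rel k τ).2 ∨ (Fam P₀ Rel k τ).2 <+: (Fam P₀ Rel k σ).2) := by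
  have hbase : ¬((Fam P₀ Rel (j+1) σ).2 <+: (Fam P₀ Rel (j+1) τ).2 ∨
      (Fam P₀ Rel (j+1) τ).2 <+: (Fam P₀ Rel (j+1) σ).2) := by
    have hEq : Fam P₀ Rel j σ = Fam P₀ Rel j τ := fam_congr j hagree
    have hg := sres_good hstep (Rel := Rel) j (fam_good hP₀ hstep j σ)
    set r := sres P₀ Rel j (Fam P₀ Rel j σ).1 (Fam P₀ Rel j σ).2 with hr
    have e1 : (Fam P₀ Rel (j+1) σ).2 = r.st (σ j) := by rw [Fam_succ]
    have e2 : (Fam P₀ Rel (j+1) τ).2 = r.st (τ j) := by rw [Fam_succ, ← hEq]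
    obtain ⟨u, c, _, h0, h1⟩ := hg.2.2.2.2
    have hlen : (r.st (σ j)).length = (r.st (τ j)).length := by
      cases hσ : σ j <;> cases hτ : τ j <;> simp [h0, h1]
    have hnee : r.st (σ j) ≠ r.st (τ j) := by
      have hd := stepGood_stem_ne hg
      cases hσ : σ j <;> cases hτ : τ j
      · exact absurd (hσ.trans hτ.symm) hne
      · exact hd
      · exact hd.symm
      · exact absurd (hσ.trans hτ.symm) hne
    rw [e1, e2]
    intro hcomp
    exact hnee (eq_of_comparable_of_length hcomp hlen)
  intro hcomp
  apply hbase
  have p1 : (Fam P₀ Rel (j+1) σ).2 <+: (Fam P₀ Rel k σ).2 := fam_stem_prefix hP₀ hstep hjk σ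
  have p2 : (Fam P₀ Rel (j+1) τ).2 <+: (Fam P₀ Rel k τ).2 := fam_stem_prefix hP₀ hstep hjk τ
  rcases hcomp with h | h
  · exact List.prefix_or_prefix_of_prefix (p1.trans h) p2
  · exact (List.prefix_or_prefix_of_prefix (p2.trans h) p1).symm

lemma fam_eq_of_stems_comparable {σ τ : ℕ → Bool} (k : ℕ)
    (h : (Fam P₀ Rel k σ).2 <+: (Fam P₀ Rel k τ).2 ∨ (Fam P₀ Rel k τ).2 <+: (Fam P₀ Rel k σ).2) :
    Fam P₀ Rel k σ = Fam P₀ Rel k τ := by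
  by_cases hagree : ∀ i < k, σ i = τ i
  · exact fam_congr k hagree
  · exfalso
    push_neg at hagree
    have hex : ∃ j, j < k ∧ σ j ≠ τ j := hagree
    classical
    obtain ⟨hjk, hne⟩ := Nat.find_spec hex
    refine fam_stems_incomp hP₀ hstep hjk (fun i hi => ?_) hne h
    by_contra hcon
    exact Nat.find_min hex hi ⟨hi.trans hjk, hcon⟩

variable (P₀ Rel) in
/-- the fusion tree -/
def FusR : Set (List Bool) := {u | ∀ k, ∃ σ, u ∈ (Fam P₀ Rel k σ).1}

omit hP₀ hstep in
lemma fusR_sub_P₀ : FusR P₀ Rel ⊆ P₀ := by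
  intro u hu
  obtain ⟨σ, hσ⟩ := hu 0
  exact hσ

lemma fusR_mem_of_prefix {u v : List Bool} (h : v <+: u) (hu : u ∈ FusR P₀ Rel) :
    v ∈ FusR P₀ Rel := by
  intro k
  obtain ⟨σ, hσ⟩ := hu k
  exact ⟨σ, mem_of_prefix (fam_good hP₀ hstep k σ).1 h hσ⟩

lemma fam_stem_mem_fusR (j : ℕ) (σ : ℕ → Bool) : (Fam P₀ Rel j σ).2 ∈ FusR P₀ Rel := by
  intro k
  rcases Nat.le_total k j with h | h
  · exact ⟨σ, fam_sub hP₀ hstep h σ (fam_good hP₀ hstep j σ).2.2.1⟩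
  · exact ⟨σ, mem_of_prefix (fam_good hP₀ hstep k σ).1
      (fam_stem_prefix hP₀ hstep h σ) (fam_good hP₀ hstep k σ).2.2.1⟩

lemma prefix_stem_of_short {k : ℕ} {σ : ℕ → Bool} {t : List Bool}
    (ht : t ∈ (Fam P₀ Rel k σ).1) (hlen : t.length ≤ (Fam P₀ Rel k σ).2.length) :
    t <+: (Fam P₀ Rel k σ).2 := by
  rcases (fam_good hP₀ hstep k σ).2.2.2 t ht with h | h
  · exact h
  · rw [h.eq_of_length_le hlen]

lemma fusR_perfect : IsPerfectTree (FusR P₀ Rel) := by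
  refine ⟨⟨[], ?_⟩, ?_, ?_⟩
  · have := fam_stem_mem_fusR hP₀ hstep 0 (fun _ => false)
    simpa [Fam_zero] using this
  · intro t ht n
    exact fusR_mem_of_prefix hP₀ hstep (List.take_prefix n t) ht
  · intro t ht
    obtain ⟨σ, hσ⟩ := ht (t.length + 1)
    set k := t.length + 1 with hk
    have hstemlen : k ≤ (Fam P₀ Rel k σ).2.length := fam_stem_len hP₀ hstep k σ
    have htstem : t <+: (Fam P₀ Rel k σ).2 :=
      prefix_stem_of_short hP₀ hstep hσ (by omega)
    have hg := sres_good hstep (Rel := Rel) k (fam_good hP₀ hstep k σ)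
    obtain ⟨u, c, hstemu, h0, h1⟩ := hg.2.2.2.2
    set r := sres P₀ Rel k (Fam P₀ Rel k σ).1 (Fam P₀ Rel k σ).2 with hr
    -- the two children's stems are u ++ [c] and u ++ [!c]
    have hstem_b : ∀ b : Bool, r.st b ∈ FusR P₀ Rel := by
      intro b
      set σ' : ℕ → Bool := fun i => if i = k then b else σ i with hσ'
      have hcongr : Fam P₀ Rel k σ' = Fam P₀ Rel k σ :=
        fam_congr k (fun i hi => by simp [hσ', Nat.ne_of_lt hi])
      have : (Fam P₀ Rel (k+1) σ').2 = r.st b := by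
        rw [Fam_succ, hcongr]
        simp [hσ', hr]
      rw [← this]
      exact fam_stem_mem_fusR hP₀ hstep (k+1) σ'
    have hu0 : u ++ [c] ∈ FusR P₀ Rel := h0 ▸ hstem_b false
    have hu1 : u ++ [!c] ∈ FusR P₀ Rel := h1 ▸ hstem_b true
    refine ⟨u, ?_, htstem.trans hstemu, ?_, ?_⟩
    · exact fusR_mem_of_prefix hP₀ hstep (List.prefix_append u [c]) hu0
    · cases c
      · exact hu0
      · exact hu1
    · cases c
      · exact hu1
      · exact hu0

/-- every branch of the fusion tree determines a coherent branch through the scheme -/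
lemma fusR_branch_sigma {x : ℕ → Bool} (hx : x ∈ branches (FusR P₀ Rel)) :
    ∃ σ, ∀ k, x ∈ branches (Fam P₀ Rel k σ).1 := by
  classical
  have claim1 : ∀ k, ∃ σ, x ∈ branches (Fam P₀ Rel k σ).1 := by
    intro k
    have hchoice : ∀ n, ∃ σ, pre x n ∈ (Fam P₀ Rel k σ).1 := fun n => hx n k
    choose f hf using hchoice
    -- a bound on stem lengths at level k
    set B : ℕ := Finset.univ.sup
      (fun v : Fin k → Bool =>
        ((Fam P₀ Rel k (fun i => if h : i < k then v ⟨i, h⟩ else false)).2).length) with hB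
    have hbound : ∀ σ : ℕ → Bool, ((Fam P₀ Rel k σ).2).length ≤ B := by
      intro σ
      have : Fam P₀ Rel k σ =
          Fam P₀ Rel k (fun i => if h : i < k then σ i else false) :=
        fam_congr k (fun i hi => by simp [hi])
      rw [this]
      exact Finset.le_sup (f := fun v : Fin k → Bool =>
        ((Fam P₀ Rel k (fun i => if h : i < k then v ⟨i, h⟩ else false)).2).length)
        (Finset.mem_univ (fun i : Fin k => σ i))
    set n := B + 1 with hn
    set σs := f n with hσs
    have hstem : (Fam P₀ Rel k σs).2 <+: pre x n := by
      rcases (fam_good hP₀ hstep k σs).2.2.2 _ (hf n) with h | h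
    -- pre x n ∈ tree, comparable with stem
      · exfalso
        have h1 : (pre x n).length ≤ ((Fam P₀ Rel k σs).2).length := h.length_le
        rw [pre_length] at h1
        have h2 : n ≤ B := h1.trans (hbound σs)
        rw [hn] at h2
        exact Nat.not_succ_le_self B h2
      · exact h
    refine ⟨σs, ?_⟩
    intro m
    show pre x m ∈ _
    rcases Nat.le_total m n with hmn | hmn
    · have : pre x m = (pre x n).take m := (pre_take x hmn).symm
      rw [this]
      exact (fam_good hP₀ hstep k σs).1.2.1 _ (hf n) m
    · -- m ≥ n
      have hm := hf m
      rcases (fam_good hP₀ hstep k (f m)).2.2.2 _ hm with h | h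
      · -- pre x m <+: stem (f m)
        have hcomp : (Fam P₀ Rel k σs).2 <+: (Fam P₀ Rel k (f m)).2 :=
          (hstem.trans (pre_prefix x hmn)).trans h
        have heq : Fam P₀ Rel k σs = Fam P₀ Rel k (f m) :=
          fam_eq_of_stems_comparable hP₀ hstep k (Or.inl hcomp)
        rw [heq]
        exact hm
      · -- stem (f m) <+: pre x m
        have hx1 : (Fam P₀ Rel k σs).2 <+: pre x m := hstem.trans (pre_prefix x hmn)
        have hcomp := List.prefix_or_prefix_of_prefix hx1 h
        have heq : Fam P₀ Rel k σs = Fam P₀ Rel k (f m) :=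
          fam_eq_of_stems_comparable hP₀ hstep k hcomp
        rw [heq]
        exact hm
  -- uniqueness at each level
  have uniq : ∀ (k : ℕ) (σ τ : ℕ → Bool), x ∈ branches (Fam P₀ Rel k σ).1 →
      x ∈ branches (Fam P₀ Rel k τ).1 → Fam P₀ Rel k σ = Fam P₀ Rel k τ := by
    intro k σ τ hσ hτ
    have e1 : pre x ((Fam P₀ Rel k σ).2).length = (Fam P₀ Rel k σ).2 :=
      branch_extends (fam_good hP₀ hstep k σ).2.2.2 hσ
    have e2 : pre x ((Fam P₀ Rel k τ).2).length = (Fam P₀ Rel k τ).2 :=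
      branch_extends (fam_good hP₀ hstep k τ).2.2.2 hτ
    apply fam_eq_of_stems_comparable hP₀ hstep k
    rcases Nat.le_total ((Fam P₀ Rel k σ).2).length ((Fam P₀ Rel k τ).2).length with h | h
    · left; rw [← e1, ← e2]; exact pre_prefix x h
    · right; rw [← e1, ← e2]; exact pre_prefix x h
  choose g hg using claim1
  refine ⟨fun k => g (k+1) k, ?_⟩
  intro k
  induction k with
  | zero =>
    intro n
    exact fusR_sub_P₀ (hx n)
  | succ k ih =>
    have h1 : x ∈ branches (Fam P₀ Rel k (g (k+1))).1 :=
      branches_mono (fam_sub_succ hP₀ hstep k (g (k+1))) (hg (k+1))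
    have heq : Fam P₀ Rel k (fun j => g (j+1) j) = Fam P₀ Rel k (g (k+1)) :=
      uniq k _ _ ih h1
    have : Fam P₀ Rel (k+1) (fun j => g (j+1) j) = Fam P₀ Rel (k+1) (g (k+1)) := by
      rw [Fam_succ, Fam_succ, heq]
    rw [this]
    exact hg (k+1)

theorem fusion_main :
    ∃ R, IsPerfectTree R ∧ R ⊆ P₀ ∧
      (∀ x ∈ branches R, ∀ k, ∃ Q₀ Q₁, Rel k Q₀ Q₁ ∧ (x ∈ branches Q₀ ∨ x ∈ branches Q₁)) ∧
      (∀ x ∈ branches R, ∀ y ∈ branches R, x ≠ y →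
        ∃ k Q₀ Q₁, Rel k Q₀ Q₁ ∧
          ((x ∈ branches Q₀ ∧ y ∈ branches Q₁) ∨ (x ∈ branches Q₁ ∧ y ∈ branches Q₀))) := by
  classical
  refine ⟨FusR P₀ Rel, fusR_perfect hP₀ hstep, fusR_sub_P₀, ?_, ?_⟩
  · intro x hx k
    obtain ⟨σ, hσ⟩ := fusR_branch_sigma hP₀ hstep hx
    have hg := sres_good hstep (Rel := Rel) k (fam_good hP₀ hstep k σ)
    set r := sres P₀ Rel k (Fam P₀ Rel k σ).1 (Fam P₀ Rel k σ).2 with hr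
    have hx1 : x ∈ branches (r.T (σ k)) := by
      have := hσ (k+1)
      rwa [Fam_succ] at this
    have hx2 : x ∈ branches (r.Q (σ k)) := hg.2.2.2.1 (σ k) hx1
    refine ⟨r.Q false, r.Q true, hg.2.2.1, ?_⟩
    cases hb : σ k
    · left; rwa [hb] at hx2
    · right; rwa [hb] at hx2
  · intro x hx y hy hxy
    obtain ⟨σ, hσ⟩ := fusR_branch_sigma hP₀ hstep hx
    obtain ⟨τ, hτ⟩ := fusR_branch_sigma hP₀ hstep hy
    have hkex : ∃ k, σ k ≠ τ k := by
      by_contra hcon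
      push_neg at hcon
      apply hxy
      funext i
      have heq : Fam P₀ Rel (i+1) σ = Fam P₀ Rel (i+1) τ :=
        fam_congr (i+1) (fun j _ => hcon j)
      have hxs : pre x ((Fam P₀ Rel (i+1) σ).2).length = (Fam P₀ Rel (i+1) σ).2 :=
        branch_extends (fam_good hP₀ hstep (i+1) σ).2.2.2 (hσ (i+1))
      have hys : pre y ((Fam P₀ Rel (i+1) σ).2).length = (Fam P₀ Rel (i+1) σ).2 := by
        rw [heq]
        exact branch_extends (fam_good hP₀ hstep (i+1) τ).2.2.2 (hτ (i+1))
      have hilt : i < ((Fam P₀ Rel (i+1) σ).2).length :=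
        lt_of_lt_of_le (Nat.lt_succ_self i) (fam_stem_len hP₀ hstep (i+1) σ)
      calc x i = (pre x ((Fam P₀ Rel (i+1) σ).2).length).getD i false := (pre_getD x hilt).symm
        _ = (pre y ((Fam P₀ Rel (i+1) σ).2).length).getD i false := by rw [hxs, hys]
        _ = y i := pre_getD y hilt
    set k := Nat.find hkex with hkdef
    have hne : σ k ≠ τ k := Nat.find_spec hkex
    have hagree : ∀ i < k, σ i = τ i := fun i hi => by
      have := Nat.find_min hkex hi; simpa using this
    have heq : Fam P₀ Rel k σ = Fam P₀ Rel k τ := fam_congr k hagree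
    have hg := sres_good hstep (Rel := Rel) k (fam_good hP₀ hstep k σ)
    set r := sres P₀ Rel k (Fam P₀ Rel k σ).1 (Fam P₀ Rel k σ).2 with hr
    have hx1 : x ∈ branches (r.T (σ k)) := by
      have := hσ (k+1); rwa [Fam_succ] at this
    have hy1 : y ∈ branches (r.T (τ k)) := by
      have := hτ (k+1)
      rw [Fam_succ, ← heq] at this
      exact this
    have hx2 : x ∈ branches (r.Q (σ k)) := hg.2.2.2.1 (σ k) hx1
    have hy2 : y ∈ branches (r.Q (τ k)) := hg.2.2.2.1 (τ k) hy1
    refine ⟨k, r.Q false, r.Q true, hg.2.2.1, ?_⟩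
    cases hbσ : σ k <;> cases hbτ : τ k
    · exact absurd (hbσ.trans hbτ.symm) hne
    · left; rw [hbσ] at hx2; rw [hbτ] at hy2; exact ⟨hx2, hy2⟩
    · right; rw [hbσ] at hx2; rw [hbτ] at hy2; exact ⟨hx2, hy2⟩
    · exact absurd (hbσ.trans hbτ.symm) hne

end Fusion

section Bernstein

open Cardinal

noncomputable instance : Denumerable (List Bool) := Denumerable.ofEncodableOfInfinite (List Bool)

/-- any family of ≥ continuum-many points misses any small set in ≥ 2 points -/
lemma two_points_off {E : Set (ℕ → Bool)} (hE : #E < #(ℕ → Bool))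
    {g : (ℕ → Bool) → (ℕ → Bool)} (hg : Function.Injective g) :
    ∃ p q, p ≠ q ∧ p ∈ Set.range g ∧ q ∈ Set.range g ∧ p ∉ E ∧ q ∉ E := by
  classical
  set E' : Set (ℕ → Bool) := g ⁻¹' E with hE'
  have hE'small : #E' < #(ℕ → Bool) :=
    lt_of_le_of_lt (Cardinal.mk_preimage_of_injective g E hg) hE
  have h2 : ∃ p' q' : (ℕ → Bool), p' ≠ q' ∧ p' ∉ E' ∧ q' ∉ E' := by
    by_contra hcon
    push_neg at hcon
    -- then the complement of E' has at most one point
    have hsub : ∀ z : (ℕ → Bool), z ∉ E' → (Set.univ : Set (ℕ → Bool)) ⊆ E' ∪ {z} := by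
      intro z hz w _
      by_cases hw : w ∈ E'
      · exact Or.inl hw
      · right
        rcases eq_or_ne w z with h | h
        · exact h
        · exact absurd hz (by simpa using (hcon w z h hw))
    rcases (E' ᶜ).eq_empty_or_nonempty with hc | hc
    · -- complement empty : E' is everything, contradiction with smallness
      have huniv : E' = Set.univ := by
        rw [← Set.compl_empty_iff, hc]
      have : #(ℕ → Bool) ≤ #E' := by
        rw [huniv, Cardinal.mk_univ]
      exact absurd (this.trans_lt hE'small) (lt_irrefl _)
    · obtain ⟨z, hz⟩ := hc
      have := hsub z hz
      have hle : #(ℕ → Bool) ≤ #E' + 1 := by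
        calc #(ℕ → Bool) = #(Set.univ : Set (ℕ → Bool)) := Cardinal.mk_univ.symm
          _ ≤ #↥(E' ∪ {z}) := Cardinal.mk_le_mk_of_subset this
          _ ≤ #E' + #({z} : Set (ℕ → Bool)) := Cardinal.mk_union_le _ _
          _ = #E' + 1 := by rw [Cardinal.mk_singleton]
      have hlt : #E' + 1 < #(ℕ → Bool) :=
        Cardinal.add_lt_of_lt (Cardinal.aleph0_le_mk _) hE'small
          (lt_of_lt_of_le Cardinal.one_lt_aleph0 (Cardinal.aleph0_le_mk _))
      exact absurd (hle.trans_lt hlt) (lt_irrefl _)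
  obtain ⟨p', q', hpq, hp, hq⟩ := h2
  exact ⟨g p', g q', fun h => hpq (hg h), ⟨p', rfl⟩, ⟨q', rfl⟩, hp, hq⟩

/-- a Bernstein set relative to the perfect subtrees of `R` -/
lemma exists_bernstein {R : Set (List Bool)} (hR : IsPerfectTree R) :
    ∃ S : Set (ℕ → Bool), S ⊆ branches R ∧
      ∀ P, IsPerfectTree P → P ⊆ R →
        (S ∩ branches P).Nonempty ∧ (branches P \ S).Nonempty := by
  classical
  set ι := (ℕ → Bool)
  -- code subtrees of R by elements of ι
  set e : List Bool ≃ ℕ := Denumerable.eqv (List Bool) with he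
  set jfun : Set (List Bool) → ι := fun A n =>
    @decide (e.symm n ∈ A) (Classical.propDecidable _) with hjfun
  have hjinj : Function.Injective jfun := by
    intro A B h
    ext l
    have h2 := congrFun h (e l)
    have hiff := decide_eq_decide.mp h2
    rwa [Equiv.symm_apply_apply] at hiff
  -- the "tree coded by a": a surjection-like assignment
  set π : ι → Set (List Bool) := fun a =>
    if h : ∃ P : Set (List Bool), (IsPerfectTree P ∧ P ⊆ R) ∧ jfun P = a then h.choose else R
    with hπ
  have hπa : ∀ a, π a =
      if h : ∃ P : Set (List Bool), (IsPerfectTree P ∧ P ⊆ R) ∧ jfun P = a then h.choose else R :=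
    fun _ => rfl
  have hπgood : ∀ a, IsPerfectTree (π a) ∧ π a ⊆ R := by
    intro a
    rw [hπa a]
    by_cases h : ∃ P : Set (List Bool), (IsPerfectTree P ∧ P ⊆ R) ∧ jfun P = a
    · rw [dif_pos h]
      exact h.choose_spec.1
    · rw [dif_neg h]
      exact ⟨hR, subset_rfl⟩
  have hπsurj : ∀ P, IsPerfectTree P → P ⊆ R → ∃ a, π a = P := by
    intro P h1 h2
    refine ⟨jfun P, ?_⟩
    rw [hπa]
    have hex2 : ∃ Q : Set (List Bool), (IsPerfectTree Q ∧ Q ⊆ R) ∧ jfun Q = jfun P :=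
      ⟨P, ⟨h1, h2⟩, rfl⟩
    rw [dif_pos hex2]
    exact hjinj hex2.choose_spec.2
  -- well-order ι with small initial segments
  obtain ⟨rel, hwo, hord⟩ := Cardinal.ord_eq ι
  have hsmall : ∀ a : ι, #{b // rel b a} < #ι := by
    intro a
    rw [← Ordinal.card_typein (r := rel)]
    exact Cardinal.card_typein_lt (r := rel) a hord
  -- transfinite recursion
  have hwf : WellFounded rel := hwo.toIsWellFounded.wf
  set F : ∀ a : ι, (∀ b, rel b a → ι × ι) → ι × ι := fun a prev =>
    if h : ∃ p : ι × ι, (p.1 ∈ branches (π a) ∧ p.2 ∈ branches (π a) ∧ p.1 ≠ p.2 ∧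
        ∀ b (hb : rel b a), p.1 ≠ (prev b hb).1 ∧ p.1 ≠ (prev b hb).2 ∧
          p.2 ≠ (prev b hb).1 ∧ p.2 ≠ (prev b hb).2)
    then h.choose else ((fun _ => false), (fun _ => false)) with hF
  have hFa : ∀ a prev, F a prev =
      if h : ∃ p : ι × ι, (p.1 ∈ branches (π a) ∧ p.2 ∈ branches (π a) ∧ p.1 ≠ p.2 ∧
        ∀ b (hb : rel b a), p.1 ≠ (prev b hb).1 ∧ p.1 ≠ (prev b hb).2 ∧
          p.2 ≠ (prev b hb).1 ∧ p.2 ≠ (prev b hb).2)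
      then h.choose else ((fun _ => false), (fun _ => false)) := fun _ _ => rfl
  set f : ι → ι × ι := hwf.fix F with hf
  have hfeq : ∀ a, f a = F a (fun b _ => f b) := fun a => hwf.fix_eq F a
  have hex : ∀ a : ι, ∃ p : ι × ι, (p.1 ∈ branches (π a) ∧ p.2 ∈ branches (π a) ∧ p.1 ≠ p.2 ∧
      ∀ b (hb : rel b a), p.1 ≠ (f b).1 ∧ p.1 ≠ (f b).2 ∧
        p.2 ≠ (f b).1 ∧ p.2 ≠ (f b).2) := by
    intro a
    set E : Set ι := (Set.range fun b : {b // rel b a} => (f b.1).1) ∪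
      (Set.range fun b : {b // rel b a} => (f b.1).2) with hE
    have hEsmall : #E < #ι := by
      refine lt_of_le_of_lt (Cardinal.mk_union_le _ _) ?_
      exact Cardinal.add_lt_of_lt (Cardinal.aleph0_le_mk _)
        (lt_of_le_of_lt Cardinal.mk_range_le (hsmall a))
        (lt_of_le_of_lt Cardinal.mk_range_le (hsmall a))
    obtain ⟨g, hginj, hgbr⟩ := exists_branch_embedding (hπgood a).1
    obtain ⟨p, q, hpq, hp, hq, hpE, hqE⟩ := two_points_off hEsmall hginj
    obtain ⟨p', rfl⟩ := hp
    obtain ⟨q', rfl⟩ := hq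
    refine ⟨(g p', g q'), hgbr p', hgbr q', hpq, ?_⟩
    intro b hb
    refine ⟨?_, ?_, ?_, ?_⟩
    · intro hcon; exact hpE (Or.inl ⟨⟨b, hb⟩, hcon.symm⟩)
    · intro hcon; exact hpE (Or.inr ⟨⟨b, hb⟩, hcon.symm⟩)
    · intro hcon; exact hqE (Or.inl ⟨⟨b, hb⟩, hcon.symm⟩)
    · intro hcon; exact hqE (Or.inr ⟨⟨b, hb⟩, hcon.symm⟩)
  have hfspec : ∀ a : ι, (f a).1 ∈ branches (π a) ∧ (f a).2 ∈ branches (π a) ∧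
      (f a).1 ≠ (f a).2 ∧ ∀ b (hb : rel b a), (f a).1 ≠ (f b).1 ∧ (f a).1 ≠ (f b).2 ∧
        (f a).2 ≠ (f b).1 ∧ (f a).2 ≠ (f b).2 := by
    intro a
    rw [hfeq a, hFa, dif_pos (hex a)]
    exact (hex a).choose_spec
  refine ⟨{z | ∃ a, (f a).1 = z}, ?_, ?_⟩
  · rintro z ⟨a, rfl⟩
    exact branches_mono (hπgood a).2 (hfspec a).1
  · intro P hP hPR
    obtain ⟨a, rfl⟩ := hπsurj P hP hPR
    refine ⟨⟨(f a).1, ⟨a, rfl⟩, (hfspec a).1⟩, ⟨(f a).2, (hfspec a).2.1, ?_⟩⟩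
    rintro ⟨b, hb⟩
    rcases trichotomous_of rel b a with h | h | h
    · exact ((hfspec a).2.2.2 b h).2.2.1 hb.symm
    · rw [h] at hb
      exact (hfspec a).2.2.1 hb
    · exact ((hfspec b).2.2.2 a h).2.1 hb
end Bernstein

/-- `X` contains perfect subtrees below every perfect subtree of `P` -/
def Large (P : Set (List Bool)) (X : Set (ℕ → Bool)) : Prop :=
  ∀ P', IsPerfectTree P' → P' ⊆ P →
    ∃ P'', IsPerfectTree P'' ∧ P'' ⊆ P' ∧ branches P'' ⊆ X

end KP

open KP in
/-- No subset of `2^ω` which is not an (s⁰)-set admits a Kuratowski partition. -/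
theorem no_kuratowski_partition_sacks (A : Set (ℕ → Bool)) (hA : ¬ S0Set A) :
    ¬ ∃ 𝓕 : Set (Set (ℕ → Bool)),
        ⋃₀ 𝓕 = A ∧
        (∀ F ∈ 𝓕, ∀ G ∈ 𝓕, F ≠ G → Disjoint F G) ∧
        (∀ F ∈ 𝓕, S0Set F) ∧
        (∀ 𝓕' ⊆ 𝓕, MarczewskiS (⋃₀ 𝓕')) := by
  classical
  rintro ⟨𝓕, hUnion, hdisj, hs0, hs⟩
  rw [S0Set] at hA
  push_neg at hA
  obtain ⟨T, hT, hTprop⟩ := hA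
  -- A is an (s)-set
  have hAs : MarczewskiS A := by
    have := hs 𝓕 subset_rfl
    rwa [hUnion] at this
  obtain ⟨Q, hQ, hQT, hQalt⟩ := hAs T hT
  have hQA : branches Q ⊆ A := by
    rcases hQalt with h | h
    · exact h
    · exact absurd h (Set.nonempty_iff_ne_empty.mp (hTprop Q hQ hQT))
  -- the member of the partition containing a point
  set Fm : (ℕ → Bool) → Set (ℕ → Bool) := fun x =>
    if h : ∃ F, F ∈ 𝓕 ∧ x ∈ F then h.choose else ∅ with hFmdef
  have hFm : ∀ x ∈ A, Fm x ∈ 𝓕 ∧ x ∈ Fm x := by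
    intro x hx
    have hex : ∃ F, F ∈ 𝓕 ∧ x ∈ F := by
      rw [← hUnion] at hx
      obtain ⟨F, hF, hxF⟩ := hx
      exact ⟨F, hF, hxF⟩
    have : Fm x = hex.choose := by rw [hFmdef]; exact dif_pos hex
    rw [this]
    exact hex.choose_spec
  have hFm_uniq : ∀ x ∈ A, ∀ F ∈ 𝓕, x ∈ F → F = Fm x := by
    intro x hx F hF hxF
    by_contra hne
    exact (Set.disjoint_left.mp (hdisj F hF (Fm x) (hFm x hx).1 hne)) hxF (hFm x hx).2
  -- choice of a point in each member
  set c : Set (ℕ → Bool) → (ℕ → Bool) := fun F =>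
    if h : F.Nonempty then h.choose else (fun _ => false) with hcdef
  have hc : ∀ F : Set (ℕ → Bool), F.Nonempty → c F ∈ F := by
    intro F hF
    have : c F = hF.choose := by rw [hcdef]; exact dif_pos hF
    rw [this]
    exact hF.choose_spec
  have hc_inj : ∀ F ∈ 𝓕, ∀ G ∈ 𝓕, F.Nonempty → G.Nonempty → c F = c G → F = G := by
    intro F hF G hG hFne hGne hcFG
    by_contra hne
    exact (Set.disjoint_left.mp (hdisj F hF G hG hne)) (hc F hFne) (hcFG ▸ hc G hGne)
  have hFm_eq_of_c : ∀ x ∈ A, ∀ y ∈ A, c (Fm x) = c (Fm y) → Fm x = Fm y := by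
    intro x hx y hy h
    exact hc_inj _ (hFm x hx).1 _ (hFm y hy).1 ⟨x, (hFm x hx).2⟩ ⟨y, (hFm y hy).2⟩ h
  -- the coordinate sets
  set G : ℕ → Bool → Set (ℕ → Bool) := fun n b => ⋃₀ {F | F ∈ 𝓕 ∧ c F n = b} with hGdef
  have hGs : ∀ n b, MarczewskiS (G n b) := fun n b =>
    hs _ (fun F hF => hF.1)
  have bitmem : ∀ x ∈ A, ∀ n b, (x ∈ G n b ↔ c (Fm x) n = b) := by
    intro x hx n b
    constructor
    · rintro ⟨F, ⟨hF, hcF⟩, hxF⟩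
      rw [← hFm_uniq x hx F hF hxF]
      exact hcF
    · intro h
      exact ⟨Fm x, ⟨(hFm x hx).1, h⟩, (hFm x hx).2⟩
  have bitmem' : ∀ x ∈ A, ∀ n, x ∉ G n true → x ∈ G n false := by
    intro x hx n h
    rw [bitmem x hx n false]
    rw [bitmem x hx n true] at h
    cases hcb : c (Fm x) n
    · rfl
    · exact absurd hcb h
  by_cases hcase : ∃ P, IsPerfectTree P ∧ P ⊆ Q ∧ ∀ n, ∃ b, Large P (G n b)
  · -- Case A: all coordinates decided on P; fusion into a single member of the partition
    obtain ⟨P, hP, hPQ, hlarge⟩ := hcase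
    choose bb hbb using hlarge
    set RelA : ℕ → Set (List Bool) → Set (List Bool) → Prop :=
      fun k Q₀ Q₁ => branches Q₀ ⊆ G k (bb k) ∧ branches Q₁ ⊆ G k (bb k) with hRelA
    have hstepA : ∀ k P', IsPerfectTree P' → P' ⊆ P →
        ∃ Q₀ Q₁, IsPerfectTree Q₀ ∧ IsPerfectTree Q₁ ∧ Q₀ ⊆ P' ∧ Q₁ ⊆ P' ∧ RelA k Q₀ Q₁ := by
      intro k P' hP' hP'P
      obtain ⟨P'', hP'', hP''P', hP''G⟩ := hbb k P' hP' hP'P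
      exact ⟨P'', P'', hP'', hP'', hP''P', hP''P', hP''G, hP''G⟩
    obtain ⟨R, hRperf, hRP, hconcl1, _⟩ := fusion_main hP hstepA
    have hRA : branches R ⊆ A := fun x hx => hQA (branches_mono (hRP.trans hPQ) hx)
    have hbits : ∀ x ∈ branches R, ∀ k, c (Fm x) k = bb k := by
      intro x hx k
      obtain ⟨Q₀, Q₁, hrel, hor⟩ := hconcl1 x hx k
      rcases hor with h | h
      · exact (bitmem x (hRA hx) k (bb k)).mp (hrel.1 h)
      · exact (bitmem x (hRA hx) k (bb k)).mp (hrel.2 h)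
    obtain ⟨x₀, hx₀⟩ := branches_nonempty hRperf
    have hallF : ∀ x ∈ branches R, x ∈ Fm x₀ := by
      intro x hx
      have : c (Fm x) = c (Fm x₀) := by
        funext k
        rw [hbits x hx k, hbits x₀ hx₀ k]
      rw [← hFm_eq_of_c x (hRA hx) x₀ (hRA hx₀) this]
      exact (hFm x (hRA hx)).2
    obtain ⟨R', hR', hR'R, hR'F₀⟩ := hs0 (Fm x₀) (hFm x₀ (hRA hx₀)).1 R hRperf
    obtain ⟨x', hx'⟩ := branches_nonempty hR'
    have h1 : x' ∈ Fm x₀ := hallF x' (branches_mono hR'R hx')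
    have h2 : x' ∈ branches R' ∩ Fm x₀ := ⟨hx', h1⟩
    rw [hR'F₀] at h2
    exact h2
  · -- Case B: fusion into an injective transversal, then Bernstein
    have hcaseB : ∀ P, IsPerfectTree P → P ⊆ Q → ∃ n, ∀ b, ¬ Large P (G n b) := by
      intro P hP hPQ
      by_contra hcon
      push_neg at hcon
      apply hcase
      refine ⟨P, hP, hPQ, fun n => ?_⟩
      obtain ⟨b, hb⟩ := hcon n
      exact ⟨b, hb⟩
    -- from a failure of largeness, get a subtree avoiding that side
    have shrink : ∀ P', IsPerfectTree P' → P' ⊆ Q → ∀ n b, ¬ Large P' (G n b) →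
        ∃ W, IsPerfectTree W ∧ W ⊆ P' ∧ branches W ⊆ G n (!b) := by
      intro P' hP' hP'Q n b hnb
      rw [Large] at hnb
      push_neg at hnb
      obtain ⟨P₁, hP₁, hP₁P', hP₁prop⟩ := hnb
      obtain ⟨W, hW, hWP₁, hWalt⟩ := hGs n b P₁ hP₁
      rcases hWalt with h | h
      · exact absurd h (hP₁prop W hW hWP₁)
      · refine ⟨W, hW, hWP₁.trans hP₁P', ?_⟩
        intro x hx
        have hxA : x ∈ A := hQA (branches_mono ((hWP₁.trans hP₁P').trans hP'Q) hx)
        have hxnb : x ∉ G n b := by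
          intro hcon
          have : x ∈ branches W ∩ G n b := ⟨hx, hcon⟩
          rw [h] at this
          exact this
        cases b
        · -- b = false : show x ∈ G n true
          rw [bitmem x hxA n] at hxnb ⊢
          cases hcb : c (Fm x) n
          · exact absurd hcb hxnb
          · rfl
        · exact bitmem' x hxA n hxnb
    set RelB : ℕ → Set (List Bool) → Set (List Bool) → Prop :=
      fun _ Q₀ Q₁ => ∃ n, branches Q₀ ⊆ G n false ∧ branches Q₁ ⊆ G n true with hRelB
    have hstepB : ∀ k P', IsPerfectTree P' → P' ⊆ Q →
        ∃ Q₀ Q₁, IsPerfectTree Q₀ ∧ IsPerfectTree Q₁ ∧ Q₀ ⊆ P' ∧ Q₁ ⊆ P' ∧ RelB k Q₀ Q₁ := by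
      intro k P' hP' hP'Q
      obtain ⟨n, hn⟩ := hcaseB P' hP' hP'Q
      obtain ⟨W₀, hW₀, hW₀P', hW₀G⟩ := shrink P' hP' hP'Q n true (hn true)
      obtain ⟨W₁, hW₁, hW₁P', hW₁G⟩ := shrink P' hP' hP'Q n false (hn false)
      exact ⟨W₀, W₁, hW₀, hW₁, hW₀P', hW₁P', n, by simpa using hW₀G, by simpa using hW₁G⟩
    obtain ⟨R, hRperf, hRQ, _, hconcl2⟩ := fusion_main hQ hstepB
    have hRA : branches R ⊆ A := fun x hx => hQA (branches_mono hRQ hx)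
    have hinj : ∀ x ∈ branches R, ∀ y ∈ branches R, x ≠ y → Fm x ≠ Fm y := by
      intro x hx y hy hxy
      obtain ⟨k, Q₀, Q₁, ⟨n, hG0, hG1⟩, hor⟩ := hconcl2 x hx y hy hxy
      rcases hor with ⟨hxQ, hyQ⟩ | ⟨hxQ, hyQ⟩
      · intro heq
        have e1 : c (Fm x) n = false := (bitmem x (hRA hx) n false).mp (hG0 hxQ)
        have e2 : c (Fm y) n = true := (bitmem y (hRA hy) n true).mp (hG1 hyQ)
        rw [heq, e2] at e1
        simp at e1
      · intro heq
        have e1 : c (Fm x) n = true := (bitmem x (hRA hx) n true).mp (hG1 hxQ)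
        have e2 : c (Fm y) n = false := (bitmem y (hRA hy) n false).mp (hG0 hyQ)
        rw [heq, e2] at e1
        simp at e1
    -- Bernstein set relative to R
    obtain ⟨S, hSsub, hSbern⟩ := exists_bernstein hRperf
    set 𝓕' : Set (Set (ℕ → Bool)) := {F | ∃ x ∈ S, F = Fm x} with h𝓕'
    have hsub𝓕 : 𝓕' ⊆ 𝓕 := by
      rintro F ⟨x, hxS, rfl⟩
      exact (hFm x (hRA (hSsub hxS))).1
    obtain ⟨P', hP', hP'R, halt⟩ := hs 𝓕' hsub𝓕 R hRperf
    obtain ⟨⟨x₁, hx₁S, hx₁P⟩, ⟨y₁, hy₁P, hy₁S⟩⟩ := hSbern P' hP' hP'R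
    rcases halt with hsubU | hdisU
    · -- branches P' ⊆ ⋃₀ 𝓕' : but y₁ avoids S
      obtain ⟨F, ⟨x, hxS, rfl⟩, hy₁F⟩ := hsubU hy₁P
      have hy₁A : y₁ ∈ A := hRA (branches_mono hP'R hy₁P)
      have heq : Fm x = Fm y₁ := hFm_uniq y₁ hy₁A (Fm x) (hFm x (hRA (hSsub hxS))).1 hy₁F
      by_cases hxy : x = y₁
      · rw [hxy] at hxS
        exact hy₁S hxS
      · exact hinj x (hSsub hxS) y₁ (branches_mono hP'R hy₁P) hxy heq
    · -- branches P' ∩ ⋃₀ 𝓕' = ∅ : but x₁ ∈ S is in the union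
      have hx₁A : x₁ ∈ A := hRA (hSsub hx₁S)
      have : x₁ ∈ branches P' ∩ ⋃₀ 𝓕' :=
        ⟨hx₁P, Fm x₁, ⟨x₁, hx₁S, rfl⟩, (hFm x₁ hx₁A).2⟩
      rw [hdisU] at this
      exact this
end

section
/- No open dense set M ⊆ [ω]^ω (in the Ellentuck topology) that is not Ramsey null admits a Kuratowski partition; i.e., there is no partition F of M into Ramsey null sets such that ⋃F' is completely Ramsey for every subfamily F' ⊆ F. -/
open Set

lemma EllSet_mono {a : Finset ℕ} {B A : Set ℕ} (h : B ⊆ A) : EllSet a B ⊆ EllSet a A := by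
  rintro X ⟨h1, h2, h3⟩
  exact ⟨h1, h2, h3.trans (union_subset_union_right _ h)⟩

lemma EllSet_le {a₀ s : Finset ℕ} {B₀ σ : Set ℕ} (hs : ↑s ⊆ B₀) (hσ : σ ⊆ B₀) :
    EllSet (a₀ ∪ s) σ ⊆ EllSet a₀ B₀ := by
  rintro X ⟨h1, h2, h3⟩
  refine ⟨h1, ?_, ?_⟩
  · intro n hn
    exact h2 (by simpa using Or.inl hn)
  · intro n hn
    rcases h3 hn with h | h
    · rcases (by simpa using h : n ∈ a₀ ∨ n ∈ s) with h' | h'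
      · exact Or.inl h'
      · exact Or.inr (hs h')
    · exact Or.inr (hσ h)

lemma EllSet_self_mem {a : Finset ℕ} {A : Set ℕ} (hA : A.Infinite) : (↑a ∪ A) ∈ EllSet a A :=
  ⟨(hA.mono subset_union_right), subset_union_left, Subset.rfl⟩

lemma not_ramseyNull_of_cube {a : Finset ℕ} {A : Set ℕ} {W : Set (Set ℕ)}
    (hA : A.Infinite) (hsub : EllSet a A ⊆ W) : ¬ RamseyNull W := by
  intro h
  obtain ⟨B, hBA, hBinf, hdisj⟩ := h a A hA
  have hmem : (↑a ∪ B) ∈ EllSet a B := EllSet_self_mem hBinf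
  have : (↑a ∪ B) ∈ EllSet a B ∩ W := ⟨hmem, hsub (EllSet_mono hBA hmem)⟩
  rw [hdisj] at this
  exact this

lemma ramseyNull_mono {V W : Set (Set ℕ)} (h : V ⊆ W) (hW : RamseyNull W) : RamseyNull V := by
  intro a A hA
  obtain ⟨B, hBA, hBinf, hd⟩ := hW a A hA
  refine ⟨B, hBA, hBinf, ?_⟩
  rw [eq_empty_iff_forall_notMem] at hd ⊢
  exact fun X hX => hd X ⟨hX.1, h hX.2⟩

/-- State for the fusion construction. -/
structure FusSt (A₀ : Set ℕ) where
  n : ℕ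
  d : Finset ℕ
  A : Set ℕ
  hd : ↑d ⊆ A₀
  hA : A ⊆ A₀
  hinf : A.Infinite
  hlt : ∀ y ∈ d, ∀ z ∈ A, y < z

/-- The generic fusion lemma. -/
lemma fusion (a₀ : Finset ℕ) (A₀ : Set ℕ) (hA₀ : A₀.Infinite)
    (R : Finset ℕ → ℕ → Set ℕ → Prop)
    (hdens : ∀ (s : Finset ℕ) (m : ℕ) (A : Set ℕ), ↑s ⊆ A₀ → A ⊆ A₀ → A.Infinite →
      ∃ B ⊆ A, B.Infinite ∧ R (a₀ ∪ s) m B) :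
    ∃ (D : Set ℕ) (e : ℕ → Finset ℕ) (σ : ℕ → Finset ℕ → Set ℕ),
      D ⊆ A₀ ∧ D.Infinite ∧
      (∀ m, ↑(e m) ⊆ D) ∧
      ∀ m, ∀ s ⊆ e m, R (a₀ ∪ s) m (σ m s) ∧ D \ ↑(e m) ⊆ σ m s ∧ σ m s ⊆ A₀ := by
  classical
  -- multiple shrink
  have multi : ∀ (m : ℕ) (P : Finset (Finset ℕ)), (∀ s ∈ P, ↑s ⊆ A₀) → ∀ (A : Set ℕ), A ⊆ A₀ → A.Infinite →
      ∃ (A' : Set ℕ) (σ : Finset ℕ → Set ℕ), A' ⊆ A ∧ A'.Infinite ∧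
        ∀ s ∈ P, R (a₀ ∪ s) m (σ s) ∧ A' ⊆ σ s ∧ σ s ⊆ A := by
    intro m P
    induction P using Finset.induction_on with
    | empty =>
      intro _ A hAsub hAinf
      exact ⟨A, fun _ => A, Subset.rfl, hAinf, by simp⟩
    | @insert t P htP ih =>
      intro hP A hAsub hAinf
      obtain ⟨A', σ, hA'A, hA'inf, hσ⟩ := ih (fun s hs => hP s (Finset.mem_insert_of_mem hs)) A hAsub hAinf
      obtain ⟨B, hBA', hBinf, hR⟩ := hdens t m A' (hP t (Finset.mem_insert_self _ _)) (hA'A.trans hAsub) hA'inf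
      refine ⟨B, Function.update σ t B, hBA'.trans hA'A, hBinf, ?_⟩
      intro s hs
      rcases Finset.mem_insert.mp hs with rfl | hsP
      · rw [Function.update_self]
        exact ⟨hR, Subset.rfl, hBA'.trans hA'A⟩
      · have hst : s ≠ t := fun h => htP (h ▸ hsP)
        rw [Function.update_of_ne hst]
        obtain ⟨h1, h2, h3⟩ := hσ s hsP
        exact ⟨h1, (hBA'.trans h2 : B ⊆ σ s), h3⟩
  -- one step of the construction
  have hstep : ∀ t : FusSt A₀, ∃ (t' : FusSt A₀) (σ : Finset ℕ → Set ℕ) (x : ℕ),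
      t'.n = t.n + 1 ∧ t'.d = insert x t.d ∧ x ∈ t.A ∧ t'.A ⊆ t.A ∧
      ∀ s ∈ t.d.powerset, R (a₀ ∪ s) t.n (σ s) ∧ x ∈ σ s ∧ t'.A ⊆ σ s ∧ σ s ⊆ A₀ := by
    intro t
    obtain ⟨A', σ, hA'A, hA'inf, hσ⟩ := multi t.n t.d.powerset
      (fun s hs => (Finset.coe_subset.mpr (Finset.mem_powerset.mp hs)).trans t.hd) t.A t.hA t.hinf
    have hne : A'.Nonempty := hA'inf.nonempty
    set x := sInf A' with hxdef
    have hxA' : x ∈ A' := Nat.sInf_mem hne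
    have hA''inf : ({y ∈ A' | x < y} : Set ℕ).Infinite := by
      refine (hA'inf.diff (Set.finite_Iic x)).mono ?_
      rintro y ⟨hy1, hy2⟩
      exact ⟨hy1, lt_of_not_ge (by simpa using hy2)⟩
    refine ⟨⟨t.n + 1, insert x t.d, {y ∈ A' | x < y}, ?_, ?_, hA''inf, ?_⟩, σ, x, rfl, rfl,
      hA'A hxA', ?_, ?_⟩
    · rw [Finset.coe_insert]
      exact insert_subset (t.hA (hA'A hxA')) t.hd
    · exact (fun y hy => t.hA (hA'A hy.1))
    · intro y hy z hz
      rcases Finset.mem_insert.mp hy with rfl | hy'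
      · exact hz.2
      · exact t.hlt y hy' z (hA'A hz.1)
    · exact fun z hz => hA'A hz.1
    · intro s hs
      obtain ⟨h1, h2, h3⟩ := hσ s hs
      exact ⟨h1, h2 hxA', fun z hz => h2 hz.1, h3.trans t.hA⟩
  choose next σf xf h1 h2 h3 h5 h6 using hstep
  let init : FusSt A₀ := ⟨0, ∅, A₀, by simp, Subset.rfl, hA₀, by simp⟩
  let ch : ℕ → FusSt A₀ := fun k => Nat.rec init (fun _ t => next t) k
  have hchsucc : ∀ k, ch (k + 1) = next (ch k) := fun k => rfl
  have hn : ∀ k, (ch k).n = k := by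
    intro k
    induction k with
    | zero => rfl
    | succ k ih => rw [hchsucc, h1, ih]
  have hAmono : ∀ j k, j ≤ k → (ch k).A ⊆ (ch j).A := by
    intro j k hjk
    induction k with
    | zero => simp_all
    | succ k ih =>
      rcases Nat.lt_or_ge j (k+1) with h | h
      · exact (hchsucc k ▸ h5 (ch k)).trans (ih (Nat.lt_succ_iff.mp h))
      · have : j = k + 1 := le_antisymm hjk h
        subst this; exact Subset.rfl
  set x : ℕ → ℕ := fun k => xf (ch k) with hxdef
  have hxmem : ∀ k, x k ∈ (ch k).A := fun k => h3 (ch k)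
  have hdchar : ∀ k, (ch k).d = (Finset.range k).image x := by
    intro k
    induction k with
    | zero => rfl
    | succ k ih =>
      rw [hchsucc, h2, ih, Finset.range_add_one, Finset.image_insert]
  have hstrict : StrictMono x := by
    apply strictMono_nat_of_lt_succ
    intro k
    have hx1 : x k ∈ (ch (k+1)).d := by
      rw [hchsucc, h2]; exact Finset.mem_insert_self _ _
    exact (ch (k+1)).hlt (x k) hx1 (x (k+1)) (hxmem (k+1))
  refine ⟨Set.range x, fun m => (ch m).d, fun m s => σf (ch m) s, ?_, ?_, ?_, ?_⟩
  · rintro _ ⟨k, rfl⟩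
    exact (ch k).hA (hxmem k)
  · exact Set.infinite_range_of_injective hstrict.injective
  · intro m n hn'
    simp only [hdchar, Finset.coe_image, Set.mem_image] at hn'
    obtain ⟨j, _, rfl⟩ := hn'
    exact Set.mem_range_self j
  · intro m s hs
    have hs' : s ∈ (ch m).d.powerset := Finset.mem_powerset.mpr hs
    obtain ⟨hR, hx6, hA6, hA0⟩ := h6 (ch m) s hs'
    rw [hn m] at hR
    refine ⟨hR, ?_, hA0⟩
    rintro _ ⟨⟨k, rfl⟩, hk2⟩
    have hkm : m ≤ k := by
      by_contra hlt
      apply hk2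
      simp only [hdchar, Finset.coe_image, Set.mem_image]
      exact ⟨k, by simpa using Nat.lt_of_not_le hlt, rfl⟩
    rcases Nat.eq_or_lt_of_le hkm with rfl | hlt
    · exact hx6
    · exact hA6 (hchsucc m ▸ hAmono (m+1) k hlt (hxmem k))

open Classical in
/-- If `X ∈ [a₀, D]` then `X ∈ [a₀ ∪ s, σ]` where `s` is the trace of `X` on `e`. -/
lemma capture {a₀ : Finset ℕ} {D : Set ℕ} {e : Finset ℕ} {σ : Set ℕ} {X : Set ℕ}
    (hX : X ∈ EllSet a₀ D) (heD : ↑e ⊆ D) (hσ : D \ ↑e ⊆ σ) :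
    X ∈ EllSet (a₀ ∪ e.filter (· ∈ X)) σ := by
  obtain ⟨hinf, hsub1, hsub2⟩ := hX
  refine ⟨hinf, ?_, ?_⟩
  · intro n hn
    rcases Finset.mem_union.mp (by exact_mod_cast hn) with h | h
    · exact hsub1 h
    · exact (Finset.mem_filter.mp h).2
  · intro n hn
    rcases hsub2 hn with h | h
    · exact Or.inl (by exact_mod_cast Finset.mem_union_left _ (by exact_mod_cast h))
    · by_cases he : n ∈ e
      · exact Or.inl (by exact_mod_cast Finset.mem_union_right _ (Finset.mem_filter.mpr ⟨he, hn⟩))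
      · exact Or.inr (hσ ⟨h, fun hc => he (by exact_mod_cast hc)⟩)

/-- Countable unions of Ramsey null sets are Ramsey null. -/
lemma ramseyNull_iUnion (N : ℕ → Set (Set ℕ)) (hN : ∀ n, RamseyNull (N n)) :
    RamseyNull (⋃ n, N n) := by
  classical
  intro a A hA
  obtain ⟨D, e, σ, hDA, hDinf, heD, hfus⟩ := fusion a A hA
    (fun a' m B => EllSet a' B ∩ N m = ∅)
    (fun s m A' _ _ hA'inf => hN m (a ∪ s) A' hA'inf)
  refine ⟨D, hDA, hDinf, ?_⟩
  rw [eq_empty_iff_forall_notMem]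
  rintro X ⟨hX, hXU⟩
  obtain ⟨_, ⟨m, rfl⟩, hXm⟩ := hXU
  obtain ⟨hR, hσm, _⟩ := hfus m ((e m).filter (· ∈ X)) (Finset.filter_subset _ _)
  have hXin : X ∈ EllSet (a ∪ (e m).filter (· ∈ X)) (σ m ((e m).filter (· ∈ X))) :=
    capture hX (heD m) hσm
  have : X ∈ EllSet (a ∪ (e m).filter (· ∈ X)) (σ m ((e m).filter (· ∈ X))) ∩ N m := ⟨hXin, hXm⟩
  rw [hR] at this
  exact this

/-- Functions `ℕ → Bool` with finite support form a countable set. -/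
lemma countable_finsupport : {f : ℕ → Bool | {n | f n = true}.Finite}.Countable := by
  classical
  have : {f : ℕ → Bool | {n | f n = true}.Finite} ⊆
      ⋃ (s : Finset ℕ), {f : ℕ → Bool | ∀ n, f n = true ↔ n ∈ s} := by
    intro f hf
    refine Set.mem_iUnion.mpr ⟨hf.toFinset, ?_⟩
    intro n
    simp [Set.Finite.mem_toFinset]
  refine Set.Countable.mono this ?_
  refine Set.countable_iUnion fun s => ?_
  apply Set.Subsingleton.countable
  intro f hf g hg
  funext n
  have h1 := hf n
  have h2 := hg n
  by_cases h : n ∈ s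
  · rw [h1.mpr h, h2.mpr h]
  · cases hfn : f n
    · cases hgn : g n
      · rfl
      · exact absurd (h2.mp hgn) h
    · exact absurd (h1.mp hfn) h

/-- A coordinatewise prefix-determined map on Cantor space is continuous. -/
lemma continuous_prefix_map (bit : ℕ → Finset ℕ → Bool) (e : ℕ → Finset ℕ) :
    Continuous (fun f : ℕ → Bool => fun m => bit m ((e m).filter (fun k => f k = true))) := by
  classical
  refine continuous_pi fun m => ?_
  have : ∀ (s : Finset ℕ) (g : Finset ℕ → Bool),
      Continuous (fun f : ℕ → Bool => g (s.filter (fun k => f k = true))) := by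
    intro s
    induction s using Finset.induction_on with
    | empty =>
      intro g
      simp only [Finset.filter_empty]
      exact continuous_const
    | @insert t s hts ih =>
      intro g
      have heq : (fun f : ℕ → Bool => g ((insert t s).filter (fun k => f k = true))) =
          (fun f : ℕ → Bool => if f t = true then g (insert t (s.filter (fun k => f k = true)))
            else g (s.filter (fun k => f k = true))) := by
        funext f
        rw [Finset.filter_insert]
        by_cases h : f t = true <;> simp [h]
      rw [heq]
      have h1 := ih (fun u => g (insert t u))
      have h2 := ih g
      have hcont : Continuous (fun f : ℕ → Bool => f t) := continuous_apply t
      have hpre : {f : ℕ → Bool | f t = true} =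
          (fun f : ℕ → Bool => f t) ⁻¹' {x : Bool | x = true} := rfl
      have hclopen : IsClopen {f : ℕ → Bool | f t = true} := by
        rw [hpre]
        exact ⟨IsClosed.preimage hcont (isClosed_discrete _),
               IsOpen.preimage hcont (isOpen_discrete _)⟩
      have hfr : frontier {f : ℕ → Bool | f t = true} = ∅ := hclopen.frontier_eq
      refine Continuous.if ?_ h1 h2
      intro a ha
      rw [hfr] at ha
      exact absurd ha (Set.notMem_empty a)
  exact this (e m) (bit m)

open Cardinal in
/-- Abstract Bernstein set construction. -/
lemma bernstein_exists {β α : Type} (Img : α → Set β)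
    (hα : #α ≤ 2 ^ aleph0) (hbig : ∀ b, (2 : Cardinal) ^ aleph0 ≤ #(Img b)) :
    ∃ T : Set β, ∀ b, (Img b ∩ T).Nonempty ∧ (Img b \ T).Nonempty := by
  classical
  obtain ⟨r, wo, hr⟩ := Cardinal.ord_eq α
  haveI := wo
  have hseg : ∀ b : α, #{b' // r b' b} < 2 ^ aleph0 := by
    intro b
    have h1 : (Ordinal.typein r b).card < #α := Cardinal.card_typein_lt (r := r) b hr
    rw [Ordinal.card_typein] at h1
    exact lt_of_lt_of_le h1 hα
  have key : ∀ (b : α) (S : Set β), #S < 2 ^ aleph0 → ((Img b) \ S).Nonempty := by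
    intro b S hS
    rw [Set.nonempty_iff_ne_empty]
    intro hemp
    have hsub : Img b ⊆ S := by
      intro v hv
      by_contra hvS
      exact (Set.eq_empty_iff_forall_notMem.mp hemp v) ⟨hv, hvS⟩
    exact absurd (hbig b) (not_le.mpr ((Cardinal.mk_le_mk_of_subset hsub).trans_lt hS))
  have haleph : (ℵ₀ : Cardinal) < 2 ^ aleph0 := Cardinal.cantor _
  have pickex : ∀ (b : α) (f : {b' // r b' b} → β × β), ∃ p : β × β,
      (p.1 ∈ Img b ∧ ∀ q, p.1 ≠ (f q).1 ∧ p.1 ≠ (f q).2) ∧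
      (p.2 ∈ Img b ∧ (∀ q, p.2 ≠ (f q).1 ∧ p.2 ≠ (f q).2) ∧ p.2 ≠ p.1) := by
    intro b f
    set Bad : Set β := Set.range (fun q => (f q).1) ∪ Set.range (fun q => (f q).2) with hBad
    have hBadcard : #Bad < 2 ^ aleph0 := by
      calc #Bad ≤ #(Set.range (fun q => (f q).1)) + #(Set.range (fun q => (f q).2)) :=
            Cardinal.mk_union_le _ _
        _ ≤ #{b' // r b' b} + #{b' // r b' b} := add_le_add Cardinal.mk_range_le Cardinal.mk_range_le
        _ < 2 ^ aleph0 := Cardinal.add_lt_of_lt haleph.le (hseg b) (hseg b)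
    obtain ⟨x, hx⟩ := key b Bad hBadcard
    have hBx : #(Bad ∪ {x} : Set β) < 2 ^ aleph0 := by
      calc #(Bad ∪ {x} : Set β) ≤ #Bad + #({x} : Set β) := Cardinal.mk_union_le _ _
        _ < 2 ^ aleph0 := Cardinal.add_lt_of_lt haleph.le hBadcard
            (lt_of_le_of_lt (by simp) haleph)
    obtain ⟨y, hy⟩ := key b (Bad ∪ {x}) hBx
    refine ⟨(x, y), ⟨hx.1, fun q => ⟨?_, ?_⟩⟩, hy.1, fun q => ⟨?_, ?_⟩, ?_⟩
    · exact fun he => hx.2 (Or.inl ⟨q, he.symm⟩)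
    · exact fun he => hx.2 (Or.inr ⟨q, he.symm⟩)
    · exact fun he => hy.2 (Or.inl (Or.inl ⟨q, he.symm⟩))
    · exact fun he => hy.2 (Or.inl (Or.inr ⟨q, he.symm⟩))
    · exact fun he => hy.2 (Or.inr he)
  have wf : WellFounded r := IsWellFounded.wf
  choose pick hpick using pickex
  set G : α → β × β := wf.fix (fun b ih => pick b (fun q => ih q.1 q.2)) with hG
  have hGeq : ∀ b, G b = pick b (fun q => G q.1) := by
    intro b
    rw [hG]
    exact WellFounded.fix_eq wf _ b
  have hspec : ∀ b, ((G b).1 ∈ Img b ∧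
      ∀ q : {b' // r b' b}, (G b).1 ≠ (G q.1).1 ∧ (G b).1 ≠ (G q.1).2) ∧
      ((G b).2 ∈ Img b ∧ (∀ q : {b' // r b' b}, (G b).2 ≠ (G q.1).1 ∧ (G b).2 ≠ (G q.1).2) ∧
        (G b).2 ≠ (G b).1) := by
    intro b
    rw [hGeq b]
    exact hpick b _
  refine ⟨Set.range (fun b => (G b).1), fun b => ⟨⟨(G b).1, (hspec b).1.1, ⟨b, rfl⟩⟩,
    ⟨(G b).2, (hspec b).2.1, ?_⟩⟩⟩
  rintro ⟨b', heq⟩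
  simp only at heq
  rcases trichotomous_of r b' b with h | h | h
  · exact ((hspec b).2.2.1 ⟨b', h⟩).1 heq.symm
  · subst h
    exact (hspec b').2.2.2 heq.symm
  · exact ((hspec b').1.2 ⟨b, h⟩).2 heq

open Classical in
noncomputable def chiF (X : Set ℕ) : ℕ → Bool := fun n => if n ∈ X then true else false

lemma chiF_eq_true_iff {X : Set ℕ} {n : ℕ} : chiF X n = true ↔ n ∈ X := by
  unfold chiF
  split <;> simp_all

lemma chiF_injective : Function.Injective chiF := by
  intro X Y h
  ext n
  rw [← chiF_eq_true_iff (X := X), ← chiF_eq_true_iff (X := Y), h]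

def Kfun (a₀ : Finset ℕ) (B : Set ℕ) : Set (ℕ → Bool) :=
  {f | (∀ n ∈ a₀, f n = true) ∧ ∀ n, f n = true → n ∈ (↑a₀ : Set ℕ) ∪ B}

lemma chiF_mem_Kfun {a₀ : Finset ℕ} {B X : Set ℕ} (h1 : ↑a₀ ⊆ X) (h2 : X ⊆ ↑a₀ ∪ B) :
    chiF X ∈ Kfun a₀ B :=
  ⟨fun n hn => chiF_eq_true_iff.mpr (h1 hn), fun n hn => h2 (chiF_eq_true_iff.mp hn)⟩

lemma Kfun_isClosed (a₀ : Finset ℕ) (B : Set ℕ) : IsClosed (Kfun a₀ B) := by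
  have heq : Kfun a₀ B = (⋂ n ∈ a₀, {f : ℕ → Bool | f n = true}) ∩
      ⋂ (n : ℕ) (_ : n ∉ (↑a₀ : Set ℕ) ∪ B), {f : ℕ → Bool | f n = false} := by
    ext f
    simp only [Kfun, Set.mem_inter_iff, Set.mem_iInter, Set.mem_setOf_eq]
    constructor
    · rintro ⟨hh1, hh2⟩
      refine ⟨hh1, fun n hn => ?_⟩
      cases hfn : f n
      · rfl
      · exact absurd (hh2 n hfn) hn
    · rintro ⟨hh1, hh2⟩
      refine ⟨hh1, fun n hfn => ?_⟩
      by_contra hn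
      rw [hh2 n hn] at hfn
      exact Bool.false_ne_true hfn
  rw [heq]
  have hone : ∀ (n : ℕ) (c : Bool), IsClosed {f : ℕ → Bool | f n = c} := by
    intro n c
    have : {f : ℕ → Bool | f n = c} = (fun f : ℕ → Bool => f n) ⁻¹' {x : Bool | x = c} := rfl
    rw [this]
    exact IsClosed.preimage (continuous_apply n) (isClosed_discrete _)
  exact IsClosed.inter (isClosed_biInter fun n _ => hone n true)
    (isClosed_iInter fun n => isClosed_iInter fun _ => hone n false)

lemma Kfun_isCompact (a₀ : Finset ℕ) (B : Set ℕ) : IsCompact (Kfun a₀ B) :=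
  (Kfun_isClosed a₀ B).isCompact

open Cardinal in
lemma mk_nat_bool : #(ℕ → Bool) = 2 ^ aleph0 := by
  rw [← Cardinal.power_def, Cardinal.mk_bool, Cardinal.mk_nat]

open Cardinal in
lemma mk_big_of_compact_uncountable {C : Set (ℕ → Bool)} (hC : IsCompact C)
    (hunc : ¬ C.Countable) : (2 : Cardinal) ^ aleph0 ≤ #C := by
  have : TopologicalSpace.IsCompletelyMetrizableSpace (ℕ → Bool) := inferInstance
  obtain ⟨f, hfr, _, hfi⟩ := hC.isClosed.exists_nat_bool_injection_of_not_countable hunc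
  have : Function.Injective (fun x : ℕ → Bool => (⟨f x, hfr ⟨x, rfl⟩⟩ : C)) := by
    intro x y hxy
    exact hfi (congrArg Subtype.val hxy)
  calc (2 : Cardinal) ^ aleph0 = #(ℕ → Bool) := mk_nat_bool.symm
    _ ≤ #C := Cardinal.mk_le_of_injective this

open Cardinal in
lemma mk_diff_countable_big {β : Type} {C S : Set β}
    (hC : (2 : Cardinal) ^ aleph0 ≤ #C) (hS : S.Countable) :
    (2 : Cardinal) ^ aleph0 ≤ #(C \ S : Set β) := by
  by_contra h
  push_neg at h
  have hsub : C ⊆ (C \ S) ∪ S := by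
    intro v hv
    by_cases hvS : v ∈ S
    · exact Or.inr hvS
    · exact Or.inl ⟨hv, hvS⟩
  have hS' : #S ≤ ℵ₀ := mk_le_aleph0_iff.mpr hS
  have : #C < 2 ^ aleph0 := by
    calc #C ≤ #((C \ S) ∪ S : Set β) := Cardinal.mk_le_mk_of_subset hsub
      _ ≤ #(C \ S : Set β) + #S := Cardinal.mk_union_le _ _
      _ < 2 ^ aleph0 := Cardinal.add_lt_of_lt (Cardinal.cantor _).le h
          (lt_of_le_of_lt hS' (Cardinal.cantor _))
  exact absurd hC (not_le.mpr this)

/-- No Ellentuck open dense set which is not Ramsey null admits a Kuratowski partition. -/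
theorem no_kuratowski_partition_ellentuck (M : Set (Set ℕ))
    (hopen : EllOpen M) (hdense : EllDense M) (hM : ¬ RamseyNull M) :
    ¬ ∃ 𝓕 : Set (Set (Set ℕ)),
        ⋃₀ 𝓕 = M ∧
        (∀ F ∈ 𝓕, ∀ G ∈ 𝓕, F ≠ G → Disjoint F G) ∧
        (∀ F ∈ 𝓕, RamseyNull F) ∧
        (∀ 𝓕' ⊆ 𝓕, CRSet (⋃₀ 𝓕')) := by
  classical
  rintro ⟨𝓕, hcover, hdisj, hnull, hCR⟩
  have hpc : ∀ X, X ∈ M → ∃ F, F ∈ 𝓕 ∧ X ∈ F := by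
    intro X hX
    rw [← hcover] at hX
    obtain ⟨F, hF, hXF⟩ := hX
    exact ⟨F, hF, hXF⟩
  choose! pc hpc1 hpc2 using hpc
  have hunique : ∀ X F, X ∈ M → F ∈ 𝓕 → X ∈ F → F = pc X := by
    intro X F hXM hF hXF
    by_contra hne
    exact Set.disjoint_left.mp (hdisj F hF (pc X) (hpc1 X hXM) hne) hXF (hpc2 X hXM)
  have hptex : ∀ F : Set (Set ℕ), ∃ Y, F.Nonempty → Y ∈ F := by
    intro F
    by_cases hF : F.Nonempty
    · obtain ⟨Y, hY⟩ := hF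
      exact ⟨Y, fun _ => hY⟩
    · exact ⟨∅, fun hc => absurd hc hF⟩
  choose pt hpt using hptex
  set h : Set (Set ℕ) → (ℕ → Bool) := fun F => chiF (pt F) with hhdef
  have hinj : ∀ F G, F ∈ 𝓕 → G ∈ 𝓕 → F.Nonempty → G.Nonempty → h F = h G → F = G := by
    intro F G hF hG hFne hGne hh
    have hpt' : pt F = pt G := chiF_injective hh
    by_contra hne
    exact Set.disjoint_left.mp (hdisj F hF G hG hne) (hpt F hFne) (hpt' ▸ hpt G hGne)
  -- Step 1: a basic cube inside M
  rw [RamseyNull] at hM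
  push_neg at hM
  obtain ⟨a₀, A₀, hA₀inf, hA₀⟩ := hM
  have hCRM : CRSet M := by
    rw [← hcover]
    exact hCR 𝓕 Set.Subset.rfl
  obtain ⟨B₀, hB₀A, hB₀inf, hB₀⟩ := hCRM a₀ A₀ hA₀inf
  have hcube : EllSet a₀ B₀ ⊆ M := by
    rcases hB₀ with hh | hh
    · exact hh
    · have hne := hA₀ B₀ hB₀A hB₀inf
      rw [hh] at hne
      exact absurd hne Set.not_nonempty_empty
  -- Step 2: the fusion
  set Utrue : ℕ → Bool → Set (Set ℕ) := fun m c => ⋃₀ {F | F ∈ 𝓕 ∧ h F m = c} with hUdef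
  have hdens : ∀ (s : Finset ℕ) (m : ℕ) (A : Set ℕ), ↑s ⊆ B₀ → A ⊆ B₀ → A.Infinite →
      ∃ B ⊆ A, B.Infinite ∧
        ((EllSet (a₀ ∪ s) B ⊆ Utrue m true) ∨ (EllSet (a₀ ∪ s) B ⊆ Utrue m false)) := by
    intro s m A hs hA hAinf
    obtain ⟨B, hBA, hBinf, hB⟩ := hCR {F | F ∈ 𝓕 ∧ h F m = true} (fun F hF => hF.1) (a₀ ∪ s) A hAinf
    refine ⟨B, hBA, hBinf, ?_⟩
    rcases hB with hh | hdis
    · exact Or.inl hh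
    · right
      intro X hX
      have hXM : X ∈ M := hcube (EllSet_le hs (hBA.trans hA) hX)
      have hXf : h (pc X) m = false := by
        cases hcase : h (pc X) m
        · rfl
        · exfalso
          have hmem : X ∈ EllSet (a₀ ∪ s) B ∩ Utrue m true :=
            ⟨hX, ⟨pc X, ⟨hpc1 X hXM, hcase⟩, hpc2 X hXM⟩⟩
          rw [hdis] at hmem
          exact hmem
      exact ⟨pc X, ⟨hpc1 X hXM, hXf⟩, hpc2 X hXM⟩
  obtain ⟨D, e, σ, hDB₀, hDinf, heD, hfus⟩ := fusion a₀ B₀ hB₀inf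
    (fun a' m B => (EllSet a' B ⊆ Utrue m true) ∨ (EllSet a' B ⊆ Utrue m false)) hdens
  set bit : ℕ → Finset ℕ → Bool :=
    fun m s => if EllSet (a₀ ∪ s) (σ m s) ⊆ Utrue m true then true else false with hbitdef
  set φ : (ℕ → Bool) → ℕ → Bool := fun f m => bit m ((e m).filter (fun k => f k = true)) with hφdef
  have hφcont : Continuous φ := continuous_prefix_map bit e
  have hEllDM : EllSet a₀ D ⊆ M := fun X hX => hcube (EllSet_mono hDB₀ hX)
  -- Key: the piece of X is coded by φ of its characteristic function
  have key : ∀ X, X ∈ EllSet a₀ D → h (pc X) = φ (chiF X) := by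
    intro X hX
    funext m
    have hfilter : ((e m).filter (fun k => chiF X k = true)) = ((e m).filter (· ∈ X)) :=
      Finset.filter_congr (fun k _ => by simp [chiF_eq_true_iff])
    have hφval : φ (chiF X) m = bit m ((e m).filter (· ∈ X)) := by
      simp only [hφdef, hfilter]
    rw [hφval]
    set s : Finset ℕ := (e m).filter (· ∈ X) with hsdef
    obtain ⟨hR, hσm, hσB⟩ := hfus m s (Finset.filter_subset _ _)
    have hXcap : X ∈ EllSet (a₀ ∪ s) (σ m s) := capture hX (heD m) hσm
    have hXM : X ∈ M := hEllDM hX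
    by_cases hin : EllSet (a₀ ∪ s) (σ m s) ⊆ Utrue m true
    · obtain ⟨F, ⟨hF, hFm⟩, hXF⟩ := hin hXcap
      rw [hunique X F hXM hF hXF] at hFm
      rw [hFm]
      simp only [hbitdef]
      rw [if_pos hin]
    · obtain ⟨F, ⟨hF, hFm⟩, hXF⟩ := (hR.resolve_left hin) hXcap
      rw [hunique X F hXM hF hXF] at hFm
      rw [hFm]
      simp only [hbitdef]
      rw [if_neg hin]
  -- classes of pieces with equal code are Ramsey null
  have hNN : ∀ c : ℕ → Bool, RamseyNull (⋃₀ {F | F ∈ 𝓕 ∧ h F = c}) := by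
    intro c
    by_cases hex : ∃ F, F ∈ 𝓕 ∧ F.Nonempty ∧ h F = c
    · obtain ⟨F₀, hF₀, hF₀ne, hF₀c⟩ := hex
      have hsub : ⋃₀ {F | F ∈ 𝓕 ∧ h F = c} ⊆ F₀ := by
        rintro X ⟨F, ⟨hF, hFc⟩, hXF⟩
        rwa [hinj F F₀ hF hF₀ ⟨X, hXF⟩ hF₀ne (hFc.trans hF₀c.symm)] at hXF
      exact ramseyNull_mono hsub (hnull F₀ hF₀)
    · have hemp : ⋃₀ {F | F ∈ 𝓕 ∧ h F = c} = ∅ := by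
        rw [Set.eq_empty_iff_forall_notMem]
        rintro X ⟨F, ⟨hF, hFc⟩, hXF⟩
        exact hex ⟨F, hF, ⟨X, hXF⟩, hFc⟩
      rw [hemp]
      intro a A hA
      exact ⟨A, Set.Subset.rfl, hA, by simp⟩
  -- every subcube has uncountable φ-image
  have hbigimg : ∀ B : Set ℕ, B ⊆ D → B.Infinite → ¬ (φ '' (Kfun a₀ B)).Countable := by
    intro B hBD hBinf hcnt
    have hne : (φ '' (Kfun a₀ B)).Nonempty :=
      ⟨φ (chiF (↑a₀ ∪ B)), chiF (↑a₀ ∪ B),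
        chiF_mem_Kfun Set.subset_union_left Set.Subset.rfl, rfl⟩
    obtain ⟨g, hg⟩ := hcnt.exists_eq_range hne
    have hcov : EllSet a₀ B ⊆ ⋃ n, ⋃₀ {F | F ∈ 𝓕 ∧ h F = g n} := by
      intro X hX
      have hXD : X ∈ EllSet a₀ D := EllSet_mono hBD hX
      have hXM : X ∈ M := hEllDM hXD
      have hphi : φ (chiF X) ∈ φ '' (Kfun a₀ B) :=
        ⟨chiF X, chiF_mem_Kfun hX.2.1 hX.2.2, rfl⟩
      rw [hg] at hphi
      obtain ⟨n, hn⟩ := hphi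
      refine Set.mem_iUnion.mpr ⟨n, ⟨pc X, ⟨hpc1 X hXM, ?_⟩, hpc2 X hXM⟩⟩
      rw [key X hXD, ← hn]
    exact not_ramseyNull_of_cube hBinf hcov (ramseyNull_iUnion _ (fun n => hNN (g n)))
  -- Bernstein set
  set Cubes : Set (Set ℕ) := {B | B ⊆ D ∧ B.Infinite} with hCubesdef
  set Img : Cubes → Set (ℕ → Bool) :=
    fun b => (φ '' (Kfun a₀ b.1)) \ (φ '' {f | {n | f n = true}.Finite}) with hImgdef
  have hαcard : Cardinal.mk (↥Cubes) ≤ 2 ^ Cardinal.aleph0 := by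
    calc Cardinal.mk (↥Cubes) ≤ Cardinal.mk (Set ℕ) := Cardinal.mk_subtype_le _
      _ ≤ Cardinal.mk (ℕ → Bool) := Cardinal.mk_le_of_injective chiF_injective
      _ = 2 ^ Cardinal.aleph0 := mk_nat_bool
  have hbig : ∀ b : ↥Cubes, (2 : Cardinal) ^ Cardinal.aleph0 ≤ Cardinal.mk (Img b) := by
    intro b
    apply mk_diff_countable_big
    · exact mk_big_of_compact_uncountable ((Kfun_isCompact a₀ b.1).image hφcont)
        (hbigimg b.1 b.2.1 b.2.2)
    · exact Set.Countable.image countable_finsupport φ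
  obtain ⟨T, hT⟩ := bernstein_exists Img hαcard hbig
  -- realize Bernstein points by elements of cubes
  have hreal : ∀ (b : ↥Cubes) (v : ℕ → Bool), v ∈ Img b →
      ∃ X, X ∈ EllSet a₀ b.1 ∧ φ (chiF X) = v := by
    rintro b v ⟨⟨f, hfK, rfl⟩, hvsmall⟩
    have hfin : ¬ {n | f n = true}.Finite := fun hf => hvsmall ⟨f, hf, rfl⟩
    have hchi : chiF {n | f n = true} = f := by
      funext n
      by_cases hn : f n = true
      · rw [show chiF {n | f n = true} n = true from chiF_eq_true_iff.mpr hn, hn]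
      · have h1 : chiF {n | f n = true} n = false := by
          cases hc : chiF {n | f n = true} n
          · rfl
          · exact absurd (chiF_eq_true_iff.mp hc) hn
        have h2 : f n = false := by
          cases hfn : f n
          · rfl
          · exact absurd hfn hn
        rw [h1, h2]
    refine ⟨{n | f n = true}, ⟨hfin, fun n hn => hfK.1 n hn, hfK.2⟩, by rw [hchi]⟩
  -- the contradiction
  have hCRT : CRSet (⋃₀ {F | F ∈ 𝓕 ∧ h F ∈ T}) := hCR _ (fun F hF => hF.1)
  obtain ⟨B, hBD, hBinf, hB⟩ := hCRT a₀ D hDinf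
  have hbmem : B ∈ Cubes := ⟨hBD, hBinf⟩
  obtain ⟨hint, hdiff⟩ := hT ⟨B, hbmem⟩
  obtain ⟨xin, hxin⟩ := hint
  obtain ⟨yout, hyout⟩ := hdiff
  obtain ⟨Xin, hXinB, hXinφ⟩ := hreal ⟨B, hbmem⟩ xin hxin.1
  obtain ⟨Xout, hXoutB, hXoutφ⟩ := hreal ⟨B, hbmem⟩ yout hyout.1
  have hXinD : Xin ∈ EllSet a₀ D := EllSet_mono hBD hXinB
  have hXoutD : Xout ∈ EllSet a₀ D := EllSet_mono hBD hXoutB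
  have hXinT : Xin ∈ ⋃₀ {F | F ∈ 𝓕 ∧ h F ∈ T} :=
    ⟨pc Xin, ⟨hpc1 _ (hEllDM hXinD), by rw [key Xin hXinD, hXinφ]; exact hxin.2⟩,
      hpc2 _ (hEllDM hXinD)⟩
  have hXoutT : Xout ∉ ⋃₀ {F | F ∈ 𝓕 ∧ h F ∈ T} := by
    rintro ⟨F, ⟨hF, hFT⟩, hXF⟩
    rw [hunique Xout F (hEllDM hXoutD) hF hXF] at hFT
    rw [key Xout hXoutD, hXoutφ] at hFT
    exact hyout.2 hFT
  rcases hB with hh | hh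
  · exact hXoutT (hh hXoutB)
  · have : Xin ∈ EllSet a₀ B ∩ ⋃₀ {F | F ∈ 𝓕 ∧ h F ∈ T} := ⟨hXinB, hXinT⟩
    rw [hh] at this
    exact this
end

section
/- Let M ⊆ [ω]^ω be open and dense in the Ellentuck topology and not Ramsey null, and let F be a partition of M into Ramsey null sets such that every subfamily has completely Ramsey union. Then for every Ellentuck basic set [a,A] there exists [b,B] ⊆ [a,A] such that the family {F ∩ [b,B] : F ∈ F} of nonempty traces has cardinality continuum. -/
open Set

namespace KPE

lemma self_mem_ellSet {d : Finset ℕ} {D : Set ℕ} (hD : D.Infinite) :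
    (↑d ∪ D) ∈ EllSet d D :=
  ⟨(hD.mono subset_union_right), subset_union_left, subset_rfl⟩

lemma ellSet_nonempty {d : Finset ℕ} {D : Set ℕ} (hD : D.Infinite) :
    (EllSet d D).Nonempty := ⟨_, self_mem_ellSet hD⟩

/-- Concrete refinement order on conditions `(finite part, infinite part)`. -/
def cle (q p : Finset ℕ × Set ℕ) : Prop :=
  p.1 ⊆ q.1 ∧ (↑q.1 : Set ℕ) ⊆ ↑p.1 ∪ p.2 ∧ q.2 ⊆ p.2

lemma cle_refl (p : Finset ℕ × Set ℕ) : cle p p :=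
  ⟨subset_rfl, subset_union_left, subset_rfl⟩

lemma cle_trans {q p r : Finset ℕ × Set ℕ} (h1 : cle q p) (h2 : cle p r) : cle q r := by
  refine ⟨h2.1.trans h1.1, h1.2.1.trans ?_, h1.2.2.trans h2.2.2⟩
  exact union_subset (h2.2.1.trans subset_rfl) (h2.2.2.trans subset_union_right)

lemma cle_ell {q p : Finset ℕ × Set ℕ} (h : cle q p) :
    EllSet q.1 q.2 ⊆ EllSet p.1 p.2 := by
  rintro x ⟨h1, h2, h3⟩
  refine ⟨h1, (Finset.coe_subset.2 h.1).trans h2, h3.trans ?_⟩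
  exact union_subset (h.2.1.trans subset_rfl) (h.2.2.trans subset_union_right)

/-- one-point extension of the finite part -/
lemma cle_extend {q : Finset ℕ × Set ℕ} (hq : q.2.Infinite) :
    ∃ q' : Finset ℕ × Set ℕ, cle q' q ∧ q.1 ⊂ q'.1 ∧ q'.2.Infinite := by
  obtain ⟨k, hk⟩ := (hq.diff (q.1.finite_toSet)).nonempty
  obtain ⟨hkD, hknot⟩ := hk
  simp only [Finset.mem_coe] at hknot
  refine ⟨(insert k q.1, q.2 \ {k}), ⟨Finset.subset_insert _ _, ?_, diff_subset⟩,
    Finset.ssubset_insert hknot, hq.diff (finite_singleton k)⟩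
  rw [Finset.coe_insert]
  exact insert_subset (Or.inr hkD) subset_union_left


open Classical in
noncomputable def xpt (F : Set (Set ℕ)) : Set ℕ :=
  if h : F.Nonempty then h.some else ∅

lemma xpt_mem {F : Set (Set ℕ)} (h : F.Nonempty) : xpt F ∈ F := by
  rw [xpt]; rw [dif_pos h]; exact h.some_mem

section Part

variable (𝓕 : Set (Set (Set ℕ)))

open Classical in
/-- the piece of the partition containing `x` -/
noncomputable def pc (x : Set ℕ) : Set (Set ℕ) :=
  if h : ∃ F ∈ 𝓕, x ∈ F then h.choose else ∅

/-- trace family of a condition -/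
def Tr (q : Finset ℕ × Set ℕ) : Set (Set (Set ℕ)) :=
  {F | F ∈ 𝓕 ∧ (F ∩ EllSet q.1 q.2).Nonempty}

/-- the `n`-th coordinate family -/
def Hfam (n : ℕ) : Set (Set (Set ℕ)) := {F | F ∈ 𝓕 ∧ n ∈ xpt F}

/-- the condition decides coordinate `n` -/
def Decided (d : Finset ℕ) (E : Set ℕ) (n : ℕ) : Prop :=
  EllSet d E ⊆ ⋃₀ (Hfam 𝓕 n) ∨ EllSet d E ∩ ⋃₀ (Hfam 𝓕 n) = ∅

variable {𝓕}
variable {M : Set (Set ℕ)}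

lemma piece_unique (hdisj : ∀ F ∈ 𝓕, ∀ G ∈ 𝓕, F ≠ G → Disjoint F G) {F G : Set (Set ℕ)} (hF : F ∈ 𝓕) (hG : G ∈ 𝓕) {x : Set ℕ}
    (hxF : x ∈ F) (hxG : x ∈ G) : F = G := by
  by_contra h
  exact (hdisj F hF G hG h).le_bot ⟨hxF, hxG⟩ 

lemma pc_mem (hcover : ⋃₀ 𝓕 = M) {x : Set ℕ} (hx : x ∈ M) : pc 𝓕 x ∈ 𝓕 ∧ x ∈ pc 𝓕 x := by
  have h : ∃ F ∈ 𝓕, x ∈ F := by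
    rw [← hcover] at hx; exact hx
  rw [pc]; rw [dif_pos h]
  exact ⟨h.choose_spec.1, h.choose_spec.2⟩

lemma dich (hadd : ∀ 𝓕' ⊆ 𝓕, CRSet (⋃₀ 𝓕')) (d : Finset ℕ) (D : Set ℕ) (hD : D.Infinite) (n : ℕ) :
    ∃ E ⊆ D, E.Infinite ∧ Decided 𝓕 d E n :=
  hadd (Hfam 𝓕 n) (fun _ h => h.1) d D hD

lemma not_ellSet_subset_piece (hnull : ∀ F ∈ 𝓕, RamseyNull F) {F : Set (Set ℕ)} (hF : F ∈ 𝓕) {d : Finset ℕ}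
    {D : Set ℕ} (hD : D.Infinite) : ¬ EllSet d D ⊆ F := by
  intro hsub
  obtain ⟨E, hED, hE, hdisj'⟩ := hnull F hF d D hD
  have : (↑d ∪ E) ∈ EllSet d E := self_mem_ellSet hE
  have hmem : (↑d ∪ E) ∈ EllSet d D := cle_ell (q := (d, E)) (p := (d, D))
    ⟨subset_rfl, subset_union_left, hED⟩ this
  have : (↑d ∪ E : Set ℕ) ∈ EllSet d E ∩ F := ⟨‹(↑d ∪ E) ∈ EllSet d E›, hsub hmem⟩
  rw [hdisj'] at this
  exact this

/-- positive decision absorbs traces -/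
lemma tr_pos (hdisj : ∀ F ∈ 𝓕, ∀ G ∈ 𝓕, F ≠ G → Disjoint F G) {q : Finset ℕ × Set ℕ} {n : ℕ}
    (h : EllSet q.1 q.2 ⊆ ⋃₀ (Hfam 𝓕 n)) : Tr 𝓕 q ⊆ Hfam 𝓕 n := by
  rintro F ⟨hF, x, hxF, hxE⟩
  obtain ⟨H, hH, hxH⟩ := h hxE
  rwa [piece_unique hdisj hF hH.1 hxF hxH]

lemma tr_neg {q : Finset ℕ × Set ℕ} {n : ℕ}
    (h : EllSet q.1 q.2 ∩ ⋃₀ (Hfam 𝓕 n) = ∅) : ∀ F ∈ Tr 𝓕 q, F ∉ Hfam 𝓕 n := by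
  rintro F ⟨hF, x, hxF, hxE⟩ hFn
  have : x ∈ EllSet q.1 q.2 ∩ ⋃₀ (Hfam 𝓕 n) := ⟨hxE, F, hFn, hxF⟩
  rw [h] at this
  exact this

lemma depChoice {α : Type*} (Inv : α → Prop) (Rel : ℕ → α → α → Prop) (init : α)
    (h0 : Inv init) (step : ∀ m s, Inv s → ∃ t, Inv t ∧ Rel m s t) :
    ∃ f : ℕ → α, f 0 = init ∧ (∀ m, Inv (f m)) ∧ ∀ m, Rel m (f m) (f (m + 1)) := by
  let g : ℕ → {s // Inv s} := fun m =>
    Nat.rec ⟨init, h0⟩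
      (fun m ih => ⟨(step m ih.1 ih.2).choose, (step m ih.1 ih.2).choose_spec.1⟩) m
  exact ⟨fun m => (g m).1, rfl, fun m => (g m).2,
    fun m => (step m (g m).1 (g m).2).choose_spec.2⟩

lemma batch (hadd : ∀ 𝓕' ⊆ 𝓕, CRSet (⋃₀ 𝓕')) :
    ∀ (L : List (Finset ℕ × ℕ)) (D : Set ℕ), D.Infinite →
    ∃ D' ⊆ D, D'.Infinite ∧
      ∀ t ∈ L, ∃ E, D' ⊆ E ∧ E ⊆ D ∧ E.Infinite ∧ Decided 𝓕 t.1 E t.2 := by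
  intro L
  induction L with
  | nil => exact fun D hD => ⟨D, subset_rfl, hD, by simp⟩
  | cons t L ih =>
    intro D hD
    obtain ⟨E, hED, hE, hdec⟩ := dich hadd t.1 D hD t.2
    obtain ⟨D', hD'E, hD', hprop⟩ := ih E hE
    refine ⟨D', hD'E.trans hED, hD', ?_⟩
    rintro u hu
    rcases List.mem_cons.1 hu with rfl | hu
    · exact ⟨E, hD'E, hED, hE, hdec⟩
    · obtain ⟨E', h1, h2, h3, h4⟩ := hprop u hu
      exact ⟨E', h1, h2.trans hED, h3, h4⟩

/-- Key splitting lemma: below any condition inside `M` there are two refinements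
with disjoint trace families. -/
lemma split (hcover : ⋃₀ 𝓕 = M)
    (hdisj : ∀ F ∈ 𝓕, ∀ G ∈ 𝓕, F ≠ G → Disjoint F G)
    (hnull : ∀ F ∈ 𝓕, RamseyNull F)
    (hadd : ∀ 𝓕' ⊆ 𝓕, CRSet (⋃₀ 𝓕'))
    (c : Finset ℕ) (C0 : Set ℕ) (hC0 : C0.Infinite) (hsub : EllSet c C0 ⊆ M) :
    ∃ q₀ q₁ : Finset ℕ × Set ℕ, cle q₀ (c, C0) ∧ cle q₁ (c, C0) ∧
      q₀.2.Infinite ∧ q₁.2.Infinite ∧ Disjoint (Tr 𝓕 q₀) (Tr 𝓕 q₁) := by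
  classical
  by_contra hbad
  push_neg at hbad
  -- build the fusion sequence
  set Inv : Set ℕ × Finset ℕ → Prop :=
    fun s => s.1.Infinite ∧ s.1 ⊆ C0 ∧ (↑s.2 : Set ℕ) ⊆ C0 with hInv
  set Rel : ℕ → Set ℕ × Finset ℕ → Set ℕ × Finset ℕ → Prop := fun m s t =>
    t.1 ⊆ s.1 ∧ (∃ knew ∈ t.1, knew ∉ s.2 ∧ t.2 = insert knew s.2) ∧
      ∀ dn : Finset ℕ × ℕ, dn.1 ⊆ s.2 → dn.2 ≤ m →
        ∃ E, t.1 ⊆ E ∧ E ⊆ s.1 ∧ E.Infinite ∧ Decided 𝓕 (c ∪ dn.1) E dn.2 with hRel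
  have step : ∀ m s, Inv s → ∃ t, Inv t ∧ Rel m s t := by
    intro m s hs
    obtain ⟨D', hD's, hD', hprop⟩ := batch hadd
      (((s.2.powerset ×ˢ Finset.range (m + 1)).toList).map fun p => (c ∪ p.1, p.2))
      s.1 hs.1
    obtain ⟨knew, hknew⟩ := (hD'.diff s.2.finite_toSet).nonempty
    refine ⟨(D', insert knew s.2), ⟨hD', hD's.trans hs.2.1, ?_⟩, hD's, ?_, ?_⟩
    · rw [Finset.coe_insert]
      exact insert_subset (hs.2.1 (hD's hknew.1)) hs.2.2
    · exact ⟨knew, hknew.1, by simpa using hknew.2, rfl⟩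
    · intro dn hd hn
      refine hprop (c ∪ dn.1, dn.2) ?_
      refine List.mem_map.2 ⟨(dn.1, dn.2), Finset.mem_toList.2 ?_, rfl⟩
      exact Finset.mem_product.2 ⟨Finset.mem_powerset.2 hd, Finset.mem_range.2 (by omega)⟩
  obtain ⟨f, hf0, hfInv, hfRel⟩ := depChoice Inv Rel (C0, ∅) ⟨hC0, subset_rfl, by simp⟩ step
  choose k hk1 hk2 hk3 using fun m => (hfRel m).2.1
  have hD0 : (f 0).1 = C0 := by rw [hf0]
  have hDmono : ∀ m, (f (m + 1)).1 ⊆ (f m).1 := fun m => (hfRel m).1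
  have hDanti : ∀ i j, i ≤ j → (f j).1 ⊆ (f i).1 := by
    intro i j hij
    induction j with
    | zero => simp_all
    | succ j ih =>
      rcases Nat.lt_or_ge i (j + 1) with h | h
      · exact (hDmono j).trans (ih (by omega))
      · have : i = j + 1 := by omega
        subst this; exact subset_rfl
  have hKmono : ∀ i j, i ≤ j → (f i).2 ⊆ (f j).2 := by
    intro i j hij
    induction j with
    | zero => simp_all
    | succ j ih =>
      rcases Nat.lt_or_ge i (j + 1) with h | h
      · refine (ih (by omega)).trans ?_
        rw [hk3 j]; exact Finset.subset_insert _ _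
      · have : i = j + 1 := by omega
        subst this; exact subset_rfl
  have hkK : ∀ i m, i < m → k i ∈ (f m).2 := by
    intro i m him
    have : k i ∈ (f (i + 1)).2 := by rw [hk3 i]; exact Finset.mem_insert_self _ _
    exact hKmono (i + 1) m him this
  have hkinj : Function.Injective k := by
    intro i j hij
    by_contra hne
    rcases Nat.lt_or_ge i j with h | h
    · exact hk2 j (hij ▸ hkK i j h)
    · exact hk2 i (hij ▸ hkK j i (by omega))
  have hkD : ∀ n i, n ≤ i → k i ∈ (f (n + 1)).1 :=
    fun n i hni => hDanti (n + 1) (i + 1) (by omega) (hk1 i)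
  set Cstar : Set ℕ := Set.range k with hCstar
  have hCstarInf : Cstar.Infinite := Set.infinite_range_of_injective hkinj
  have hCstarC0 : Cstar ⊆ C0 := by
    rintro - ⟨i, rfl⟩
    exact (hfInv (i + 1)).2.1 (hk1 i)
  have hEllsub : EllSet c Cstar ⊆ EllSet c C0 :=
    cle_ell (q := (c, Cstar)) (p := (c, C0)) ⟨subset_rfl, subset_union_left, hCstarC0⟩
  -- for every point `x` of `[c, Cstar]` and every `n`, a decided condition containing `x`
  have key : ∀ x ∈ EllSet c Cstar, ∀ n : ℕ, ∃ (d : Finset ℕ) (E : Set ℕ),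
      x ∈ EllSet (c ∪ d) E ∧ cle (c ∪ d, E) (c, C0) ∧ E.Infinite ∧
        Decided 𝓕 (c ∪ d) E n := by
    intro x hx n
    obtain ⟨hxInf, hcx, hxsub⟩ := hx
    set d : Finset ℕ := (f n).2.filter (· ∈ x) with hd
    obtain ⟨E, hE1, hE2, hE3, hE4⟩ :=
      (hfRel n).2.2 (d, n) (Finset.filter_subset _ _) le_rfl
    refine ⟨d, E, ⟨hxInf, ?_, ?_⟩, ⟨Finset.subset_union_left, ?_, hE2.trans (hfInv n).2.1⟩,
      hE3, hE4⟩
    · rw [Finset.coe_union]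
      refine union_subset hcx ?_
      intro m hm
      exact (Finset.mem_filter.1 hm).2
    · intro m hm
      rcases hxsub hm with hmc | hmC
      · left; rw [Finset.coe_union]; exact Or.inl hmc
      · obtain ⟨i, rfl⟩ := hmC
        rcases Nat.lt_or_ge i n with h | h
        · left; rw [Finset.coe_union]
          exact Or.inr (Finset.mem_filter.2 ⟨hkK i n h, hm⟩)
        · right; exact hE1 (hkD n i h)
    · rw [Finset.coe_union]
      exact union_subset subset_union_left
        (fun m hm => Or.inr ((hfInv n).2.2 ((Finset.filter_subset _ _) hm)))
  -- sign consistency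
  have signs : ∀ x ∈ EllSet c Cstar, ∀ y ∈ EllSet c Cstar, ∀ n : ℕ,
      n ∈ xpt (pc 𝓕 x) → n ∈ xpt (pc 𝓕 y) := by
    intro x hx y hy n hn
    obtain ⟨dx, Ex, hxmem, hxcle, hxInf, hxdec⟩ := key x hx n
    obtain ⟨dy, Ey, hymem, hycle, hyInf, hydec⟩ := key y hy n
    have hxM : x ∈ M := hsub (hEllsub hx)
    have hyM : y ∈ M := hsub (hEllsub hy)
    have hpcx := pc_mem hcover hxM
    have hpcy := pc_mem hcover hyM
    rcases hydec with hpos | hneg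
    · -- positive for y: conclude
      obtain ⟨H, hH, hyH⟩ := hpos hymem
      rw [piece_unique hdisj hpcy.1 hH.1 hpcy.2 hyH]
      exact hH.2
    · -- y negative; show x is also negative, contradiction with hn
      rcases hxdec with hposx | hnegx
      · -- x positive, y negative: disjoint traces, contradiction with hbad
        exfalso
        refine hbad (c ∪ dx, Ex) (c ∪ dy, Ey) hxcle hycle hxInf hyInf ?_
        refine Set.disjoint_left.2 fun F hFx hFy => ?_
        exact tr_neg hneg F hFy (tr_pos hdisj hposx hFx)
      · -- x negative too: contradicts hn
        exfalso
        have hFn : pc 𝓕 x ∈ Hfam 𝓕 n := ⟨hpcx.1, hn⟩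
        have : x ∈ EllSet (c ∪ dx) Ex ∩ ⋃₀ (Hfam 𝓕 n) :=
          ⟨hxmem, pc 𝓕 x, hFn, hpcx.2⟩
        rw [hnegx] at this
        exact this
  -- all points lie in the same piece
  have hx0 : (↑c ∪ Cstar) ∈ EllSet c Cstar := self_mem_ellSet hCstarInf
  have hsame : ∀ x ∈ EllSet c Cstar, pc 𝓕 x = pc 𝓕 (↑c ∪ Cstar) := by
    intro x hx
    have hxM : x ∈ M := hsub (hEllsub hx)
    have hx0M : (↑c ∪ Cstar) ∈ M := hsub (hEllsub hx0)
    have hpcx := pc_mem hcover hxM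
    have hpcx0 := pc_mem hcover hx0M
    have hxpt : xpt (pc 𝓕 x) = xpt (pc 𝓕 (↑c ∪ Cstar)) :=
      Set.ext fun n => ⟨signs x hx _ hx0 n, signs _ hx0 x hx n⟩
    have h1 : xpt (pc 𝓕 x) ∈ pc 𝓕 x := xpt_mem ⟨x, hpcx.2⟩
    have h2 : xpt (pc 𝓕 x) ∈ pc 𝓕 (↑c ∪ Cstar) := by
      rw [hxpt]; exact xpt_mem ⟨_, hpcx0.2⟩
    exact piece_unique hdisj hpcx.1 hpcx0.1 h1 h2
  have hsubF : EllSet c Cstar ⊆ pc 𝓕 (↑c ∪ Cstar) := by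
    intro x hx
    rw [← hsame x hx]
    exact (pc_mem hcover (hsub (hEllsub hx))).2
  exact not_ellSet_subset_piece hnull
    (pc_mem hcover (hsub (hEllsub hx0))).1 hCstarInf hsubF

lemma tr_mono {q' q : Finset ℕ × Set ℕ} (h : cle q' q) : Tr 𝓕 q' ⊆ Tr 𝓕 q :=
  fun F hF => ⟨hF.1, hF.2.mono (inter_subset_inter subset_rfl (cle_ell h))⟩

section Tree

variable (hcover : ⋃₀ 𝓕 = M)
  (hdisj : ∀ F ∈ 𝓕, ∀ G ∈ 𝓕, F ≠ G → Disjoint F G)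
  (hnull : ∀ F ∈ 𝓕, RamseyNull F)
  (hadd : ∀ 𝓕' ⊆ 𝓕, CRSet (⋃₀ 𝓕'))
  (a : Finset ℕ) (B₀ : Set ℕ) (hB₀ : B₀.Infinite) (hB₀M : EllSet a B₀ ⊆ M)

/-- invariant of the tree nodes -/
def TreeInv (q : Finset ℕ × Set ℕ) : Prop := q.2.Infinite ∧ cle q (a, B₀)

/-- branch initial segments (most recent bit first) -/
def rl (σ : ℕ → Bool) : ℕ → List Bool :=
  fun n => Nat.rec [] (fun m ih => σ m :: ih) n

lemma rl_congr {σ τ : ℕ → Bool} (n : ℕ) (h : ∀ m < n, σ m = τ m) : rl σ n = rl τ n := by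
  induction n with
  | zero => rfl
  | succ n ih =>
    show σ n :: rl σ n = τ n :: rl τ n
    rw [h n (by omega), ih fun m hm => h m (by omega)]

include hcover hdisj hnull hadd hB₀ hB₀M

lemma treeStep {q : Finset ℕ × Set ℕ} (hq : TreeInv a B₀ q) :
    ∃ q₀ q₁ : Finset ℕ × Set ℕ,
      ((TreeInv a B₀ q₀ ∧ cle q₀ q ∧ q.1 ⊂ q₀.1) ∧
       (TreeInv a B₀ q₁ ∧ cle q₁ q ∧ q.1 ⊂ q₁.1)) ∧
      Disjoint (Tr 𝓕 q₀) (Tr 𝓕 q₁) := by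
  have hsub : EllSet q.1 q.2 ⊆ M := (cle_ell hq.2).trans hB₀M
  obtain ⟨q₀', q₁', h0, h1, hi0, hi1, hdisjT⟩ :=
    split hcover hdisj hnull hadd q.1 q.2 hq.1 hsub
  obtain ⟨q₀, hc0, hs0, hI0⟩ := cle_extend hi0
  obtain ⟨q₁, hc1, hs1, hI1⟩ := cle_extend hi1
  have h0' : cle q₀ q := cle_trans hc0 h0
  have h1' : cle q₁ q := cle_trans hc1 h1
  refine ⟨q₀, q₁,
    ⟨⟨⟨hI0, cle_trans h0' hq.2⟩, h0', lt_of_le_of_lt h0.1 hs0⟩,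
     ⟨⟨hI1, cle_trans h1' hq.2⟩, h1', lt_of_le_of_lt h1.1 hs1⟩⟩,
    Disjoint.mono (tr_mono hc0) (tr_mono hc1) hdisjT⟩

/-- the two children of a node -/
noncomputable def chPair (p : {q : Finset ℕ × Set ℕ // TreeInv a B₀ q}) :
    {q : Finset ℕ × Set ℕ // TreeInv a B₀ q} × {q : Finset ℕ × Set ℕ // TreeInv a B₀ q} :=
  let h := treeStep hcover hdisj hnull hadd a B₀ hB₀ hB₀M p.2
  (⟨h.choose, h.choose_spec.choose_spec.1.1.1⟩,
   ⟨h.choose_spec.choose, h.choose_spec.choose_spec.1.2.1⟩)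

lemma chPair_spec (p : {q : Finset ℕ × Set ℕ // TreeInv a B₀ q}) :
    (cle (chPair hcover hdisj hnull hadd a B₀ hB₀ hB₀M p).1.1 p.1 ∧
      p.1.1 ⊂ (chPair hcover hdisj hnull hadd a B₀ hB₀ hB₀M p).1.1.1) ∧
    (cle (chPair hcover hdisj hnull hadd a B₀ hB₀ hB₀M p).2.1 p.1 ∧
      p.1.1 ⊂ (chPair hcover hdisj hnull hadd a B₀ hB₀ hB₀M p).2.1.1) ∧
    Disjoint (Tr 𝓕 (chPair hcover hdisj hnull hadd a B₀ hB₀ hB₀M p).1.1)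
      (Tr 𝓕 (chPair hcover hdisj hnull hadd a B₀ hB₀ hB₀M p).2.1) := by
  have h := treeStep hcover hdisj hnull hadd a B₀ hB₀ hB₀M p.2
  exact ⟨⟨h.choose_spec.choose_spec.1.1.2.1, h.choose_spec.choose_spec.1.1.2.2⟩,
    ⟨h.choose_spec.choose_spec.1.2.2.1, h.choose_spec.choose_spec.1.2.2.2⟩,
    h.choose_spec.choose_spec.2⟩

/-- the tree of conditions; lists are read with the most recent bit first -/
noncomputable def nodes (s : List Bool) : {q : Finset ℕ × Set ℕ // TreeInv a B₀ q} :=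
  List.rec ⟨(a, B₀), hB₀, cle_refl _⟩
    (fun b _ ih => cond b (chPair hcover hdisj hnull hadd a B₀ hB₀ hB₀M ih).2
      (chPair hcover hdisj hnull hadd a B₀ hB₀ hB₀M ih).1) s

lemma nodes_nil : nodes hcover hdisj hnull hadd a B₀ hB₀ hB₀M [] =
    ⟨(a, B₀), hB₀, cle_refl _⟩ := rfl

lemma nodes_cle (b : Bool) (s : List Bool) :
    cle (nodes hcover hdisj hnull hadd a B₀ hB₀ hB₀M (b :: s)).1
      (nodes hcover hdisj hnull hadd a B₀ hB₀ hB₀M s).1 := by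
  cases b
  · exact (chPair_spec hcover hdisj hnull hadd a B₀ hB₀ hB₀M _).1.1
  · exact (chPair_spec hcover hdisj hnull hadd a B₀ hB₀ hB₀M _).2.1.1

lemma nodes_grow (b : Bool) (s : List Bool) :
    (nodes hcover hdisj hnull hadd a B₀ hB₀ hB₀M s).1.1 ⊂
      (nodes hcover hdisj hnull hadd a B₀ hB₀ hB₀M (b :: s)).1.1 := by
  cases b
  · exact (chPair_spec hcover hdisj hnull hadd a B₀ hB₀ hB₀M _).1.2
  · exact (chPair_spec hcover hdisj hnull hadd a B₀ hB₀ hB₀M _).2.1.2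

lemma nodes_disj (s : List Bool) :
    Disjoint (Tr 𝓕 (nodes hcover hdisj hnull hadd a B₀ hB₀ hB₀M (false :: s)).1)
      (Tr 𝓕 (nodes hcover hdisj hnull hadd a B₀ hB₀ hB₀M (true :: s)).1) :=
  (chPair_spec hcover hdisj hnull hadd a B₀ hB₀ hB₀M _).2.2


lemma nodes_chain (σ : ℕ → Bool) : ∀ n m, n ≤ m →
    cle (nodes hcover hdisj hnull hadd a B₀ hB₀ hB₀M (rl σ m)).1 (nodes hcover hdisj hnull hadd a B₀ hB₀ hB₀M (rl σ n)).1 := by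
  intro n m hnm
  induction m with
  | zero =>
    have : n = 0 := by omega
    subst this; exact cle_refl _
  | succ m ih =>
    rcases Nat.lt_or_ge n (m + 1) with h | h
    · exact cle_trans (nodes_cle hcover hdisj hnull hadd a B₀ hB₀ hB₀M (σ m) (rl σ m)) (ih (by omega))
    · have : n = m + 1 := by omega
      subst this; exact cle_refl _

lemma nodes_card (σ : ℕ → Bool) : ∀ n, a.card + n ≤ (nodes hcover hdisj hnull hadd a B₀ hB₀ hB₀M (rl σ n)).1.1.card := by
  intro n
  induction n with
  | zero => exact le_rfl
  | succ n ih =>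
    have := Finset.card_lt_card (nodes_grow hcover hdisj hnull hadd a B₀ hB₀ hB₀M (σ n) (rl σ n))
    have h2 : (nodes hcover hdisj hnull hadd a B₀ hB₀ hB₀M (σ n :: rl σ n)).1.1.card =
        (nodes hcover hdisj hnull hadd a B₀ hB₀ hB₀M (rl σ (n + 1))).1.1.card := rfl
    omega

/-- the limit point of a branch -/
noncomputable def xbr (σ : ℕ → Bool) : Set ℕ :=
  ⋃ n, ((nodes hcover hdisj hnull hadd a B₀ hB₀ hB₀M (rl σ n)).1.1 : Set ℕ)

lemma xbr_infinite (σ : ℕ → Bool) : (xbr hcover hdisj hnull hadd a B₀ hB₀ hB₀M σ).Infinite := by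
  intro hfin
  have hsub : (nodes hcover hdisj hnull hadd a B₀ hB₀ hB₀M (rl σ (hfin.toFinset.card + 1))).1.1 ⊆ hfin.toFinset := by
    intro m hm
    exact hfin.mem_toFinset.2 (Set.mem_iUnion.2 ⟨hfin.toFinset.card + 1, hm⟩)
  have h1 := Finset.card_le_card hsub
  have h2 := nodes_card hcover hdisj hnull hadd a B₀ hB₀ hB₀M σ (hfin.toFinset.card + 1)
  omega

lemma xbr_mem_node (σ : ℕ → Bool) (n : ℕ) :
    xbr hcover hdisj hnull hadd a B₀ hB₀ hB₀M σ ∈ EllSet (nodes hcover hdisj hnull hadd a B₀ hB₀ hB₀M (rl σ n)).1.1 (nodes hcover hdisj hnull hadd a B₀ hB₀ hB₀M (rl σ n)).1.2 := by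
  refine ⟨xbr_infinite hcover hdisj hnull hadd a B₀ hB₀ hB₀M σ, Set.subset_iUnion (fun j => ((nodes hcover hdisj hnull hadd a B₀ hB₀ hB₀M (rl σ j)).1.1 : Set ℕ)) n, ?_⟩
  intro m hm
  obtain ⟨j, hj⟩ := Set.mem_iUnion.1 hm
  rcases le_total j n with h | h
  · exact Or.inl ((nodes_chain hcover hdisj hnull hadd a B₀ hB₀ hB₀M σ j n h).1 hj)
  · exact (nodes_chain hcover hdisj hnull hadd a B₀ hB₀ hB₀M σ n j h).2.1 hj

/-- the final infinite reservoir -/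
noncomputable def bigB : Set ℕ :=
  (⋃ s : List Bool, ((nodes hcover hdisj hnull hadd a B₀ hB₀ hB₀M s).1.1 : Set ℕ)) \ ↑a

lemma bigB_subset : bigB hcover hdisj hnull hadd a B₀ hB₀ hB₀M ⊆ B₀ := by
  rintro m ⟨hm, hma⟩
  obtain ⟨s, hs⟩ := Set.mem_iUnion.1 hm
  rcases (nodes hcover hdisj hnull hadd a B₀ hB₀ hB₀M s).2.2.2.1 hs with h | h
  · exact absurd h hma
  · exact h

lemma xbr_diff_subset (σ : ℕ → Bool) : xbr hcover hdisj hnull hadd a B₀ hB₀ hB₀M σ \ ↑a ⊆ bigB hcover hdisj hnull hadd a B₀ hB₀ hB₀M := by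
  rintro m ⟨hm, hma⟩
  obtain ⟨n, hn⟩ := Set.mem_iUnion.1 hm
  exact ⟨Set.mem_iUnion.2 ⟨rl σ n, hn⟩, hma⟩

lemma bigB_infinite : (bigB hcover hdisj hnull hadd a B₀ hB₀ hB₀M).Infinite :=
  (((xbr_infinite hcover hdisj hnull hadd a B₀ hB₀ hB₀M (fun _ => false)).diff a.finite_toSet).mono
    (xbr_diff_subset hcover hdisj hnull hadd a B₀ hB₀ hB₀M _))

lemma xbr_mem_big (σ : ℕ → Bool) : xbr hcover hdisj hnull hadd a B₀ hB₀ hB₀M σ ∈ EllSet a (bigB hcover hdisj hnull hadd a B₀ hB₀ hB₀M) := by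
  refine ⟨xbr_infinite hcover hdisj hnull hadd a B₀ hB₀ hB₀M σ, ?_, ?_⟩
  · have : (↑a : Set ℕ) = ((nodes hcover hdisj hnull hadd a B₀ hB₀ hB₀M (rl σ 0)).1.1 : Set ℕ) := rfl
    rw [this]
    exact Set.subset_iUnion (fun j => ((nodes hcover hdisj hnull hadd a B₀ hB₀ hB₀M (rl σ j)).1.1 : Set ℕ)) 0
  · intro m hm
    by_cases hma : m ∈ (↑a : Set ℕ)
    · exact Or.inl hma
    · exact Or.inr (xbr_diff_subset hcover hdisj hnull hadd a B₀ hB₀ hB₀M σ ⟨hm, hma⟩)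

lemma xbr_mem_M (σ : ℕ → Bool) : xbr hcover hdisj hnull hadd a B₀ hB₀ hB₀M σ ∈ M :=
  hB₀M (xbr_mem_node hcover hdisj hnull hadd a B₀ hB₀ hB₀M σ 0)

open Cardinal in
lemma trace_card :
    #{S : Set (Set ℕ) | (∃ F ∈ 𝓕, S = F ∩ EllSet a (bigB hcover hdisj hnull hadd a B₀ hB₀ hB₀M)) ∧ S.Nonempty} =
      continuum := by
  classical
  set E := EllSet a (bigB hcover hdisj hnull hadd a B₀ hB₀ hB₀M) with hE
  set T := {S : Set (Set ℕ) | (∃ F ∈ 𝓕, S = F ∩ E) ∧ S.Nonempty} with hT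
  have hmkBool : #(ℕ → Bool) = continuum := by
    rw [← Cardinal.power_def, Cardinal.mk_bool, Cardinal.mk_nat, Cardinal.two_power_aleph0]
  refine le_antisymm ?_ ?_
  · -- at most continuum: choose a point in each trace
    have finj : Function.Injective (fun S : T => S.2.2.some) := by
      intro S S' heq
      obtain ⟨F, hF, hSF⟩ := S.2.1
      obtain ⟨G, hG, hSG⟩ := S'.2.1
      have hx1 : S.2.2.some ∈ S.1 := S.2.2.some_mem
      have hx2 : S.2.2.some ∈ S'.1 := by
        have := S'.2.2.some_mem
        simp only at heq
        rw [← heq] at this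
        exact this
      have hxF : S.2.2.some ∈ F ∩ E := by rw [← hSF]; exact hx1
      have hxG : S.2.2.some ∈ G ∩ E := by rw [← hSG]; exact hx2
      have hxF := hxF.1
      have hxG := hxG.1
      have : F = G := piece_unique hdisj hF hG hxF hxG
      exact Subtype.ext (by rw [hSF, hSG, this])
    calc #T ≤ #(Set ℕ) := Cardinal.mk_le_of_injective finj
    _ = continuum := by rw [Cardinal.mk_set, Cardinal.mk_nat, Cardinal.two_power_aleph0]
  · -- at least continuum: one trace for each branch
    have hg : ∀ σ : ℕ → Bool, pc 𝓕 (xbr hcover hdisj hnull hadd a B₀ hB₀ hB₀M σ) ∩ E ∈ T := by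
      intro σ
      have hpc := pc_mem hcover (xbr_mem_M hcover hdisj hnull hadd a B₀ hB₀ hB₀M σ)
      exact ⟨⟨pc 𝓕 (xbr hcover hdisj hnull hadd a B₀ hB₀ hB₀M σ), hpc.1, rfl⟩, ⟨xbr hcover hdisj hnull hadd a B₀ hB₀ hB₀M σ, hpc.2, xbr_mem_big hcover hdisj hnull hadd a B₀ hB₀ hB₀M σ⟩⟩
    have ginj : Function.Injective (fun σ : ℕ → Bool => (⟨_, hg σ⟩ : T)) := by
      intro σ τ heq
      by_contra hne
      have hex : ∃ n, σ n ≠ τ n := by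
        by_contra h'
        push_neg at h'
        exact hne (funext h')
      set n₀ := Nat.find hex with hn₀
      have hagree : ∀ m < n₀, σ m = τ m := by
        intro m hm
        by_contra h'
        exact Nat.find_min hex hm h'
      have hrl : rl σ n₀ = rl τ n₀ := rl_congr n₀ hagree
      have hpcσ := pc_mem hcover (xbr_mem_M hcover hdisj hnull hadd a B₀ hB₀ hB₀M σ)
      have hpcτ := pc_mem hcover (xbr_mem_M hcover hdisj hnull hadd a B₀ hB₀ hB₀M τ)
      have hFσ : pc 𝓕 (xbr hcover hdisj hnull hadd a B₀ hB₀ hB₀M σ) ∈ Tr 𝓕 (nodes hcover hdisj hnull hadd a B₀ hB₀ hB₀M (σ n₀ :: rl σ n₀)).1 :=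
        ⟨hpcσ.1, xbr hcover hdisj hnull hadd a B₀ hB₀ hB₀M σ, hpcσ.2, xbr_mem_node hcover hdisj hnull hadd a B₀ hB₀ hB₀M σ (n₀ + 1)⟩
      have hFτ : pc 𝓕 (xbr hcover hdisj hnull hadd a B₀ hB₀ hB₀M τ) ∈ Tr 𝓕 (nodes hcover hdisj hnull hadd a B₀ hB₀ hB₀M (τ n₀ :: rl σ n₀)).1 := by
        rw [hrl]
        exact ⟨hpcτ.1, xbr hcover hdisj hnull hadd a B₀ hB₀ hB₀M τ, hpcτ.2, xbr_mem_node hcover hdisj hnull hadd a B₀ hB₀ hB₀M τ (n₀ + 1)⟩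
      have hneq : pc 𝓕 (xbr hcover hdisj hnull hadd a B₀ hB₀ hB₀M σ) ≠ pc 𝓕 (xbr hcover hdisj hnull hadd a B₀ hB₀ hB₀M τ) := by
        have hbits : σ n₀ ≠ τ n₀ := Nat.find_spec hex
        intro hpceq
        rcases Bool.eq_false_or_eq_true (σ n₀) with h1 | h1 <;>
          rcases Bool.eq_false_or_eq_true (τ n₀) with h2 | h2
        · exact hbits (h1.trans h2.symm)
        · rw [h1] at hFσ; rw [h2] at hFτ
          refine (nodes_disj hcover hdisj hnull hadd a B₀ hB₀ hB₀M (rl σ n₀)).le_bot ⟨?_, hFσ⟩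
          rw [hpceq]; exact hFτ
        · rw [h1] at hFσ; rw [h2] at hFτ
          refine (nodes_disj hcover hdisj hnull hadd a B₀ hB₀ hB₀M (rl σ n₀)).le_bot ⟨hFσ, ?_⟩
          rw [hpceq]; exact hFτ
        · exact hbits (h1.trans h2.symm)
      have hseteq : pc 𝓕 (xbr hcover hdisj hnull hadd a B₀ hB₀ hB₀M σ) ∩ E = pc 𝓕 (xbr hcover hdisj hnull hadd a B₀ hB₀ hB₀M τ) ∩ E := congrArg Subtype.val heq
      have hx : xbr hcover hdisj hnull hadd a B₀ hB₀ hB₀M σ ∈ pc 𝓕 (xbr hcover hdisj hnull hadd a B₀ hB₀ hB₀M τ) := by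
        have : xbr hcover hdisj hnull hadd a B₀ hB₀ hB₀M σ ∈ pc 𝓕 (xbr hcover hdisj hnull hadd a B₀ hB₀ hB₀M σ) ∩ E := ⟨hpcσ.2, xbr_mem_big hcover hdisj hnull hadd a B₀ hB₀ hB₀M σ⟩
        rw [hseteq] at this
        exact this.1
      exact hneq (piece_unique hdisj hpcσ.1 hpcτ.1 hpcσ.2 hx)
    calc continuum = #(ℕ → Bool) := hmkBool.symm
    _ ≤ #T := Cardinal.mk_le_of_injective ginj

end Tree

end Part

end KPE

open Cardinal in
/-- If `M` is Ellentuck open dense, not Ramsey null, and `𝓕` is a Kuratowski partition of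
`M` into Ramsey null sets, then every `[a,A]` contains some `[b,B]` on which continuum
many members of `𝓕` leave a nonempty trace. -/
theorem kuratowski_partition_trace_continuum_ellentuck (M : Set (Set ℕ))
    (hopen : EllOpen M) (hdense : EllDense M) (hM : ¬ RamseyNull M)
    (𝓕 : Set (Set (Set ℕ)))
    (hcover : ⋃₀ 𝓕 = M)
    (hdisj : ∀ F ∈ 𝓕, ∀ G ∈ 𝓕, F ≠ G → Disjoint F G)
    (hnull : ∀ F ∈ 𝓕, RamseyNull F)
    (hadd : ∀ 𝓕' ⊆ 𝓕, CRSet (⋃₀ 𝓕')) :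
    ∀ (a : Finset ℕ) (A : Set ℕ), A.Infinite →
      ∃ (b : Finset ℕ) (B : Set ℕ), B.Infinite ∧ EllSet b B ⊆ EllSet a A ∧
        #{S : Set (Set ℕ) | (∃ F ∈ 𝓕, S = F ∩ EllSet b B) ∧ S.Nonempty} = continuum := by
  intro a A hA
  have hCR : CRSet M := by rw [← hcover]; exact hadd 𝓕 subset_rfl
  obtain ⟨B₀, hB₀A, hB₀, hcase⟩ := hCR a A hA
  have hsub : EllSet a B₀ ⊆ M := by
    rcases hcase with h | h
    · exact h
    · exfalso
      obtain ⟨x, hx⟩ := hdense a B₀ hB₀ (KPE.ellSet_nonempty hB₀)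
      rw [h] at hx
      exact hx
  refine ⟨a, KPE.bigB hcover hdisj hnull hadd a B₀ hB₀ hsub,
    KPE.bigB_infinite hcover hdisj hnull hadd a B₀ hB₀ hsub, ?_,
    KPE.trace_card hcover hdisj hnull hadd a B₀ hB₀ hsub⟩
  exact KPE.cle_ell (q := (a, KPE.bigB hcover hdisj hnull hadd a B₀ hB₀ hsub)) (p := (a, A))
    ⟨subset_rfl, subset_union_left,
      (KPE.bigB_subset hcover hdisj hnull hadd a B₀ hB₀ hsub).trans hB₀A⟩
end
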